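/- arXiv:2302.02265 — 10 statements merged into one kernel-verified Lean document; each statement's English description precedes it below -/
import Mathlib

section
/- Let β ≥ 0 and let v_β be the unique solution of IVP(β). If y > 0 is a local maximizer of v_β, then v_β(y) ≤ h/η. -/
open Set Filter Topology

noncomputable section

/-- `IsIVP σ η αh h r a β v v'` says that `v : [0,∞) → ℝ` is a C¹ solution
(with derivative `v'`) of the initial value problem IVP(β):
`(σ²/2)·v′(y) = β + (αh/4)·v(y)² + η·y·(v(y) − h/η) − a·v(y)` for `y ≥ 0`, `v(0) = −r`. -/
def IsIVP (σ η αh h r a β : ℝ) (v v' : ℝ → ℝ) : Prop :=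
  ContinuousOn v' (Set.Ici 0) ∧
  (∀ y ∈ Set.Ici (0:ℝ), HasDerivWithinAt v (v' y) (Set.Ici 0) y) ∧
  (∀ y ∈ Set.Ici (0:ℝ),
    σ ^ 2 / 2 * v' y = β + αh / 4 * (v y) ^ 2 + η * y * (v y - h / η) - a * v y) ∧
  v 0 = -r

/-- If `y > 0` is a local maximizer of the solution `v_β` of IVP(β), then `v_β(y) ≤ h/η`. -/
theorem stmt_3 (σ η αh h r a : ℝ) (hσ : 0 < σ) (hη : 0 < η) (hαh : 0 < αh)
    (hh : 0 < h) (hr : 0 < r) (β : ℝ) (hβ : 0 ≤ β)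
    (v v' : ℝ → ℝ) (hIVP : IsIVP σ η αh h r a β v v')
    (y : ℝ) (hy : 0 < y) (hmax : IsLocalMax v y) :
    v y ≤ h / η := by
  by_contra hcon
  push_neg at hcon
  obtain ⟨hcont, hderiv, heq, hv0⟩ := hIVP
  have hσ2 : (0:ℝ) < σ ^ 2 := by positivity
  -- HasDerivAt at points > 0
  have hDA : ∀ x : ℝ, 0 < x → HasDerivAt v (v' x) x := fun x hx =>
    (hderiv x (le_of_lt hx)).hasDerivAt (Ici_mem_nhds hx)
  have hv'y : v' y = 0 := hmax.hasDerivAt_eq_zero (hDA y hy)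
  -- the function giving v' on Ici 0
  set g : ℝ → ℝ := fun x =>
    (β + αh / 4 * (v x) ^ 2 + η * x * (v x - h / η) - a * v x) * (2 / σ ^ 2) with hg
  have hveq : ∀ x ∈ Ici (0:ℝ), v' x = g x := by
    intro x hx
    have := heq x hx
    simp only [hg]
    rw [← this]
    field_simp
  set c : ℝ := η * (v y - h / η) * (2 / σ ^ 2) with hc
  have hcpos : 0 < c := by
    apply mul_pos (mul_pos hη (by linarith)) (by positivity)
  have hvy : HasDerivAt v 0 y := hv'y ▸ hDA y hy
  have hgd : HasDerivAt g c y := by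
    have h1 : HasDerivAt (fun x => β + αh / 4 * (v x) ^ 2 + η * x * (v x - h / η) - a * v x)
        (η * (v y - h / η)) y := by
      have hsq : HasDerivAt (fun x => αh / 4 * (v x) ^ 2)
          (αh / 4 * ((2 : ℕ) * v y ^ 1 * 0)) y := (hvy.pow 2).const_mul _
      have hlin : HasDerivAt (fun x : ℝ => η * x) η y := by
        simpa using (hasDerivAt_id y).const_mul η
      have hmul : HasDerivAt (fun x => η * x * (v x - h / η))
          (η * (v y - h / η) + η * y * 0) y :=
        hlin.mul (hvy.sub_const _)
      have hav : HasDerivAt (fun x => a * v x) (a * 0) y := hvy.const_mul a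
      have := ((hsq.const_add β).add hmul).sub hav
      exact this.congr_deriv (by ring)
    have := h1.mul_const (2 / σ ^ 2)
    simpa [hc, hg] using this
  have hwd : HasDerivAt v' c y := by
    apply hgd.congr_of_eventuallyEq
    filter_upwards [Ici_mem_nhds hy] with x hx using hveq x hx
  -- slope of v' tends to c > 0
  have hslope : Tendsto (slope v' y) (𝓝[≠] y) (𝓝 c) :=
    hasDerivAt_iff_tendsto_slope.mp hwd
  have hEv : ∀ᶠ x in 𝓝[<] y, 0 < slope v' y x := by
    have h1 : ∀ᶠ x in 𝓝[≠] y, 0 < slope v' y x :=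
      hslope.eventually (eventually_gt_nhds hcpos)
    exact h1.filter_mono (nhdsWithin_mono y (fun x hx => ne_of_lt hx))
  have hEv2 : ∀ᶠ x in 𝓝[<] y, v x ≤ v y := hmax.filter_mono nhdsWithin_le_nhds
  have hEv3 : ∀ᶠ x in 𝓝[<] y, 0 < x :=
    eventually_nhdsWithin_of_eventually_nhds (eventually_gt_nhds hy)
  have hEvAll : ∀ᶠ x in 𝓝[<] y, v' x < 0 ∧ v x ≤ v y ∧ 0 < x := by
    filter_upwards [hEv, hEv2, hEv3, self_mem_nhdsWithin] with x h1 h2 h3 (h4 : x < y)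
    refine ⟨?_, h2, h3⟩
    have hxy : x - y < 0 := by linarith
    have : slope v' y x = v' x / (x - y) := by
      simp [slope_def_field, hv'y]
    rw [this] at h1
    rcases div_pos_iff.mp h1 with ⟨ha, hb⟩ | ⟨ha, hb⟩ <;> linarith
  obtain ⟨l, hl, hsub⟩ := mem_nhdsLT_iff_exists_Ioo_subset.mp hEvAll
  simp only [mem_Iio] at hl
  set x0 : ℝ := (max l 0 + y) / 2 with hx0
  have hx0l : l < x0 := by
    have := le_max_left l 0
    simp only [hx0]
    cases' max_cases l 0 with hm hm <;> rw [hm.1] <;> nlinarith [le_max_right l 0]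
  have hx0pos : 0 < x0 := by
    have := le_max_right l 0
    simp only [hx0]; nlinarith
  have hx0y : x0 < y := by
    have h1 : max l 0 < y := max_lt hl hy
    simp only [hx0]; nlinarith
  have hx0 : x0 ∈ Ioo l y := ⟨hx0l, hx0y⟩
  -- MVT on [x0, y]
  have hsubIci : Icc x0 y ⊆ Ici (0:ℝ) := fun z hz => le_trans hx0pos.le hz.1
  have hcontv : ContinuousOn v (Icc x0 y) := fun x hx =>
    ((hderiv x (hsubIci hx)).continuousWithinAt).mono hsubIci
  have hdiff : ∀ x ∈ Ioo x0 y, HasDerivAt v (v' x) x := fun x hx =>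
    hDA x (lt_trans hx0pos hx.1)
  obtain ⟨c', hc', hslope'⟩ := exists_hasDerivAt_eq_slope v v' hx0y hcontv hdiff
  have hc'mem : c' ∈ Ioo l y := ⟨lt_trans hx0l hc'.1, hc'.2⟩
  have hneg := (hsub hc'mem).1
  have hle := (hsub hx0).2.1
  rw [hslope'] at hneg
  have hyx : 0 < y - x0 := by linarith
  rcases div_neg_iff.mp hneg with ⟨ha, hb⟩ | ⟨ha, hb⟩ <;> linarith
end
end

section
/- Suppose the parameters are in Case 1 or Case 2. Then the solution v_β of IVP(β) increases to its supremum; precisely, there do not exist points 0 ≤ x₁ < x₂ < x₃ such that v_β(x₁) = v_β(x₂) = v_β(x₃) while v_β′(x₁) > 0, v_β′(x₂) < 0, and v_β′(x₃) > 0. Moreover v_β′(0) > 0. -/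
open Set Filter

noncomputable section

/-- In Case 1 or Case 2, the solution `v_β` of IVP(β) increases to its supremum:
`v_β′(0) > 0` and there are no points `0 ≤ x₁ < x₂ < x₃` with equal values of `v_β`
and derivative signs `+, −, +`. -/
theorem stmt_4 (σ η αh h r a β : ℝ) (hσ : 0 < σ) (hη : 0 < η) (hαh : 0 < αh)
    (hh : 0 < h) (hr : 0 < r)
    (hcase : (-(αh / 4) * r < a ∧ 0 ≤ β) ∨
      (a ≤ -(αh / 4) * r ∧ -a * r - αh / 4 * r ^ 2 < β))
    (v v' : ℝ → ℝ) (hIVP : IsIVP σ η αh h r a β v v') :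
    0 < v' 0 ∧
    ¬ ∃ x₁ x₂ x₃ : ℝ, 0 ≤ x₁ ∧ x₁ < x₂ ∧ x₂ < x₃ ∧
      v x₁ = v x₂ ∧ v x₂ = v x₃ ∧ 0 < v' x₁ ∧ v' x₂ < 0 ∧ 0 < v' x₃ := by
  obtain ⟨_, _, hode, h0⟩ := hIVP
  have hσ2 : 0 < σ ^ 2 / 2 := by positivity
  constructor
  · have heq := hode 0 Set.self_mem_Ici
    rw [h0] at heq
    have hpos : 0 < σ ^ 2 / 2 * v' 0 := by
      rw [heq]
      rcases hcase with ⟨h1, h2⟩ | ⟨h1, h2⟩ <;> nlinarith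
    nlinarith
  · rintro ⟨x₁, x₂, x₃, h01, h12, h23, e12, e23, d1, d2, d3⟩
    have hx1 : x₁ ∈ Set.Ici (0:ℝ) := h01
    have hx2 : x₂ ∈ Set.Ici (0:ℝ) := le_trans h01 h12.le
    have hx3 : x₃ ∈ Set.Ici (0:ℝ) := le_trans hx2 h23.le
    have e1 := hode x₁ hx1
    have e2 := hode x₂ hx2
    have e3 := hode x₃ hx3
    rw [e12, e23] at e1
    rw [e23] at e2
    have p1 : 0 < σ ^ 2 / 2 * v' x₁ := mul_pos hσ2 d1
    have p2 : σ ^ 2 / 2 * v' x₂ < 0 := mul_neg_of_pos_of_neg hσ2 d2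
    have p3 : 0 < σ ^ 2 / 2 * v' x₃ := mul_pos hσ2 d3
    rw [e1] at p1; rw [e2] at p2; rw [e3] at p3
    nlinarith [mul_pos (sub_pos.mpr h12) (sub_pos.mpr h23)]
end
end

section
/- Suppose the parameters are in Case 1 or Case 2, and let 0 ≤ x₁ < x₂. If the solution v_β of IVP(β) is constant on the interval (x₁, x₂), then necessarily β = a·(h/η) − (α̂/4)·(h/η)², and v_β(x) = h/η for all x ∈ (x₁, x₂). Conversely, if β ≠ a·(h/η) − (α̂/4)·(h/η)², then there is no nonempty open interval on which v_β is constant. -/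
open Set Filter

noncomputable section

lemma const_key (σ η αh h r a β : ℝ) (hσ : 0 < σ) (hη : 0 < η)
    (v v' : ℝ → ℝ) (hIVP : IsIVP σ η αh h r a β v v')
    (x₁ x₂ : ℝ) (hx₁ : 0 ≤ x₁) (hx₁₂ : x₁ < x₂)
    (c : ℝ) (hc : ∀ x ∈ Set.Ioo x₁ x₂, v x = c) :
    β = a * (h / η) - αh / 4 * (h / η) ^ 2 ∧ c = h / η := by
  obtain ⟨_, hderiv, heq, _⟩ := hIVP
  have key : ∀ y ∈ Set.Ioo x₁ x₂,
      β + αh / 4 * c ^ 2 + η * y * (c - h / η) - a * c = 0 := by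
    intro y hy
    have hy0 : 0 < y := lt_of_le_of_lt hx₁ hy.1
    have h1 : HasDerivAt v (v' y) y :=
      (hderiv y (le_of_lt hy0)).hasDerivAt (Ici_mem_nhds hy0)
    have h2 : HasDerivAt v 0 y := by
      have h3 : HasDerivAt (fun _ : ℝ => c) 0 y := hasDerivAt_const y c
      exact h3.congr_of_eventuallyEq
        ((isOpen_Ioo.eventually_mem hy).mono fun x hx => hc x hx)
    have hv0 : v' y = 0 := h1.unique h2
    have hEq := heq y (le_of_lt hy0)
    rw [hv0, hc y hy] at hEq
    linarith
  set y₁ := (3 * x₁ + x₂) / 4 with hy₁def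
  set y₂ := (x₁ + 3 * x₂) / 4 with hy₂def
  have hy₁ : y₁ ∈ Set.Ioo x₁ x₂ := ⟨by simp only [hy₁def]; linarith, by simp only [hy₁def]; linarith⟩
  have hy₂ : y₂ ∈ Set.Ioo x₁ x₂ := ⟨by simp only [hy₂def]; linarith, by simp only [hy₂def]; linarith⟩
  have e1 := key y₁ hy₁
  have e2 := key y₂ hy₂
  have hdiff : η * (y₂ - y₁) * (c - h / η) = 0 := by linear_combination e2 - e1
  have hne : η * (y₂ - y₁) ≠ 0 := by
    have : (0:ℝ) < y₂ - y₁ := by simp only [hy₁def, hy₂def]; linarith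
    positivity
  have hceq : c = h / η := by
    rcases mul_eq_zero.mp hdiff with h' | h'
    · exact absurd h' hne
    · linarith [sub_eq_zero.mp h']
  subst hceq
  exact ⟨by linear_combination e1, rfl⟩

/-- In Case 1 or Case 2: if `v_β` is constant on `(x₁,x₂)` then necessarily
`β = a·(h/η) − (αh/4)·(h/η)²` and `v_β ≡ h/η` on `(x₁,x₂)`; conversely if
`β ≠ a·(h/η) − (αh/4)·(h/η)²` then `v_β` is constant on no nonempty open interval. -/
theorem stmt_5 (σ η αh h r a β : ℝ) (hσ : 0 < σ) (hη : 0 < η) (hαh : 0 < αh)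
    (hh : 0 < h) (hr : 0 < r)
    (hcase : (-(αh / 4) * r < a ∧ 0 ≤ β) ∨
      (a ≤ -(αh / 4) * r ∧ -a * r - αh / 4 * r ^ 2 < β))
    (v v' : ℝ → ℝ) (hIVP : IsIVP σ η αh h r a β v v')
    (x₁ x₂ : ℝ) (hx₁ : 0 ≤ x₁) (hx₁₂ : x₁ < x₂) :
    ((∃ c : ℝ, ∀ x ∈ Set.Ioo x₁ x₂, v x = c) →
      β = a * (h / η) - αh / 4 * (h / η) ^ 2 ∧ ∀ x ∈ Set.Ioo x₁ x₂, v x = h / η) ∧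
    (β ≠ a * (h / η) - αh / 4 * (h / η) ^ 2 →
      ∀ y₁ y₂ : ℝ, 0 ≤ y₁ → y₁ < y₂ → ¬ ∃ c : ℝ, ∀ x ∈ Set.Ioo y₁ y₂, v x = c) := by
  constructor
  · rintro ⟨c, hc⟩
    obtain ⟨hβ, hcv⟩ := const_key σ η αh h r a β hσ hη v v' hIVP x₁ x₂ hx₁ hx₁₂ c hc
    exact ⟨hβ, fun x hx => hcv ▸ hc x hx⟩
  · rintro hβ y₁ y₂ hy₁ hy₁₂ ⟨c, hc⟩
    exact hβ (const_key σ η αh h r a β hσ hη v v' hIVP y₁ y₂ hy₁ hy₁₂ c hc).1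
end
end

section
/- Suppose the parameters are in Case 1 or Case 2. Then β ∈ 𝓓 if and only if there exists x₀ ∈ (0,∞) such that v_β′(x₀) < 0. -/
open Set Filter Topology

noncomputable section

lemma neBot_Ioo_right {s t : ℝ} (h : s < t) : (𝓝[Ioo s t] t).NeBot :=
  mem_closure_iff_nhdsWithin_neBot.mp (by rw [closure_Ioo h.ne]; exact ⟨h.le, le_refl _⟩)

lemma neBot_Ioo_left {s t : ℝ} (h : s < t) : (𝓝[Ioo s t] s).NeBot :=
  mem_closure_iff_nhdsWithin_neBot.mp (by rw [closure_Ioo h.ne]; exact ⟨le_refl _, h.le⟩)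

lemma aux_left_max {f : ℝ → ℝ} {d s t : ℝ} (hst : s < t)
    (hd : HasDerivWithinAt f d (Ioo s t) t) (hmax : ∀ x ∈ Ioo s t, f x ≤ f t) : 0 ≤ d := by
  rw [hasDerivWithinAt_iff_tendsto_slope] at hd
  rw [Set.diff_singleton_eq_self (fun hx => (lt_irrefl t hx.2))] at hd
  haveI := neBot_Ioo_right hst
  refine ge_of_tendsto hd (eventually_nhdsWithin_of_forall fun x hx => ?_)
  rw [slope_def_field]
  exact div_nonneg_of_nonpos (by linarith [hmax x hx]) (by linarith [hx.2])

lemma aux_right_max {f : ℝ → ℝ} {d s t : ℝ} (hst : s < t)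
    (hd : HasDerivWithinAt f d (Ioo s t) s) (hmax : ∀ x ∈ Ioo s t, f x ≤ f s) : d ≤ 0 := by
  rw [hasDerivWithinAt_iff_tendsto_slope] at hd
  rw [Set.diff_singleton_eq_self (fun hx => (lt_irrefl s hx.1))] at hd
  haveI := neBot_Ioo_left hst
  refine le_of_tendsto hd (eventually_nhdsWithin_of_forall fun x hx => ?_)
  rw [slope_def_field]
  exact div_nonpos_of_nonpos_of_nonneg (by linarith [hmax x hx]) (by linarith [hx.1])

lemma aux_right_min {f : ℝ → ℝ} {d s t : ℝ} (hst : s < t)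
    (hd : HasDerivWithinAt f d (Ioo s t) s) (hmin : ∀ x ∈ Ioo s t, f s ≤ f x) : 0 ≤ d := by
  rw [hasDerivWithinAt_iff_tendsto_slope] at hd
  rw [Set.diff_singleton_eq_self (fun hx => (lt_irrefl s hx.1))] at hd
  haveI := neBot_Ioo_left hst
  refine ge_of_tendsto hd (eventually_nhdsWithin_of_forall fun x hx => ?_)
  rw [slope_def_field]
  exact div_nonneg (by linarith [hmin x hx]) (by linarith [hx.1])

lemma hasDeriv_w (σ η αh h a β : ℝ) (v v' : ℝ → ℝ)
    (hv : ∀ y ∈ Ici (0:ℝ), HasDerivWithinAt v (v' y) (Ici 0) y)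
    (hODE : ∀ y ∈ Ici (0:ℝ),
      σ^2/2 * v' y = β + αh/4*(v y)^2 + η*y*(v y - h/η) - a*v y)
    {t : ℝ} (ht : t ∈ Ici (0:ℝ)) :
    HasDerivWithinAt (fun y => σ^2/2 * v' y)
      (v' t * (αh/2 * v t + η*t - a) + η*(v t - h/η)) (Ici 0) t := by
  have h1 := hv t ht
  have hsq : HasDerivWithinAt (fun y => (v y)^2) (2*v t*v' t) (Ici 0) t := by
    have h := h1.pow 2
    refine h.congr_deriv ?_
    norm_num
  have hlin : HasDerivWithinAt (fun y : ℝ => η*y) η (Ici 0) t := by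
    simpa using (hasDerivWithinAt_id t (Ici 0)).const_mul η
  have hprod := hlin.mul (h1.sub_const (h/η))
  have h2 := (((hasDerivWithinAt_const t (Ici (0:ℝ)) β).add
      (hsq.const_mul (αh/4))).add hprod).sub (h1.const_mul a)
  have h3 := h2.congr (fun y hy => (hODE y hy)) (hODE t ht)
  refine h3.congr_deriv ?_
  ring

lemma absorb (σ η αh h r a β : ℝ) (hσ : 0 < σ) (hη : 0 < η) (hh : 0 < h) (hr : 0 < r)
    (v v' : ℝ → ℝ)
    (hc : ContinuousOn v' (Ici 0))
    (hv : ∀ y ∈ Ici (0:ℝ), HasDerivWithinAt v (v' y) (Ici 0) y)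
    (hODE : ∀ y ∈ Ici (0:ℝ),
      σ^2/2 * v' y = β + αh/4*(v y)^2 + η*y*(v y - h/η) - a*v y)
    (hv0 : v 0 = -r)
    {s y₂ : ℝ} (hs0 : 0 ≤ s) (hvs : v' s < 0) (hsy : s < y₂) (hy₂ : 0 ≤ v' y₂) : False := by
  have hσ2 : (0:ℝ) < σ^2/2 := by positivity
  have hk : 0 < h/η := div_pos hh hη
  have hvc : ContinuousOn v (Ici 0) := fun x hx => (hv x hx).continuousWithinAt
  have hwc : ContinuousOn (fun y => σ^2/2 * v' y) (Ici 0) := continuousOn_const.mul hc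
  -- Step A : first zero y₁ of v' after s
  have hIccA : Icc s y₂ ⊆ Ici (0:ℝ) := fun x hx => le_trans hs0 hx.1
  have hAclosed : IsClosed (Icc s y₂ ∩ v' ⁻¹' (Ici 0)) :=
    (hc.mono hIccA).preimage_isClosed_of_isClosed isClosed_Icc isClosed_Ici
  have hAne : (Icc s y₂ ∩ v' ⁻¹' (Ici 0)).Nonempty := ⟨y₂, ⟨hsy.le, le_refl _⟩, hy₂⟩
  have hAbdd : BddBelow (Icc s y₂ ∩ v' ⁻¹' (Ici 0)) := ⟨s, fun x hx => hx.1.1⟩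
  set y₁ := sInf (Icc s y₂ ∩ v' ⁻¹' (Ici 0)) with hy₁def
  have hy₁A : y₁ ∈ Icc s y₂ ∩ v' ⁻¹' (Ici 0) := hAclosed.csInf_mem hAne hAbdd
  have hy₁nonneg : (0:ℝ) ≤ v' y₁ := hy₁A.2
  have hlt : ∀ x, s ≤ x → x < y₁ → v' x < 0 := by
    intro x hx1 hx2
    by_contra hcon
    push_neg at hcon
    exact absurd (csInf_le hAbdd ⟨⟨hx1, hx2.le.trans hy₁A.1.2⟩, hcon⟩) (not_le.mpr hx2)
  have hsy₁ : s < y₁ := by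
    rcases lt_or_eq_of_le hy₁A.1.1 with h' | h'
    · exact h'
    · rw [← h'] at hy₁nonneg; linarith
  have hy₁pos : 0 < y₁ := lt_of_le_of_lt hs0 hsy₁
  have hv'y₁ : v' y₁ = 0 := by
    refine le_antisymm ?_ hy₁nonneg
    have hca : ContinuousAt v' y₁ := hc.continuousAt (Ici_mem_nhds hy₁pos)
    haveI := neBot_Ioo_right hsy₁
    exact le_of_tendsto
      (hca.tendsto.mono_left (nhdsWithin_le_nhds : 𝓝[Ioo s y₁] y₁ ≤ 𝓝 y₁))
      (eventually_nhdsWithin_of_forall fun x hx => (hlt x hx.1.le hx.2).le)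
  have hIooA : Ioo s y₁ ⊆ Ici (0:ℝ) := by
    intro x hx
    exact le_trans hs0 hx.1.le
  have hWy₁ : 0 ≤ v' y₁ * (αh/2 * v y₁ + η*y₁ - a) + η*(v y₁ - h/η) := by
    refine aux_left_max hsy₁
      ((hasDeriv_w σ η αh h a β v v' hv hODE hy₁pos.le).mono hIooA) (fun x hx => ?_)
    show σ^2/2 * v' x ≤ σ^2/2 * v' y₁
    rw [hv'y₁]
    nlinarith [hlt x hx.1.le hx.2]
  have hvy₁ : h/η ≤ v y₁ := by
    rw [hv'y₁] at hWy₁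
    nlinarith
  -- v strictly decreasing on [s,y₁], hence v s > h/η
  have hanti : StrictAntiOn v (Icc s y₁) := by
    refine strictAntiOn_of_deriv_neg (convex_Icc s y₁)
      (hvc.mono (fun x hx => le_trans hs0 hx.1)) (fun x hx => ?_)
    rw [interior_Icc] at hx
    have h0x : 0 < x := lt_of_le_of_lt hs0 hx.1
    rw [((hv x h0x.le).hasDerivAt (Ici_mem_nhds h0x)).deriv]
    exact hlt x hx.1.le hx.2
  have hvs_gt : h/η < v s :=
    lt_of_le_of_lt hvy₁ (hanti ⟨le_refl s, hsy₁.le⟩ ⟨hsy₁.le, le_refl y₁⟩ hsy₁)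
  -- Step B : last time t* at which v ≤ h/η before s
  have hBclosed : IsClosed (Icc 0 s ∩ v ⁻¹' (Iic (h/η))) :=
    (hvc.mono (fun x hx => hx.1)).preimage_isClosed_of_isClosed isClosed_Icc isClosed_Iic
  have hBne : (Icc 0 s ∩ v ⁻¹' (Iic (h/η))).Nonempty :=
    ⟨0, ⟨le_refl 0, hs0⟩, by simp only [mem_preimage, hv0, mem_Iic]; linarith⟩
  have hBbdd : BddAbove (Icc 0 s ∩ v ⁻¹' (Iic (h/η))) := ⟨s, fun x hx => hx.1.2⟩
  set tstar := sSup (Icc 0 s ∩ v ⁻¹' (Iic (h/η))) with htdef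
  have htB : tstar ∈ Icc 0 s ∩ v ⁻¹' (Iic (h/η)) := hBclosed.csSup_mem hBne hBbdd
  have ht0 : 0 ≤ tstar := htB.1.1
  have htstar_lt : tstar < s := by
    rcases lt_or_eq_of_le htB.1.2 with h' | h'
    · exact h'
    · have := htB.2
      rw [mem_preimage, h', mem_Iic] at this
      linarith
  have hgt : ∀ t, tstar < t → t ≤ s → h/η < v t := by
    intro t h1 h2
    by_contra hcon
    push_neg at hcon
    exact absurd (le_csSup hBbdd ⟨⟨ht0.trans h1.le, h2⟩, hcon⟩) (not_le.mpr h1)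
  have hvtstar : v tstar = h/η := by
    refine le_antisymm htB.2 ?_
    haveI := neBot_Ioo_left htstar_lt
    have hct : ContinuousWithinAt v (Ioo tstar s) tstar :=
      (hvc tstar ht0).mono (fun x hx => le_trans ht0 hx.1.le)
    exact ge_of_tendsto hct (eventually_nhdsWithin_of_forall fun x hx => (hgt x hx.1 hx.2.le).le)
  have hv'tstar : 0 ≤ v' tstar := by
    refine aux_right_min htstar_lt
      ((hv tstar ht0).mono (fun x hx => le_trans ht0 hx.1.le)) (fun x hx => ?_)
    rw [hvtstar]
    exact (hgt x hx.1 hx.2.le).le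
  -- Step C : last time u in [t*, s] at which v' ≥ 0
  have hsubC : Icc tstar s ⊆ Ici (0:ℝ) := fun x hx => le_trans ht0 hx.1
  have hCclosed : IsClosed (Icc tstar s ∩ (fun y => σ^2/2 * v' y) ⁻¹' (Ici 0)) :=
    (hwc.mono hsubC).preimage_isClosed_of_isClosed isClosed_Icc isClosed_Ici
  have hCne : (Icc tstar s ∩ (fun y => σ^2/2 * v' y) ⁻¹' (Ici 0)).Nonempty :=
    ⟨tstar, ⟨le_refl _, htstar_lt.le⟩, by
      simp only [mem_preimage, mem_Ici]
      exact mul_nonneg hσ2.le hv'tstar⟩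
  have hCbdd : BddAbove (Icc tstar s ∩ (fun y => σ^2/2 * v' y) ⁻¹' (Ici 0)) :=
    ⟨s, fun x hx => hx.1.2⟩
  set u := sSup (Icc tstar s ∩ (fun y => σ^2/2 * v' y) ⁻¹' (Ici 0)) with hudef
  have huC : u ∈ Icc tstar s ∩ (fun y => σ^2/2 * v' y) ⁻¹' (Ici 0) :=
    hCclosed.csSup_mem hCne hCbdd
  have hwu_nonneg : (0:ℝ) ≤ σ^2/2 * v' u := huC.2
  have hu0 : 0 ≤ u := le_trans ht0 huC.1.1
  have hus : u < s := by
    rcases lt_or_eq_of_le huC.1.2 with h' | h'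
    · exact h'
    · rw [h'] at hwu_nonneg; nlinarith
  have hwneg : ∀ x, u < x → x ≤ s → σ^2/2 * v' x < 0 := by
    intro x h1 h2
    by_contra hcon
    push_neg at hcon
    exact absurd (le_csSup hCbdd ⟨⟨huC.1.1.trans h1.le, h2⟩, hcon⟩) (not_le.mpr h1)
  have hwu0 : σ^2/2 * v' u = 0 := by
    refine le_antisymm ?_ hwu_nonneg
    haveI := neBot_Ioo_left hus
    have hca : ContinuousWithinAt (fun y => σ^2/2 * v' y) (Ioo u s) u :=
      (hwc u hu0).mono (fun x hx => le_trans hu0 hx.1.le)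
    exact le_of_tendsto hca (eventually_nhdsWithin_of_forall fun x hx => (hwneg x hx.1 hx.2.le).le)
  have hv'u : v' u = 0 := by
    rcases mul_eq_zero.mp hwu0 with h' | h'
    · linarith
    · exact h'
  have hWu : v' u * (αh/2 * v u + η*u - a) + η*(v u - h/η) ≤ 0 := by
    refine aux_right_max hus
      ((hasDeriv_w σ η αh h a β v v' hv hODE hu0).mono
        (fun x hx => le_trans hu0 hx.1.le)) (fun x hx => ?_)
    show σ^2/2 * v' x ≤ σ^2/2 * v' u
    rw [hwu0]
    exact (hwneg x hx.1 hx.2.le).le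
  have hvu : v u = h/η := by
    rw [hv'u, zero_mul, zero_add] at hWu
    refine le_antisymm (by nlinarith) ?_
    rcases lt_or_eq_of_le huC.1.1 with h' | h'
    · exact (hgt u h' hus.le).le
    · rw [← h', hvtstar]
  have hc0 : β + αh/4*(h/η)^2 - a*(h/η) = 0 := by
    have hO := hODE u hu0
    rw [hvu, hv'u] at hO
    linear_combination -hO
  -- Gronwall on [u, s] : v ≡ h/η there, contradiction with v s > h/η
  have hsubU : Icc u s ⊆ Ici (0:ℝ) := fun x hx => le_trans hu0 hx.1
  have hgc : ContinuousOn (fun y => v y - h/η) (Icc u s) :=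
    (hvc.mono hsubU).sub continuousOn_const
  have hLc : ContinuousOn (fun t => αh/4*(v t - h/η) + αh/2*(h/η) + η*t - a) (Icc u s) := by
    refine ContinuousOn.sub ?_ continuousOn_const
    refine ContinuousOn.add ?_ (continuousOn_const.mul continuousOn_id)
    exact (continuousOn_const.mul ((hvc.mono hsubU).sub continuousOn_const)).add
      continuousOn_const
  obtain ⟨Cb, hCb⟩ := isCompact_Icc.exists_bound_of_continuousOn hLc
  have hCb0 : 0 ≤ Cb := le_trans (norm_nonneg _) (hCb u ⟨le_refl u, hus.le⟩)
  have hσne : σ ≠ 0 := ne_of_gt hσ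
  have hbound : ∀ x ∈ Ico u s, ‖v' x‖ ≤ (2/σ^2 * Cb) * ‖v x - h/η‖ + 0 := by
    intro x hx
    have hx0 : 0 ≤ x := le_trans hu0 hx.1
    have hEq : σ^2/2 * v' x
        = (v x - h/η) * (αh/4*(v x - h/η) + αh/2*(h/η) + η*x - a) := by
      linear_combination (hODE x hx0) + hc0
    have hL := hCb x ⟨hx.1, hx.2.le⟩
    rw [Real.norm_eq_abs] at hL
    rw [Real.norm_eq_abs, Real.norm_eq_abs]
    have h1 : |σ^2/2 * v' x|
        = |v x - h/η| * |αh/4*(v x - h/η) + αh/2*(h/η) + η*x - a| := by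
      rw [hEq, abs_mul]
    have h2 : |σ^2/2 * v' x| = σ^2/2 * |v' x| := by
      rw [abs_mul, abs_of_pos hσ2]
    have h3 : |v x - h/η| * |αh/4*(v x - h/η) + αh/2*(h/η) + η*x - a|
        ≤ |v x - h/η| * Cb :=
      mul_le_mul_of_nonneg_left hL (abs_nonneg _)
    have hKg : σ^2/2 * ((2/σ^2 * Cb) * |v x - h/η|) = Cb * |v x - h/η| := by
      field_simp
    have h4 : σ^2/2 * |v' x| ≤ σ^2/2 * ((2/σ^2 * Cb) * |v x - h/η|) := by
      rw [hKg, ← h2, h1]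
      exact h3.trans_eq (mul_comm _ _)
    have h5 := (mul_le_mul_iff_right₀ hσ2).mp h4
    linarith
  have hder : ∀ x ∈ Ico u s, HasDerivWithinAt (fun y => v y - h/η) (v' x) (Ici x) x :=
    fun x hx => ((hv x (le_trans hu0 hx.1)).mono (Ici_subset_Ici.mpr (le_trans hu0 hx.1))).sub_const _
  have hg0 : ‖v u - h/η‖ ≤ 0 := by rw [hvu]; simp
  have hgr := norm_le_gronwallBound_of_norm_deriv_right_le hgc hder hg0 hbound s ⟨hus.le, le_refl s⟩
  rw [gronwallBound_ε0] at hgr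
  have habs : |v s - h/η| ≤ 0 := by simpa using hgr
  have h3 : v s - h/η = 0 := abs_eq_zero.mp (le_antisymm habs (abs_nonneg _))
  linarith


/-- In Case 1 or Case 2, `β ∈ 𝓓` (i.e. `v_β` is nondecreasing on `[0,x_β]` and strictly
decreasing on `[x_β,∞)` for some `x_β ≥ 0`) iff `v_β′(x₀) < 0` for some `x₀ > 0`. -/
theorem stmt_6 (σ η αh h r a β : ℝ) (hσ : 0 < σ) (hη : 0 < η) (hαh : 0 < αh)
    (hh : 0 < h) (hr : 0 < r)
    (hcase : (-(αh / 4) * r < a ∧ 0 ≤ β) ∨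
      (a ≤ -(αh / 4) * r ∧ -a * r - αh / 4 * r ^ 2 < β))
    (v v' : ℝ → ℝ) (hIVP : IsIVP σ η αh h r a β v v') :
    (∃ xβ, 0 ≤ xβ ∧ MonotoneOn v (Set.Icc 0 xβ) ∧ StrictAntiOn v (Set.Ici xβ)) ↔
      ∃ x₀ : ℝ, 0 < x₀ ∧ v' x₀ < 0 := by
  obtain ⟨hc, hv, hODE, hv0⟩ := hIVP
  have hvc : ContinuousOn v (Ici 0) := fun x hx => (hv x hx).continuousWithinAt
  constructor
  · rintro ⟨xβ, hxβ0, hmono, hanti⟩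
    by_contra hcon
    push_neg at hcon
    have hmon : MonotoneOn v (Ici 0) := by
      refine monotoneOn_of_deriv_nonneg (convex_Ici 0) hvc ?_ ?_
      · intro x hx
        rw [interior_Ici] at hx
        exact ((hv x (mem_Ici.mpr hx.le)).hasDerivAt
          (Ici_mem_nhds hx)).differentiableAt.differentiableWithinAt
      · intro x hx
        rw [interior_Ici] at hx
        rw [((hv x (mem_Ici.mpr hx.le)).hasDerivAt (Ici_mem_nhds hx)).deriv]
        exact hcon x hx
    have h1 : v (xβ+1) < v xβ :=
      hanti self_mem_Ici (mem_Ici.mpr (by linarith)) (lt_add_one xβ)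
    have h2 : v xβ ≤ v (xβ+1) := hmon (mem_Ici.mpr hxβ0) (mem_Ici.mpr (by linarith)) (by linarith)
    linarith
  · rintro ⟨x₀, hx₀pos, hx₀⟩
    have hv'0 : 0 < v' 0 := by
      have hO := hODE 0 self_mem_Ici
      rw [hv0] at hO
      have hP : 0 < β + αh/4 * r^2 + a*r := by
        rcases hcase with ⟨h1, h2⟩ | ⟨h1, h2⟩
        · nlinarith
        · nlinarith
      nlinarith [hO, mul_pos hσ hσ]
    have hSne : x₀ ∈ {y : ℝ | 0 ≤ y ∧ v' y < 0} := ⟨hx₀pos.le, hx₀⟩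
    have hSbdd : BddBelow {y : ℝ | 0 ≤ y ∧ v' y < 0} := ⟨0, fun y hy => hy.1⟩
    set xβ := sInf {y : ℝ | 0 ≤ y ∧ v' y < 0} with hxβdef
    have hev : {y : ℝ | 0 < v' y} ∈ 𝓝[Ici 0] (0:ℝ) :=
      (hc 0 self_mem_Ici).eventually (eventually_gt_nhds hv'0)
    obtain ⟨ε, hε, hball⟩ := Metric.mem_nhdsWithin_iff.mp hev
    have hxβpos : 0 < xβ := by
      have hlow : ∀ y ∈ {y : ℝ | 0 ≤ y ∧ v' y < 0}, ε/2 ≤ y := by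
        intro y hy
        by_contra hcy
        push_neg at hcy
        have hmem : y ∈ Metric.ball (0:ℝ) ε ∩ Ici 0 :=
          ⟨by rw [Metric.mem_ball, Real.dist_eq, sub_zero, abs_of_nonneg hy.1]; linarith, hy.1⟩
        exact absurd (hball hmem) (not_lt.mpr hy.2.le)
      linarith [le_csInf ⟨x₀, hSne⟩ hlow]
    have hneg : ∀ y, xβ < y → v' y < 0 := by
      intro y hy
      obtain ⟨s, hsS, hsy⟩ := exists_lt_of_csInf_lt ⟨x₀, hSne⟩ hy
      by_contra hcon2
      push_neg at hcon2
      exact absorb σ η αh h r a β hσ hη hh hr v v' hc hv hODE hv0 hsS.1 hsS.2 hsy hcon2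
    have hnn : ∀ y, 0 ≤ y → y < xβ → 0 ≤ v' y := by
      intro y hy0 hyx
      by_contra hcon2
      push_neg at hcon2
      exact absurd (csInf_le hSbdd ⟨hy0, hcon2⟩) (not_le.mpr hyx)
    have hnnβ : 0 ≤ v' xβ := by
      haveI := neBot_Ioo_right hxβpos
      have hca : ContinuousAt v' xβ := hc.continuousAt (Ici_mem_nhds hxβpos)
      exact ge_of_tendsto
        (hca.tendsto.mono_left (nhdsWithin_le_nhds : 𝓝[Ioo 0 xβ] xβ ≤ 𝓝 xβ))
        (eventually_nhdsWithin_of_forall fun x hx => hnn x hx.1.le hx.2)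
    refine ⟨xβ, hxβpos.le, ?_, ?_⟩
    · refine monotoneOn_of_deriv_nonneg (convex_Icc 0 xβ) (hvc.mono (fun x hx => hx.1)) ?_ ?_
      · intro x hx
        rw [interior_Icc] at hx
        exact ((hv x hx.1.le).hasDerivAt
          (Ici_mem_nhds hx.1)).differentiableAt.differentiableWithinAt
      · intro x hx
        rw [interior_Icc] at hx
        rw [((hv x hx.1.le).hasDerivAt (Ici_mem_nhds hx.1)).deriv]
        exact hnn x hx.1.le hx.2
    · refine strictAntiOn_of_deriv_neg (convex_Ici xβ)
        (hvc.mono (Ici_subset_Ici.mpr hxβpos.le)) ?_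
      intro x hx
      rw [interior_Ici] at hx
      have h0x : 0 < x := lt_trans hxβpos hx
      rw [((hv x h0x.le).hasDerivAt (Ici_mem_nhds h0x)).deriv]
      exact hneg x hx
end
end

section
/- Suppose the parameters are in Case 1 or Case 2 and β ∈ 𝓓. Then v_β attains its maximum over [0,∞), and sup_{x ≥ 0} v_β(x) < h/η. -/
open Set Filter

noncomputable section

open Topology in
private lemma deriv_nonpos_of_strictAntiOn {v : ℝ → ℝ} {d x y : ℝ} (hxy : x ≤ y)
    (hd : HasDerivWithinAt v d (Set.Ici x) y) (hanti : StrictAntiOn v (Set.Ici x)) :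
    d ≤ 0 := by
  rw [hasDerivWithinAt_iff_tendsto_slope] at hd
  have hsub : Set.Ioi y ⊆ Set.Ici x \ {y} := fun z hz =>
    ⟨le_trans hxy (le_of_lt hz), ne_of_gt hz⟩
  have h2 : Tendsto (slope v y) (𝓝[>] y) (𝓝 d) :=
    hd.mono_left (nhdsWithin_mono _ hsub)
  refine le_of_tendsto h2 ?_
  filter_upwards [self_mem_nhdsWithin] with z hz
  have hvz : v z < v y := hanti hxy (le_trans hxy (le_of_lt hz)) hz
  rw [slope_def_field]
  apply div_nonpos_of_nonpos_of_nonneg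
  · linarith
  · have : y < z := hz
    linarith

set_option maxHeartbeats 1600000 in
/-- In Case 1 or Case 2, if `β ∈ 𝓓` then `v_β` attains its maximum over `[0,∞)` and
`sup_{x ≥ 0} v_β(x) < h/η`. -/
theorem stmt_7 (σ η αh h r a β : ℝ) (hσ : 0 < σ) (hη : 0 < η) (hαh : 0 < αh)
    (hh : 0 < h) (hr : 0 < r)
    (hcase : (-(αh / 4) * r < a ∧ 0 ≤ β) ∨
      (a ≤ -(αh / 4) * r ∧ -a * r - αh / 4 * r ^ 2 < β))
    (v v' : ℝ → ℝ) (hIVP : IsIVP σ η αh h r a β v v')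
    (hD : ∃ xβ, 0 ≤ xβ ∧ MonotoneOn v (Set.Icc 0 xβ) ∧ StrictAntiOn v (Set.Ici xβ)) :
    ∃ x : ℝ, 0 ≤ x ∧ (∀ y : ℝ, 0 ≤ y → v y ≤ v x) ∧ v x < h / η := by
  obtain ⟨x, hx0, hmono, hanti⟩ := hD
  obtain ⟨hc', hderiv, hode, hv0⟩ := hIVP
  have hcont : ContinuousOn v (Set.Ici 0) :=
    fun y hy => (hderiv y hy).continuousWithinAt
  have hHH : 0 < h / η := div_pos hh hη
  have hσ2 : (0:ℝ) < σ ^ 2 / 2 := by positivity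
  -- the maximum property
  have hmax : ∀ y : ℝ, 0 ≤ y → v y ≤ v x := by
    intro y hy
    rcases le_or_gt y x with hyx | hxy
    · exact hmono ⟨hy, hyx⟩ ⟨hx0, le_refl x⟩ hyx
    · exact (hanti (le_refl x) hxy.le hxy).le
  refine ⟨x, hx0, hmax, ?_⟩
  by_contra hcon
  push_neg at hcon
  -- hcon : h / η ≤ v x
  -- Step 1 : x > 0
  have hx_pos : 0 < x := by
    rcases hx0.lt_or_eq with h1 | h1
    · exact h1
    · exfalso; rw [← h1, hv0] at hcon; linarith
  -- Step 2 : v' x = 0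
  have hnhd : Set.Ici (0:ℝ) ∈ nhds x := Ici_mem_nhds hx_pos
  have hda : HasDerivAt v (v' x) x := (hderiv x hx0).hasDerivAt hnhd
  have hlocal : IsLocalMax v x := by
    filter_upwards [hnhd] with y hy using hmax y hy
  have hvx0 : v' x = 0 := hlocal.hasDerivAt_eq_zero hda
  -- Step 3 : f (v x) ≤ 0
  have hodex := hode x hx0
  rw [hvx0] at hodex
  have hfm : β + αh / 4 * (v x) ^ 2 - a * v x ≤ 0 := by
    nlinarith [mul_nonneg (mul_nonneg hη.le hx0) (sub_nonneg.mpr hcon)]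
  rcases le_or_gt (β + αh / 4 * (h / η) ^ 2 - a * (h / η)) 0 with hfHH | hfHH
  · -- Gronwall branch: f(h/η) ≤ 0
    -- find t ∈ [0,x] with v t = h/η
    have hIVT : (h / η) ∈ v '' Set.Icc 0 x := by
      apply intermediate_value_Icc hx0 (hcont.mono (fun z hz => hz.1))
      rw [hv0]
      exact ⟨by linarith, hcon⟩
    obtain ⟨t, ⟨ht0, htx⟩, hvt⟩ := hIVT
    have hvle : ∀ y ∈ Set.Icc (0:ℝ) t, -r ≤ v y ∧ v y ≤ h / η := by
      intro y hy
      constructor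
      · have := hmono ⟨le_refl 0, hx0⟩ ⟨hy.1, hy.2.trans htx⟩ hy.1
        rw [hv0] at this; exact this
      · have := hmono ⟨hy.1, hy.2.trans htx⟩ ⟨ht0, htx⟩ hy.2
        rw [hvt] at this; exact this
    set C : ℝ := 2 / σ ^ 2 * (|a| + αh / 4 * r) with hCdef
    have hC0 : 0 ≤ C := by positivity
    set F : ℝ → ℝ := fun y => (h / η - v y) * Real.exp (C * y) with hFdef
    have hder : ∀ y ∈ Set.Ioo (0:ℝ) t,
        HasDerivAt F ((C * (h / η - v y) - v' y) * Real.exp (C * y)) y := by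
      intro y hy
      have h1 : HasDerivAt v (v' y) y :=
        (hderiv y hy.1.le).hasDerivAt (Ici_mem_nhds hy.1)
      have h2 : HasDerivAt (fun z => h / η - v z) (-(v' y)) y := h1.const_sub _
      have h3 : HasDerivAt (fun z => Real.exp (C * z)) (Real.exp (C * y) * C) y := by
        exact ((Real.hasDerivAt_exp (C * y)).comp y ((hasDerivAt_id y).const_mul C)).congr_deriv (by ring)
      have := h2.mul h3
      exact this.congr_deriv (by ring)
    have hdnn : ∀ y ∈ Set.Ioo (0:ℝ) t, 0 ≤ C * (h / η - v y) - v' y := by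
      intro y hy
      obtain ⟨hv1, hv2⟩ := hvle y ⟨hy.1.le, hy.2.le⟩
      have hodey := hode y hy.1.le
      have hu : 0 ≤ h / η - v y := by linarith
      have step1 : σ ^ 2 / 2 * v' y ≤ (|a| + αh / 4 * r) * (h / η - v y) := by
        nlinarith [mul_nonneg (mul_nonneg hη.le hy.1.le) hu,
          mul_nonneg hu (sub_nonneg.mpr (le_abs_self a)),
          mul_nonneg (mul_nonneg hαh.le hu) (show (0:ℝ) ≤ r + h / η + v y by linarith)]
      have hCC : σ ^ 2 / 2 * C = |a| + αh / 4 * r := by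
        rw [hCdef]; field_simp
      have h3 : σ ^ 2 / 2 * 0 ≤ σ ^ 2 / 2 * (C * (h / η - v y) - v' y) := by
        nlinarith [step1, hCC]
      exact le_of_mul_le_mul_left h3 hσ2
    have hFmono : MonotoneOn F (Set.Icc 0 t) := by
      apply monotoneOn_of_deriv_nonneg (convex_Icc 0 t)
      · exact (continuousOn_const.sub (hcont.mono (fun z hz => hz.1))).mul
          ((Real.continuous_exp.comp (continuous_const.mul continuous_id)).continuousOn)
      · rw [interior_Icc]
        intro y hy
        exact (hder y hy).differentiableAt.differentiableWithinAt
      · rw [interior_Icc]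
        intro y hy
        rw [(hder y hy).deriv]
        have := hdnn y hy
        positivity
    have hle : F 0 ≤ F t := hFmono ⟨le_refl 0, ht0⟩ ⟨ht0, le_refl t⟩ ht0
    rw [hFdef] at hle
    simp only [hv0, hvt, mul_zero, Real.exp_zero, sub_self, zero_mul, mul_one] at hle
    linarith
  · -- branch f(h/η) > 0
    have hmgt : h / η < v x := by
      rcases hcon.lt_or_eq with h1 | h1
      · exact h1
      · exfalso; rw [← h1] at hfm; linarith
    -- find root c of f in (h/η, v x]
    have hgcont : ContinuousOn (fun s => β + αh / 4 * s ^ 2 - a * s)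
        (Set.Icc (h / η) (v x)) := by fun_prop
    have hIVT2 : (0:ℝ) ∈ (fun s => β + αh / 4 * s ^ 2 - a * s) '' Set.Icc (h / η) (v x) :=
      intermediate_value_Icc' hmgt.le hgcont ⟨hfm, hfHH.le⟩
    obtain ⟨c, ⟨hc1, hc2⟩, hgc0⟩ := hIVT2
    have hgc : β + αh / 4 * c ^ 2 - a * c = 0 := hgc0
    have hcgt : h / η < c := by
      rcases hc1.lt_or_eq with h1 | h1
      · exact h1
      · exfalso; rw [← h1] at hgc; linarith
    have hc_pos : 0 < c := lt_trans hHH hcgt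
    -- v' is nonpositive on [x, ∞)
    have hvp : ∀ y : ℝ, x ≤ y → v' y ≤ 0 := by
      intro y hy
      exact deriv_nonpos_of_strictAntiOn hy
        ((hderiv y (le_trans hx0 hy)).mono (Set.Ici_subset_Ici.mpr hx0)) hanti
    set M : ℝ := |β| + |a| * v x with hMdef
    set Y : ℝ := max x ((M + 1) / (η * (c - h / η))) with hYdef
    have hY1 : x ≤ Y := le_max_left _ _
    have hY0 : 0 ≤ Y := le_trans hx0 hY1
    have hpos : 0 < η * (c - h / η) := mul_pos hη (by linarith)
    have hY2 : M + 1 ≤ η * Y * (c - h / η) := by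
      have := le_max_right x ((M + 1) / (η * (c - h / η)))
      rw [div_le_iff₀ hpos] at this
      nlinarith
    rcases le_or_gt c (v Y) with hvy | hvy
    · -- v Y ≥ c > h/η, get contradiction from ODE at Y
      have hvYm : v Y ≤ v x := hmax Y hY0
      have hodeY := hode Y hY0
      have hv'Y : v' Y ≤ 0 := hvp Y hY1
      have h5 : a * v Y ≤ |a| * v x := by
        nlinarith [le_abs_self a, abs_nonneg a, hc_pos]
      have h6 : σ ^ 2 / 2 * v' Y ≤ 0 := mul_nonpos_of_nonneg_of_nonpos hσ2.le hv'Y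
      nlinarith [mul_nonneg (mul_nonneg hη.le hY0) (show (0:ℝ) ≤ v Y - c by linarith),
        sq_nonneg (v Y), neg_abs_le β, mul_nonneg hαh.le (sq_nonneg (v Y))]
    · -- v crosses c somewhere in [x, Y]
      have hIVT3 : c ∈ v '' Set.Icc x Y := by
        apply intermediate_value_Icc' hY1 (hcont.mono (fun z hz => le_trans hx0 hz.1))
        exact ⟨hvy.le, hc2⟩
      obtain ⟨y₁, ⟨hy₁x, hy₁Y⟩, hvy₁⟩ := hIVT3
      have hodey₁ := hode y₁ (le_trans hx0 hy₁x)
      rw [hvy₁] at hodey₁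
      have hv'y₁ : v' y₁ ≤ 0 := hvp y₁ hy₁x
      have h6 : σ ^ 2 / 2 * v' y₁ ≤ 0 := mul_nonpos_of_nonneg_of_nonpos hσ2.le hv'y₁
      have h7 : 0 < η * y₁ * (c - h / η) :=
        mul_pos (mul_pos hη (lt_of_lt_of_le hx_pos hy₁x)) (by linarith)
      linarith
end
end

section
/- Suppose the parameters are in Case 1 or Case 2 and β ∈ 𝓓. Then lim_{x→∞} v_β(x) = −∞. -/
open Set Filter Topology

noncomputable section

private lemma aux_deriv_nonpos {v : ℝ → ℝ} {d y : ℝ}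
    (hv : HasDerivWithinAt v d (Set.Ici y) y)
    (hanti : AntitoneOn v (Set.Ici y)) : d ≤ 0 := by
  have h1 := hasDerivWithinAt_iff_tendsto_slope.mp hv
  rw [show Set.Ici y \ {y} = Set.Ioi y from Set.Ici_sdiff_left] at h1
  refine le_of_tendsto h1 ?_
  filter_upwards [self_mem_nhdsWithin] with z hz
  have hzy : y < z := hz
  rw [slope_def_field]
  apply div_nonpos_of_nonpos_of_nonneg
  · have := hanti (Set.self_mem_Ici) (Set.mem_Ici.mpr hzy.le) hzy.le
    linarith
  · linarith

private lemma aux_deriv_nonneg_right {v : ℝ → ℝ} {d y c : ℝ} (hyc : y < c)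
    (hv : HasDerivWithinAt v d (Set.Icc y c) y)
    (hmono : MonotoneOn v (Set.Icc y c)) : 0 ≤ d := by
  have h1 := hasDerivWithinAt_iff_tendsto_slope.mp hv
  rw [show Set.Icc y c \ {y} = Set.Ioc y c from Set.Icc_diff_left] at h1
  haveI : (𝓝[Set.Ioc y c] y).NeBot := by
    rw [nhdsWithin_Ioc_eq_nhdsGT hyc]; infer_instance
  refine ge_of_tendsto h1 ?_
  filter_upwards [self_mem_nhdsWithin] with z hz
  rw [slope_def_field]
  apply div_nonneg
  · have := hmono (Set.left_mem_Icc.mpr hyc.le) (Set.mem_Icc.mpr ⟨hz.1.le, hz.2⟩) hz.1.le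
    linarith
  · linarith [hz.1]

private lemma aux_deriv_nonneg_left {v : ℝ → ℝ} {d c b0 : ℝ} (hc : b0 < c)
    (hv : HasDerivWithinAt v d (Set.Icc b0 c) c)
    (hmono : MonotoneOn v (Set.Icc b0 c)) : 0 ≤ d := by
  have h1 := hasDerivWithinAt_iff_tendsto_slope.mp hv
  rw [show Set.Icc b0 c \ {c} = Set.Ico b0 c from Set.Icc_sdiff_right] at h1
  haveI : (𝓝[Set.Ico b0 c] c).NeBot := by
    rw [nhdsWithin_Ico_eq_nhdsLT hc]; infer_instance
  refine ge_of_tendsto h1 ?_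
  filter_upwards [self_mem_nhdsWithin] with z hz
  rw [slope_def_field]
  apply div_nonneg_of_nonpos
  · have := hmono (Set.mem_Icc.mpr ⟨hz.1, hz.2.le⟩) (Set.right_mem_Icc.mpr hc.le) hz.2.le
    linarith
  · linarith [hz.2]
set_option maxHeartbeats 2000000
/-- In Case 1 or Case 2, if `β ∈ 𝓓` then `v_β(x) → −∞` as `x → ∞`. -/
theorem stmt_8 (σ η αh h r a β : ℝ) (hσ : 0 < σ) (hη : 0 < η) (hαh : 0 < αh)
    (hh : 0 < h) (hr : 0 < r)
    (hcase : (-(αh / 4) * r < a ∧ 0 ≤ β) ∨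
      (a ≤ -(αh / 4) * r ∧ -a * r - αh / 4 * r ^ 2 < β))
    (v v' : ℝ → ℝ) (hIVP : IsIVP σ η αh h r a β v v')
    (hD : ∃ xβ, 0 ≤ xβ ∧ MonotoneOn v (Set.Icc 0 xβ) ∧ StrictAntiOn v (Set.Ici xβ)) :
    Tendsto v atTop atBot := by
  obtain ⟨xβ, hx0, hmono, hanti⟩ := hD
  obtain ⟨hc', hderiv, heq, hv0⟩ := hIVP
  have hσ2 : 0 < σ ^ 2 / 2 := by positivity
  have hcont : ContinuousOn v (Set.Ici 0) := fun y hy => (hderiv y hy).continuousWithinAt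
  -- derivative nonpositive past xβ
  have hvp : ∀ y, xβ ≤ y → v' y ≤ 0 := by
    intro y hy
    refine aux_deriv_nonpos ((hderiv y (hx0.trans hy)).mono
      (Set.Ici_subset_Ici.mpr (hx0.trans hy))) ?_
    exact (hanti.antitoneOn).mono (Set.Ici_subset_Ici.mpr hy)
  have key : ∀ b, ∃ y, xβ ≤ y ∧ v y ≤ b := by
    by_contra hcon
    push_neg at hcon
    obtain ⟨b, hb⟩ := hcon
    -- the limit L
    set w : ℝ → ℝ := fun y => v (max y xβ) with hw
    have hwa : Antitone w := by
      intro y1 y2 h12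
      exact hanti.antitoneOn (Set.mem_Ici.mpr (le_max_right _ _))
        (Set.mem_Ici.mpr (le_max_right _ _)) (max_le_max h12 le_rfl)
    have hbdd : BddBelow (Set.range w) := by
      refine ⟨b, ?_⟩
      rintro x ⟨y, rfl⟩
      exact (hb _ (le_max_right _ _)).le
    have hLt : Tendsto w atTop (𝓝 (⨅ y, w y)) := tendsto_atTop_ciInf hwa hbdd
    set L := ⨅ y, w y with hLdef
    have hvw : w =ᶠ[atTop] v := by
      filter_upwards [eventually_ge_atTop xβ] with y hy
      simp [hw, max_eq_left hy]
    have hvL : Tendsto v atTop (𝓝 L) := hLt.congr' hvw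
    have hLle : ∀ y, xβ ≤ y → L ≤ v y := by
      intro y hy
      have := ciInf_le hbdd y
      simpa [hw, max_eq_left hy] using this
    have hLlt : ∀ y, xβ ≤ y → L < v y := by
      intro y hy
      have h1 : L ≤ v (y + 1) := hLle _ (by linarith)
      have h2 : v (y + 1) < v y := hanti (Set.mem_Ici.mpr hy)
        (Set.mem_Ici.mpr (by linarith)) (by linarith)
      linarith
    set M := v xβ with hM
    have hvM : ∀ y, xβ ≤ y → v y ≤ M :=
      fun y hy => hanti.antitoneOn Set.self_mem_Ici (Set.mem_Ici.mpr hy) hy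
    have hLM : L < M := hLlt xβ le_rfl
    -- Q(-r) > 0
    have hQr : 0 < β + αh / 4 * r ^ 2 + a * r := by
      rcases hcase with ⟨h1, h2⟩ | ⟨h1, h2⟩
      · nlinarith [mul_pos hr (show (0:ℝ) < a + αh / 4 * r by linarith)]
      · nlinarith
    -- bound |a * v y| on [xβ, ∞)
    have habs : ∀ y, xβ ≤ y → |a * v y| ≤ |a| * (|L| + |M|) := by
      intro y hy
      have h1 : |v y| ≤ |L| + |M| := by
        rw [abs_le]
        constructor
        · linarith [neg_abs_le L, hLle y hy, abs_nonneg M]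
        · linarith [le_abs_self M, hvM y hy, abs_nonneg L]
      rw [abs_mul]
      exact mul_le_mul_of_nonneg_left h1 (abs_nonneg a)
    rcases lt_trichotomy L (h / η) with hL1 | hL2 | hL3
    · -- L < h/η : derivative eventually ≤ -1, contradiction with boundedness below
      set ε := (h / η - L) / 2 with hε
      have hεpos : 0 < ε := by simp only [hε]; linarith
      obtain ⟨Y1, hY1⟩ := eventually_atTop.mp
        (hvL.eventually (gt_mem_nhds (show L < L + ε by linarith)))
      set C := β + αh / 4 * (L ^ 2 + M ^ 2) + |a| * (|L| + |M|) with hC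
      set Y0 := max (max Y1 xβ) ((C + σ ^ 2 / 2) / (η * ε)) with hY0
      have hY0xβ : xβ ≤ Y0 := le_trans (le_max_right _ _) (le_max_left _ _)
      have hY0nn : 0 ≤ Y0 := hx0.trans hY0xβ
      have hder1 : ∀ y, Y0 ≤ y → v' y ≤ -1 := by
        intro y hy
        have hyxβ : xβ ≤ y := hY0xβ.trans hy
        have hynn : (0:ℝ) ≤ y := hx0.trans hyxβ
        have hve := hY1 y (le_trans (le_trans (le_max_left _ _) (le_max_left _ _)) hy)
        have hEq := heq y hynn
        have hvsq : (v y) ^ 2 ≤ L ^ 2 + M ^ 2 := by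
          nlinarith [hLle y hyxβ, hvM y hyxβ,
            mul_nonneg (sub_nonneg.mpr (hLle y hyxβ)) (sub_nonneg.mpr (hvM y hyxβ))]
        have hC1 : β + αh / 4 * (v y) ^ 2 - a * v y ≤ C := by
          have h11 := habs y hyxβ
          have h12 : -(a * v y) ≤ |a| * (|L| + |M|) := by
            calc -(a * v y) ≤ |a * v y| := neg_le_abs _
              _ ≤ _ := h11
          have h4 : αh / 4 * (v y) ^ 2 ≤ αh / 4 * (L ^ 2 + M ^ 2) :=
            mul_le_mul_of_nonneg_left hvsq (by positivity)
          simp only [hC]; linarith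
        have hterm : η * y * (v y - h / η) ≤ -(η * ε * y) := by
          have h5 : v y - h / η ≤ -ε := by simp only [hε] at *; linarith
          have h6 : 0 ≤ η * y := by positivity
          nlinarith
        have hyC : C + σ ^ 2 / 2 ≤ η * ε * y := by
          have h7 : (C + σ ^ 2 / 2) / (η * ε) ≤ y := le_trans (le_max_right _ _) hy
          have h8 : 0 < η * ε := by positivity
          calc C + σ ^ 2 / 2 = ((C + σ ^ 2 / 2) / (η * ε)) * (η * ε) := (div_mul_cancel₀ _ h8.ne').symm
            _ ≤ y * (η * ε) := mul_le_mul_of_nonneg_right h7 h8.le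
            _ = η * ε * y := by ring
        have h9 : σ ^ 2 / 2 * v' y ≤ -(σ ^ 2 / 2) := by linarith
        nlinarith
      -- u = v + id is antitone on [Y0, ∞)
      have hu : AntitoneOn (fun y => v y + y) (Set.Ici Y0) := by
        have hconv : Convex ℝ (Set.Ici Y0) := convex_Ici _
        have hcontu : ContinuousOn (fun y => v y + y) (Set.Ici Y0) :=
          (hcont.mono (Set.Ici_subset_Ici.mpr hY0nn)).add continuousOn_id
        have hdiff : ∀ x ∈ interior (Set.Ici Y0), HasDerivAt (fun y => v y + y) (v' x + 1) x := by
          intro x hx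
          rw [interior_Ici] at hx
          have hx' : (0:ℝ) < x := lt_of_le_of_lt hY0nn hx
          have h10 : HasDerivAt v (v' x) x :=
            (hderiv x hx'.le).hasDerivAt (Ici_mem_nhds hx')
          exact h10.add (hasDerivAt_id x)
        refine antitoneOn_of_deriv_nonpos hconv hcontu ?_ ?_
        · intro x hx
          exact (hdiff x hx).differentiableAt.differentiableWithinAt
        · intro x hx
          rw [(hdiff x hx).deriv]
          rw [interior_Ici] at hx
          linarith [hder1 x hx.le]
      have hfin : v (Y0 + (M - L) + 1) + (Y0 + (M - L) + 1) ≤ v Y0 + Y0 := by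
        refine hu Set.self_mem_Ici (Set.mem_Ici.mpr ?_) ?_ <;> linarith [hLM.le]
      have := hLle (Y0 + (M - L) + 1) (by linarith [hLM.le])
      have := hvM Y0 hY0xβ
      linarith
    · -- L = h/η : the hard case
      have hLpos : 0 < L := by rw [hL2]; positivity
      have hxβpos : 0 < xβ := by
        rcases lt_or_eq_of_le hx0 with h1 | h1
        · exact h1
        · exfalso
          have h2 : v 1 < v 0 := hanti (by rw [← h1]; exact Set.self_mem_Ici)
            (by rw [← h1]; exact Set.mem_Ici.mpr (by norm_num)) (by norm_num)
          have h3 := hLle 1 (by linarith)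
          rw [hv0] at h2
          linarith
      have hv'xβ : v' xβ = 0 := by
        refine le_antisymm (hvp xβ le_rfl) ?_
        exact aux_deriv_nonneg_left hxβpos
          ((hderiv xβ hx0).mono (Set.Icc_subset_Ici_self)) hmono
      have hQM : β + αh / 4 * M ^ 2 - a * M < 0 := by
        have hEq := heq xβ hx0
        rw [hv'xβ, mul_zero] at hEq
        have h1 : 0 < η * xβ * (M - h / η) := by
          refine mul_pos (by positivity) ?_
          rw [← hL2]; linarith
        linarith
      have hs2 : 0 < a ^ 2 - αh * β := by
        nlinarith [sq_nonneg (αh / 2 * M - a)]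
      set s := Real.sqrt (a ^ 2 - αh * β) with hsdef
      have hs : s ^ 2 = a ^ 2 - αh * β := Real.sq_sqrt hs2.le
      have hspos : 0 < s := Real.sqrt_pos.mpr hs2
      set vm := 2 * (a - s) / αh with hvm
      set vp := 2 * (a + s) / αh with hvpd
      have hfact : ∀ t : ℝ, β + αh / 4 * t ^ 2 - a * t = αh / 4 * (t - vm) * (t - vp) := by
        intro t
        rw [hvm, hvpd]
        field_simp
        nlinarith [hs]
      have hvmvp : vm < vp := by
        rw [hvm, hvpd, div_lt_div_iff₀ hαh hαh]
        nlinarith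
      have hMvp : M < vp := by
        have h1 := hfact M
        by_contra hcon2
        push_neg at hcon2
        nlinarith [mul_nonneg (show (0:ℝ) ≤ M - vm by linarith)
          (show (0:ℝ) ≤ M - vp by linarith)]
      have hQL : β + αh / 4 * L ^ 2 - a * L ≤ 0 := by
        have hQcont : Continuous (fun t : ℝ => β + αh / 4 * t ^ 2 - a * t) := by continuity
        have htend : Tendsto (fun y => β + αh / 4 * (v y) ^ 2 - a * v y) atTop
            (𝓝 (β + αh / 4 * L ^ 2 - a * L)) := (hQcont.tendsto L).comp hvL
        refine le_of_tendsto htend ?_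
        filter_upwards [eventually_ge_atTop xβ] with y hy
        have hEq := heq y (hx0.trans hy)
        have h1 : 0 ≤ η * y * (v y - h / η) := by
          refine mul_nonneg (mul_nonneg hη.le (hx0.trans hy)) ?_
          rw [← hL2]; linarith [hLle y hy]
        have h2 : σ ^ 2 / 2 * v' y ≤ 0 :=
          mul_nonpos_of_nonneg_of_nonpos hσ2.le (hvp y hy)
        linarith
      have hvmL : vm ≤ L := by
        have h1 := hfact L
        by_contra hcon2
        push_neg at hcon2
        nlinarith [mul_pos (show (0:ℝ) < vm - L by linarith)
          (show (0:ℝ) < vp - L by linarith)]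
      have hrvm : -r < vm := by
        have h1 := hfact (-r)
        by_contra hcon2
        push_neg at hcon2
        nlinarith [mul_nonneg (show (0:ℝ) ≤ -r - vm by linarith)
          (show (0:ℝ) ≤ vp + r by nlinarith)]
      -- IVT: find y₀ with v y₀ = vm
      have hivt : vm ∈ v '' Set.Icc 0 xβ := by
        apply intermediate_value_Icc hx0 (hcont.mono Set.Icc_subset_Ici_self)
        constructor
        · rw [hv0]; linarith
        · rw [← hM]; linarith
      obtain ⟨y₀, hy₀mem, hy₀⟩ := hivt
      have hy₀pos : 0 < y₀ := by
        rcases lt_or_eq_of_le hy₀mem.1 with h1 | h1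
        · exact h1
        · exfalso; rw [← h1, hv0] at hy₀; linarith
      have hv'y₀ : 0 ≤ v' y₀ := by
        rcases lt_or_eq_of_le hy₀mem.2 with h1 | h1
        · exact aux_deriv_nonneg_right h1
            ((hderiv y₀ hy₀mem.1).mono (fun z hz => Set.mem_Ici.mpr (hy₀mem.1.trans hz.1)))
            (hmono.mono (Set.Icc_subset_Icc hy₀mem.1 le_rfl))
        · rw [h1, hv'xβ]
      have hvmeq : vm = L := by
        have hEq := heq y₀ hy₀mem.1
        rw [hy₀] at hEq
        have hQvm : β + αh / 4 * vm ^ 2 - a * vm = 0 := by rw [hfact]; ring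
        have h1 : 0 ≤ σ ^ 2 / 2 * v' y₀ := mul_nonneg hσ2.le hv'y₀
        by_contra hne
        have h3 : vm < L := lt_of_le_of_ne hvmL hne
        have h4 : η * y₀ * (vm - h / η) < 0 :=
          mul_neg_of_pos_of_neg (mul_pos hη hy₀pos) (by rw [← hL2]; linarith)
        linarith
      -- final contradiction
      set y1 := max xβ ((αh / 4 * (vp - L) + 1) / η) with hy1
      have hy1xβ : xβ ≤ y1 := le_max_left _ _
      have hy1nn : (0:ℝ) ≤ y1 := hx0.trans hy1xβ
      have hEq := heq y1 hy1nn
      have hB : αh / 4 * (vp - L) + 1 ≤ η * y1 := by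
        have h7 : (αh / 4 * (vp - L) + 1) / η ≤ y1 := le_max_right _ _
        calc αh / 4 * (vp - L) + 1 = ((αh / 4 * (vp - L) + 1) / η) * η := (div_mul_cancel₀ _ hη.ne').symm
          _ ≤ y1 * η := mul_le_mul_of_nonneg_right h7 hη.le
          _ = η * y1 := by ring
      have hEq' : σ ^ 2 / 2 * v' y1 = (v y1 - L) * (αh / 4 * (v y1 - vp) + η * y1) := by
        have h8 := hfact (v y1)
        rw [hvmeq] at h8
        linear_combination hEq + h8 + η * y1 * hL2
      have hbr : 0 < αh / 4 * (v y1 - vp) + η * y1 := by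
        have h12 := hLle y1 hy1xβ
        nlinarith [hB]
      have h9 : 0 < (v y1 - L) * (αh / 4 * (v y1 - vp) + η * y1) :=
        mul_pos (sub_pos.mpr (hLlt y1 hy1xβ)) hbr
      have h10 : σ ^ 2 / 2 * v' y1 ≤ 0 :=
        mul_nonpos_of_nonneg_of_nonpos hσ2.le (hvp y1 hy1xβ)
      linarith
    · -- h/η < L : derivative eventually positive, contradiction
      set δ := L - h / η with hδ
      have hδpos : 0 < δ := by simp only [hδ]; linarith
      set y0 := max xβ ((|a| * (|L| + |M|) - β + 1) / (η * δ)) with hy0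
      clear_value δ y0
      have hy0xβ : xβ ≤ y0 := hy0 ▸ le_max_left _ _
      have hy0nn : (0:ℝ) ≤ y0 := hx0.trans hy0xβ
      have hEq := heq y0 hy0nn
      have h1 : |a| * (|L| + |M|) - β + 1 ≤ η * δ * y0 := by
        have h7 : (|a| * (|L| + |M|) - β + 1) / (η * δ) ≤ y0 := hy0 ▸ le_max_right _ _
        have h8 : 0 < η * δ := by positivity
        calc |a| * (|L| + |M|) - β + 1
            = ((|a| * (|L| + |M|) - β + 1) / (η * δ)) * (η * δ) := (div_mul_cancel₀ _ h8.ne').symm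
          _ ≤ y0 * (η * δ) := mul_le_mul_of_nonneg_right h7 h8.le
          _ = η * δ * y0 := by ring
      have h2 : η * y0 * (v y0 - h / η) ≥ η * δ * y0 := by
        have h3 : δ ≤ v y0 - h / η := by
          have := hLle y0 hy0xβ; simp only [hδ]; linarith
        have h4 : 0 ≤ η * y0 := by positivity
        nlinarith
      have h5 : a * v y0 ≤ |a| * (|L| + |M|) := by
        have h11 := habs y0 hy0xβ
        linarith [le_abs_self (a * v y0)]
      have h6 : 0 < σ ^ 2 / 2 * v' y0 := by
        have hq : 0 ≤ αh / 4 * (v y0) ^ 2 := by positivity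
        rw [hEq]
        linarith [h1, h2, h5, hq]
      have h7 := hvp y0 hy0xβ
      linarith [mul_nonpos_of_nonneg_of_nonpos hσ2.le h7]
  -- conclude
  rw [tendsto_atBot]
  intro b
  obtain ⟨y, hy, hvy⟩ := key b
  filter_upwards [eventually_ge_atTop y] with z hz
  calc v z ≤ v y := hanti.antitoneOn (Set.mem_Ici.mpr hy) (Set.mem_Ici.mpr (hy.trans hz)) hz
    _ ≤ b := hvy
end
end

section
/- Suppose the parameters are in Case 1 or Case 2. Then lim_{x→∞} v_β(x) = ∞ if and only if there exists x₀ > 0 such that v_β(x₀) > h/η. -/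
open Set Filter

noncomputable section

/-- In Case 1 or Case 2, `v_β(x) → ∞` as `x → ∞` iff `v_β(x₀) > h/η` for some `x₀ > 0`. -/
theorem stmt_10 (σ η αh h r a β : ℝ) (hσ : 0 < σ) (hη : 0 < η) (hαh : 0 < αh)
    (hh : 0 < h) (hr : 0 < r)
    (hcase : (-(αh / 4) * r < a ∧ 0 ≤ β) ∨
      (a ≤ -(αh / 4) * r ∧ -a * r - αh / 4 * r ^ 2 < β))
    (v v' : ℝ → ℝ) (hIVP : IsIVP σ η αh h r a β v v') :
    Tendsto v atTop atTop ↔ ∃ x₀ : ℝ, 0 < x₀ ∧ h / η < v x₀ := by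
  obtain ⟨hv'cont, hderiv, hode, hv0⟩ := hIVP
  constructor
  · intro hT
    obtain ⟨y, hy1, hy2⟩ :=
      ((hT.eventually (eventually_gt_atTop (h / η))).and (eventually_gt_atTop 0)).exists
    exact ⟨y, hy2, hy1⟩
  rintro ⟨x₀, hx₀, hvx₀⟩
  have hσ0 : σ ≠ 0 := hσ.ne'
  have hη0 : η ≠ 0 := hη.ne'
  have hσ2 : (0:ℝ) < 2 / σ ^ 2 := by positivity
  have hhη : 0 < h / η := div_pos hh hη
  have hvcont : ContinuousOn v (Set.Ici 0) := fun y hy => (hderiv y hy).continuousWithinAt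
  set c₀ : ℝ := β + αh / 4 * (h / η) ^ 2 - a * (h / η) with hc₀def
  -- coefficient function, extended continuously to all of ℝ
  set q : ℝ → ℝ := fun y => 2 / σ ^ 2 * (αh / 4 * (v (max y 0) + h / η) + η * y - a)
    with hqdef
  have hvmax : Continuous fun y : ℝ => v (max y 0) :=
    hvcont.comp_continuous (continuous_id.max continuous_const) fun y => le_max_right y 0
  have hqcont : Continuous q := by
    apply continuous_const.mul
    exact ((continuous_const.mul (hvmax.add continuous_const)).add
      (continuous_const.mul continuous_id)).sub continuous_const
  set P : ℝ → ℝ := fun y => ∫ t in (0:ℝ)..y, q t with hPdef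
  have hP : ∀ y, HasDerivAt P (q y) y := fun y =>
    (hqcont.integral_hasStrictDerivAt 0 y).hasDerivAt
  have hPcont : Continuous P :=
    continuous_iff_continuousAt.2 fun y => (hP y).differentiableAt.continuousAt
  -- the key rewritten form of the ODE
  have key : ∀ y ∈ Set.Ici (0:ℝ), v' y = q y * (v y - h / η) + 2 / σ ^ 2 * c₀ := by
    intro y hy
    have hode' := hode y hy
    have hmax : max y 0 = y := max_eq_left hy
    have h2 : v' y = 2 / σ ^ 2 *
        (β + αh / 4 * (v y) ^ 2 + η * y * (v y - h / η) - a * v y) := by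
      field_simp at hode' ⊢; linarith
    rw [hqdef, hc₀def]; simp only [hmax]
    rw [h2]; field_simp; ring
  -- u := (v - h/η) * exp (-P) has derivative (2/σ²)·c₀·exp(-P) within Ici 0
  set u : ℝ → ℝ := fun y => (v y - h / η) * Real.exp (-P y) with hudef
  have hu : ∀ y ∈ Set.Ici (0:ℝ),
      HasDerivWithinAt u (2 / σ ^ 2 * c₀ * Real.exp (-P y)) (Set.Ici 0) y := by
    intro y hy
    have hd1 : HasDerivWithinAt (fun z => v z - h / η) (v' y) (Set.Ici 0) y :=
      (hderiv y hy).sub_const _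
    have hd2 : HasDerivWithinAt (fun z => Real.exp (-P z))
        (Real.exp (-P y) * -q y) (Set.Ici 0) y :=
      (((hP y).neg).exp).hasDerivWithinAt
    have := hd1.mul hd2
    exact this.congr_deriv (by rw [key y hy]; ring)
  have hucont : ContinuousOn u (Set.Ici 0) :=
    (hvcont.sub continuousOn_const).mul (hPcont.neg.rexp).continuousOn
  have hIciInt : interior (Set.Ici (0:ℝ)) = Set.Ioi 0 := interior_Ici
  have huIoi : ∀ y ∈ interior (Set.Ici (0:ℝ)),
      HasDerivWithinAt u (2 / σ ^ 2 * c₀ * Real.exp (-P y)) (interior (Set.Ici (0:ℝ))) y := by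
    intro y hy
    exact (hu y (interior_subset hy)).mono interior_subset
  have hP0 : P 0 = 0 := intervalIntegral.integral_same
  have hu0 : u 0 < 0 := by
    simp only [hudef, hv0, hP0, neg_zero, Real.exp_zero, mul_one]
    linarith
  have hux₀ : 0 < u x₀ := by
    have := Real.exp_pos (-P x₀)
    simp only [hudef]; nlinarith
  -- step A : c₀ ≥ 0
  have hc₀ : 0 ≤ c₀ := by
    by_contra hc
    push_neg at hc
    have hanti : AntitoneOn u (Set.Ici 0) := by
      apply antitoneOn_of_hasDerivWithinAt_nonpos (convex_Ici 0) hucont huIoi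
      intro y _
      have h1 : 2 / σ ^ 2 * c₀ < 0 := mul_neg_of_pos_of_neg hσ2 hc
      exact (mul_neg_of_neg_of_pos h1 (Real.exp_pos (-P y))).le
    have := hanti self_mem_Ici hx₀.le hx₀.le
    linarith
  -- step B : u is monotone, so v > h/η on [x₀, ∞)
  have hmono : MonotoneOn u (Set.Ici 0) := by
    apply monotoneOn_of_hasDerivWithinAt_nonneg (convex_Ici 0) hucont huIoi
    intro y _
    have := (Real.exp_pos (-P y)).le
    positivity
  have hvgt : ∀ y, x₀ ≤ y → h / η < v y := by
    intro y hy
    have h0y : (0:ℝ) ≤ y := hx₀.le.trans hy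
    have h1 : u x₀ ≤ u y := hmono hx₀.le h0y hy
    have h2 : 0 < (v y - h / η) * Real.exp (-P y) := lt_of_lt_of_le hux₀ h1
    have h3 := Real.exp_pos (-P y)
    by_contra hle
    push_neg at hle
    nlinarith
  -- step C : linear growth
  set y₂ : ℝ := max x₀ ((a + 1) / η) with hy₂def
  have hx₀y₂ : x₀ ≤ y₂ := le_max_left _ _
  have h0y₂ : 0 < y₂ := lt_of_lt_of_le hx₀ hx₀y₂
  have hq_lb : ∀ y, y₂ ≤ y → 2 / σ ^ 2 ≤ q y := by
    intro y hy
    have hxy : x₀ ≤ y := hx₀y₂.trans hy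
    have h0 : (0:ℝ) ≤ y := (h0y₂.trans_le hy).le
    have hmax : max y 0 = y := max_eq_left h0
    have hva : h / η < v y := hvgt y hxy
    have hηy : a + 1 ≤ η * y := by
      have h1 : (a + 1) / η ≤ y := (le_max_right _ _).trans hy
      calc a + 1 = (a + 1) / η * η := by field_simp
        _ ≤ y * η := mul_le_mul_of_nonneg_right h1 hη.le
        _ = η * y := mul_comm _ _
    have hinner : (1:ℝ) ≤ αh / 4 * (v y + h / η) + η * y - a := by nlinarith
    calc 2 / σ ^ 2 = 2 / σ ^ 2 * 1 := (mul_one _).symm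
      _ ≤ q y := by
          simp only [hqdef, hmax]
          exact mul_le_mul_of_nonneg_left hinner hσ2.le
  have hsub : interior (Set.Ici y₂) ⊆ Set.Ici 0 := by
    rw [interior_Ici]
    exact fun z hz => (h0y₂.trans hz).le
  have hvmono : MonotoneOn v (Set.Ici y₂) := by
    apply monotoneOn_of_hasDerivWithinAt_nonneg (convex_Ici y₂)
      (hvcont.mono (Ici_subset_Ici.2 h0y₂.le))
      (fun y hy => (hderiv y (hsub hy)).mono hsub)
    intro y hy
    have hy' : y₂ ≤ y := le_of_lt (by rwa [interior_Ici] at hy)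
    rw [key y (hsub hy)]
    have h1 : 0 ≤ q y := le_trans hσ2.le (hq_lb y hy')
    have h2 : 0 ≤ v y - h / η := by linarith [hvgt y (hx₀y₂.trans hy')]
    exact add_nonneg (mul_nonneg h1 h2) (mul_nonneg hσ2.le hc₀)
  set δ : ℝ := v y₂ - h / η with hδdef
  have hδ : 0 < δ := by
    have := hvgt y₂ hx₀y₂
    simp only [hδdef]; linarith
  set ε : ℝ := 2 / σ ^ 2 * δ with hεdef
  have hε : 0 < ε := mul_pos hσ2 hδ
  -- v' y ≥ ε on [y₂, ∞)
  have hlin : ∀ y, y₂ ≤ y → v y₂ + ε * (y - y₂) ≤ v y := by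
    intro y hy
    set g : ℝ → ℝ := fun z => v z - ε * z with hgdef
    have hgmono : MonotoneOn g (Set.Ici y₂) := by
      apply monotoneOn_of_hasDerivWithinAt_nonneg (convex_Ici y₂)
        ((hvcont.mono (Ici_subset_Ici.2 h0y₂.le)).sub (continuousOn_const.mul continuousOn_id))
        (f' := fun z => v' z - ε)
      · intro z hz
        exact ((hderiv z (hsub hz)).mono hsub).sub
          (((hasDerivAt_id z).const_mul ε).hasDerivWithinAt.congr_deriv (by ring))
      · intro z hz
        have hz' : y₂ ≤ z := le_of_lt (by rwa [interior_Ici] at hz)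
        have h1 : 2 / σ ^ 2 ≤ q z := hq_lb z hz'
        have h2 : δ ≤ v z - h / η := by
          have := hvmono (self_mem_Ici) hz' hz'
          simp only [hδdef]; linarith
        have h3 : 2 / σ ^ 2 * δ ≤ q z * (v z - h / η) :=
          mul_le_mul h1 h2 hδ.le (hσ2.le.trans h1)
        have h4 : 0 ≤ 2 / σ ^ 2 * c₀ := mul_nonneg hσ2.le hc₀
        rw [key z (hsub hz)]
        simp only [hεdef]
        linarith
    have := hgmono self_mem_Ici hy hy
    simp only [hgdef] at this
    linarith
  have hb : Tendsto (fun y : ℝ => (v y₂ - ε * y₂) + ε * y) atTop atTop :=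
    tendsto_atTop_add_const_left _ _ (tendsto_id.const_mul_atTop hε)
  refine tendsto_atTop_mono' atTop ?_ hb
  filter_upwards [eventually_ge_atTop y₂] with y hy
  have h1 := hlin y hy
  have h2 : v y₂ + ε * (y - y₂) = (v y₂ - ε * y₂) + ε * y := by ring
  linarith
end
end

section
/- For 0 ≤ β₁ < β₂, the solutions of IVP(β₁) and IVP(β₂) satisfy v_{β₁}(x) < v_{β₂}(x) for all x > 0; that is, for each fixed x > 0 the map β ↦ v_β(x) is strictly increasing on [0,∞). -/
open Set Filter

noncomputable section

/-- For `0 ≤ β₁ < β₂`, the solutions satisfy `v_{β₁}(x) < v_{β₂}(x)` for all `x > 0`: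
`β ↦ v_β(x)` is strictly increasing. -/
theorem stmt_11 (σ η αh h r a : ℝ) (hσ : 0 < σ) (hη : 0 < η) (hαh : 0 < αh)
    (hh : 0 < h) (hr : 0 < r)
    (β₁ β₂ : ℝ) (hβ₁ : 0 ≤ β₁) (hβ₁₂ : β₁ < β₂)
    (v₁ v₁' v₂ v₂' : ℝ → ℝ)
    (hIVP₁ : IsIVP σ η αh h r a β₁ v₁ v₁')
    (hIVP₂ : IsIVP σ η αh h r a β₂ v₂ v₂') :
    ∀ x : ℝ, 0 < x → v₁ x < v₂ x := by
  obtain ⟨hc₁, hd₁, he₁, hi₁⟩ := hIVP₁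
  obtain ⟨hc₂, hd₂, he₂, hi₂⟩ := hIVP₂
  have hσ2 : (0:ℝ) < σ ^ 2 / 2 := by positivity
  set c : ℝ := (β₂ - β₁) / (σ ^ 2 / 2) with hcdef
  have hcpos : 0 < c := div_pos (by linarith) hσ2
  have hcv₁ : ContinuousOn v₁ (Ici 0) := fun y hy => (hd₁ y hy).continuousWithinAt
  have hcv₂ : ContinuousOn v₂ (Ici 0) := fun y hy => (hd₂ y hy).continuousWithinAt
  set g : ℝ → ℝ :=
    fun y => (αh / 4 * (v₁ (max y 0) + v₂ (max y 0)) + η * y - a) / (σ ^ 2 / 2) with hgdef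
  have hmaxmem : ∀ y : ℝ, max y 0 ∈ Ici (0:ℝ) := fun y => le_max_right y 0
  have hgc : Continuous g := by
    apply Continuous.div_const
    apply Continuous.sub _ continuous_const
    apply Continuous.add _ (continuous_const.mul continuous_id)
    apply Continuous.mul continuous_const
    exact ((hcv₁.add hcv₂).comp_continuous (continuous_id.max continuous_const) hmaxmem)
  set w : ℝ → ℝ := fun y => v₂ y - v₁ y with hwdef
  set G : ℝ → ℝ := fun y => ∫ t in (0:ℝ)..y, g t with hGdef
  have hG : ∀ y : ℝ, HasDerivAt G (g y) y := fun y =>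
    (hgc.integral_hasStrictDerivAt 0 y).hasDerivAt
  -- the ODE for w
  have hw' : ∀ y ∈ Ici (0:ℝ), v₂' y - v₁' y = c + g y * w y := by
    intro y hy
    have h1 := he₁ y hy
    have h2 := he₂ y hy
    have hmax : max y 0 = y := max_eq_left hy
    have hne : σ ^ 2 / 2 ≠ 0 := ne_of_gt hσ2
    rw [hcdef, hgdef, hwdef]
    simp only [hmax]
    field_simp
    nlinarith [h1, h2]
  -- the auxiliary function u = w * exp(-G)
  set u : ℝ → ℝ := fun y => w y * Real.exp (-G y) with hudef
  have hexp : ∀ y : ℝ, HasDerivAt (fun z => Real.exp (-G z))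
      (Real.exp (-G y) * -g y) y := fun y => ((hG y).neg).exp
  have hu' : ∀ y ∈ Ici (0:ℝ), HasDerivWithinAt u (c * Real.exp (-G y)) (Ici 0) y := by
    intro y hy
    have hdw : HasDerivWithinAt w (v₂' y - v₁' y) (Ici 0) y := (hd₂ y hy).sub (hd₁ y hy)
    have := hdw.mul ((hexp y).hasDerivWithinAt)
    refine this.congr_deriv ?_
    rw [hw' y hy]
    ring
  have huc : ContinuousOn u (Ici 0) :=
    (hcv₂.sub hcv₁).mul
      ((Real.continuous_exp.comp
        ((continuous_iff_continuousAt.mpr (fun y => (hG y).continuousAt)).neg)).continuousOn)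
  have hmono : StrictMonoOn u (Ici 0) := by
    apply strictMonoOn_of_deriv_pos (convex_Ici 0) huc
    intro y hy
    rw [interior_Ici] at hy
    have hda : HasDerivAt u (c * Real.exp (-G y)) y :=
      (hu' y (Set.mem_Ici.mpr (le_of_lt hy))).hasDerivAt (Ici_mem_nhds hy)
    rw [hda.deriv]
    positivity
  intro x hx
  have h0 : u 0 = 0 := by
    simp only [hudef, hwdef, hi₁, hi₂]
    ring
  have := hmono (self_mem_Ici) (le_of_lt hx : (0:ℝ) ≤ x) hx
  rw [h0] at this
  simp only [hudef, hwdef] at this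
  have hexppos : 0 < Real.exp (-G x) := Real.exp_pos _
  nlinarith [this]
end
end

section
/- In Case 1 (a > −(α̂/4)·r), the set 𝓓 is nonempty: 0 ∈ 𝓓, and moreover there exists β̃₁ > 0 such that [0, β̃₁] ⊆ 𝓓. In Case 2 (a ≤ −(α̂/4)·r), there exists β̃₂ > β̲₂ such that (β̲₂, β̃₂] ⊆ 𝓓. -/
open Set Filter

noncomputable section

/-- `β ∈ 𝓓`: every solution of IVP(β) is nondecreasing on `[0, x_β]` and
strictly decreasing on `[x_β, ∞)` for some `x_β ≥ 0`. -/
def MemD (σ η αh h r a β : ℝ) : Prop :=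
  ∀ v v' : ℝ → ℝ, IsIVP σ η αh h r a β v v' →
    ∃ xβ, 0 ≤ xβ ∧ MonotoneOn v (Set.Icc 0 xβ) ∧ StrictAntiOn v (Set.Ici xβ)

/-- `β ∈ 𝓘`: every solution of IVP(β) is nondecreasing on `[0, ∞)`. -/
def MemI (σ η αh h r a β : ℝ) : Prop :=
  ∀ v v' : ℝ → ℝ, IsIVP σ η αh h r a β v v' → MonotoneOn v (Set.Ici 0)

namespace Stmt14Aux


/-- From a negative derivative at `x₀`, find a point to the left with bigger value. -/
lemma exists_left_gt {f : ℝ → ℝ} {d x₀ : ℝ} (hd : HasDerivAt f d x₀) (hneg : d < 0)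
    {P : ℝ → Prop} (hP : ∀ᶠ s in nhds x₀, P s) :
    ∃ s, s < x₀ ∧ f x₀ < f s ∧ P s := by
  have hs := hasDerivAt_iff_tendsto_slope.1 hd
  have hmono : nhdsWithin x₀ (Iio x₀) ≤ nhdsWithin x₀ {x₀}ᶜ :=
    nhdsWithin_mono x₀ (fun s hs => ne_of_lt hs)
  have h1 : ∀ᶠ s in nhdsWithin x₀ (Iio x₀), slope f x₀ s < 0 :=
    (hs.mono_left hmono).eventually_lt_const hneg
  have h2 : ∀ᶠ s in nhdsWithin x₀ (Iio x₀), P s :=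
    eventually_nhdsWithin_of_eventually_nhds hP
  have h3 : ∀ᶠ s in nhdsWithin x₀ (Iio x₀), s ∈ Iio x₀ := self_mem_nhdsWithin
  obtain ⟨s, hs1, hs2, hs3⟩ := (h1.and (h2.and h3)).exists
  refine ⟨s, hs3, ?_, hs2⟩
  have hden : s - x₀ < 0 := sub_neg.2 hs3
  have := div_neg_iff.1 (by simpa [slope_def_field, div_eq_iff (ne_of_lt hden)] using hs1)
  rcases this with ⟨h, h'⟩ | ⟨h, h'⟩
  · linarith
  · linarith

/-- From a positive derivative at `x₀`, find a point to the right with bigger value. -/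
lemma exists_right_gt {f : ℝ → ℝ} {d x₀ : ℝ} (hd : HasDerivAt f d x₀) (hpos : 0 < d)
    {P : ℝ → Prop} (hP : ∀ᶠ s in nhds x₀, P s) :
    ∃ s, x₀ < s ∧ f x₀ < f s ∧ P s := by
  have hs := hasDerivAt_iff_tendsto_slope.1 hd
  have hmono : nhdsWithin x₀ (Ioi x₀) ≤ nhdsWithin x₀ {x₀}ᶜ :=
    nhdsWithin_mono x₀ (fun s hs => (ne_of_gt hs))
  have h1 : ∀ᶠ s in nhdsWithin x₀ (Ioi x₀), 0 < slope f x₀ s :=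
    (hs.mono_left hmono).eventually_const_lt hpos
  have h2 : ∀ᶠ s in nhdsWithin x₀ (Ioi x₀), P s :=
    eventually_nhdsWithin_of_eventually_nhds hP
  have h3 : ∀ᶠ s in nhdsWithin x₀ (Ioi x₀), s ∈ Ioi x₀ := self_mem_nhdsWithin
  obtain ⟨s, hs1, hs2, hs3⟩ := (h1.and (h2.and h3)).exists
  refine ⟨s, hs3, ?_, hs2⟩
  have hden : 0 < s - x₀ := sub_pos.2 hs3
  have hsl : 0 < (f s - f x₀) / (s - x₀) := by simpa [slope_def_field] using hs1
  rcases div_pos_iff.1 hsl with ⟨h, h'⟩ | ⟨h, h'⟩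
  · linarith
  · linarith

lemma myAntitoneOnIcc {f f' : ℝ → ℝ} {A B : ℝ}
    (hcont : ContinuousOn f (Icc A B))
    (hder : ∀ x ∈ Ioo A B, HasDerivAt f (f' x) x)
    (hle : ∀ x ∈ Ioo A B, f' x ≤ 0) : AntitoneOn f (Icc A B) := by
  apply antitoneOn_of_deriv_nonpos (convex_Icc A B) hcont
  · rw [interior_Icc]
    exact fun x hx => (hder x hx).differentiableAt.differentiableWithinAt
  · rw [interior_Icc]
    intro x hx
    rw [(hder x hx).deriv]
    exact hle x hx

lemma myMonotoneOnIcc {f f' : ℝ → ℝ} {A B : ℝ}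
    (hcont : ContinuousOn f (Icc A B))
    (hder : ∀ x ∈ Ioo A B, HasDerivAt f (f' x) x)
    (hle : ∀ x ∈ Ioo A B, 0 ≤ f' x) : MonotoneOn f (Icc A B) := by
  apply monotoneOn_of_deriv_nonneg (convex_Icc A B) hcont
  · rw [interior_Icc]
    exact fun x hx => (hder x hx).differentiableAt.differentiableWithinAt
  · rw [interior_Icc]
    intro x hx
    rw [(hder x hx).deriv]
    exact hle x hx

lemma myMonotoneOnIci {f f' : ℝ → ℝ} {A : ℝ}
    (hcont : ContinuousOn f (Ici A))
    (hder : ∀ x ∈ Ioi A, HasDerivAt f (f' x) x)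
    (hle : ∀ x ∈ Ioi A, 0 ≤ f' x) : MonotoneOn f (Ici A) := by
  apply monotoneOn_of_deriv_nonneg (convex_Ici A) hcont
  · rw [interior_Ici]
    exact fun x hx => (hder x hx).differentiableAt.differentiableWithinAt
  · rw [interior_Ici]
    intro x hx
    rw [(hder x hx).deriv]
    exact hle x hx



variable {σ η αh h r a β : ℝ} {v v' : ℝ → ℝ}

lemma contOn_v (hivp : IsIVP σ η αh h r a β v v') : ContinuousOn v (Ici 0) :=
  fun y hy => ((hivp.2.1 y hy).continuousWithinAt)

lemma hasDerivAt_v (hivp : IsIVP σ η αh h r a β v v') {x : ℝ} (hx : 0 < x) :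
    HasDerivAt v (v' x) x :=
  (hivp.2.1 x hx.le).hasDerivAt (Ici_mem_nhds hx)

lemma hEq_of (hσ : 0 < σ) (hivp : IsIVP σ η αh h r a β v v') :
    ∀ y ∈ Ici (0:ℝ),
      v' y = 2/σ^2 * (β + αh/4*(v y)^2 + η*y*(v y - h/η) - a*(v y)) := by
  intro y hy
  have h2 := hivp.2.2.1 y hy
  have hσ2 : σ^2 ≠ 0 := by positivity
  field_simp
  linarith [h2]

lemma hasDerivAt_v' (hσ : 0 < σ) (hη : 0 < η) (hivp : IsIVP σ η αh h r a β v v') {x : ℝ} (hx : 0 < x) :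
    HasDerivAt v'
      (2/σ^2 * (η * v x - h + (αh/2 * v x + η*x - a) * v' x)) x := by
  have hvx := hasDerivAt_v hivp hx
  have hη0 : True := trivial
  have hsq : HasDerivAt (fun y => (v y)^2) (2*(v x)*(v' x)) x := by
    simpa [mul_comm, mul_assoc] using hvx.fun_pow 2
  have hlin : HasDerivAt (fun y : ℝ => η*y) η x := by
    simpa using (hasDerivAt_id x).const_mul η
  have hsub : HasDerivAt (fun y => v y - h/η) (v' x) x := hvx.sub_const _
  have hmul : HasDerivAt (fun y => (η*y)*(v y - h/η)) (η*(v x - h/η) + (η*x)*(v' x)) x :=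
    hlin.mul hsub
  have hbig : HasDerivAt
      (fun y => 2/σ^2 * (β + αh/4*(v y)^2 + η*y*(v y - h/η) - a*(v y)))
      (2/σ^2 * ((αh/4*(2*(v x)*(v' x)) + (η*(v x - h/η) + (η*x)*(v' x))) - a*(v' x))) x := by
    exact ((((hsq.const_mul (αh/4)).const_add β).add hmul).sub (hvx.const_mul a)).const_mul (2/σ^2)
  have heq : v' =ᶠ[nhds x] (fun y => 2/σ^2 * (β + αh/4*(v y)^2 + η*y*(v y - h/η) - a*(v y))) :=
    eventuallyEq_of_mem (Ici_mem_nhds hx) (fun y hy => hEq_of hσ hivp y hy)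
  have := hbig.congr_of_eventuallyEq heq
  refine this.congr_deriv ?_
  have hηne : η ≠ 0 := ne_of_gt hη
  field_simp
  ring


/-- Barrier lemma: if `K ≤ 0` then the solution stays strictly below `h/η`. -/
lemma barrier (hσ : 0 < σ) (hη : 0 < η) (hh : 0 < h) (hr : 0 < r)
    (hivp : IsIVP σ η αh h r a β v v')
    (hK : β + αh/4*(h/η)^2 - a*(h/η) ≤ 0) :
    ∀ y ∈ Ici (0:ℝ), v y < h/η := by
  by_contra hcon
  push_neg at hcon
  obtain ⟨y₁, hy₁, hvy₁⟩ := hcon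
  have hvc : ContinuousOn v (Ici 0) := contOn_v hivp
  have hv0 : v 0 = -r := hivp.2.2.2
  have hv0lt : v 0 < h/η := by
    have hpos : 0 < h/η := by positivity
    rw [hv0]; linarith
  set S := Icc (0:ℝ) y₁ ∩ v ⁻¹' (Ici (h/η)) with hS
  have hclosed : IsClosed S :=
    ContinuousOn.preimage_isClosed_of_isClosed
      (hvc.mono (Icc_subset_Ici_self)) isClosed_Icc isClosed_Ici
  have hne : S.Nonempty := ⟨y₁, ⟨⟨hy₁, le_rfl⟩, hvy₁⟩⟩
  have hbdd : BddBelow S := ⟨0, fun s hs => hs.1.1⟩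
  set s₀ := sInf S with hs₀
  have hs₀S : s₀ ∈ S := hclosed.csInf_mem hne hbdd
  have hs₀0 : 0 ≤ s₀ := hs₀S.1.1
  have h0S : (0:ℝ) ∉ S := fun h0 => absurd h0.2 (by simpa using not_le.2 hv0lt)
  have hs₀pos : 0 < s₀ := hs₀0.lt_of_ne (fun he => h0S (he ▸ hs₀S))
  have hlt : ∀ s, 0 ≤ s → s < s₀ → v s < h/η := by
    intro s h1 h2
    by_contra hge
    push_neg at hge
    exact absurd (csInf_le hbdd ⟨⟨h1, h2.le.trans hs₀S.1.2⟩, hge⟩) (not_le.2 h2)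
  -- integrating factor
  have hIcc : Icc (0:ℝ) s₀ ⊆ Ici 0 := Icc_subset_Ici_self
  obtain ⟨C, hC⟩ := (isCompact_Icc (a := (0:ℝ)) (b := s₀)).exists_bound_of_continuousOn
    (f := fun y => 2/σ^2 * (αh/2*(h/η) - a + αh/4*(v y - h/η) + η*y))
    (continuousOn_const.mul ((continuousOn_const.add
        (continuousOn_const.mul ((hvc.mono hIcc).sub continuousOn_const))).add
        (continuous_const.mul continuous_id).continuousOn))
  have hC0 : 0 ≤ C := le_trans (norm_nonneg _) (hC 0 ⟨le_rfl, hs₀0⟩)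
  set E := fun y => (v y - h/η) * Real.exp (C * y) with hE
  have hEcont : ContinuousOn E (Icc 0 s₀) :=
    ((hvc.mono hIcc).sub continuousOn_const).mul
      ((Real.continuous_exp.comp (continuous_const.mul continuous_id)).continuousOn)
  have hEder : ∀ x ∈ Ioo (0:ℝ) s₀,
      HasDerivAt E (v' x * Real.exp (C*x) + (v x - h/η) * (Real.exp (C*x) * C)) x := by
    intro x hx
    have hvx := hasDerivAt_v hivp hx.1
    have hexp : HasDerivAt (fun y => Real.exp (C * y)) (Real.exp (C*x) * C) x := by
      have h1 : HasDerivAt (fun y : ℝ => C * y) C x := by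
        simpa using (hasDerivAt_id x).const_mul C
      exact h1.exp
    exact (hvx.sub_const (h/η)).mul hexp
  have hEle : ∀ x ∈ Ioo (0:ℝ) s₀,
      v' x * Real.exp (C*x) + (v x - h/η) * (Real.exp (C*x) * C) ≤ 0 := by
    intro x hx
    have hx0 : (0:ℝ) ≤ x := hx.1.le
    have hz : v x - h/η < 0 := sub_neg.2 (hlt x hx0 hx.2)
    have hveq := hEq_of hσ hivp x hx0
    have hPform : v' x = 2/σ^2 * (β + αh/4*(h/η)^2 - a*(h/η))
        + (2/σ^2 * (αh/2*(h/η) - a + αh/4*(v x - h/η) + η*x)) * (v x - h/η) := by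
      rw [hveq]
      have hηne : η ≠ 0 := ne_of_gt hη
      field_simp
      ring
    have hCb := hC x ⟨hx0, hx.2.le⟩
    rw [Real.norm_eq_abs, abs_le] at hCb
    have hKc : 2/σ^2 * (β + αh/4*(h/η)^2 - a*(h/η)) ≤ 0 := by
      have : (0:ℝ) < 2/σ^2 := by positivity
      exact mul_nonpos_of_nonneg_of_nonpos this.le hK
    have hterm : (2/σ^2 * (αh/2*(h/η) - a + αh/4*(v x - h/η) + η*x) + C) * (v x - h/η) ≤ 0 :=
      mul_nonpos_of_nonneg_of_nonpos (by linarith [hCb.1]) hz.le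
    have hsum : v' x + C * (v x - h/η) ≤ 0 := by nlinarith [hPform, hKc, hterm]
    have hexp0 : 0 < Real.exp (C*x) := Real.exp_pos _
    calc v' x * Real.exp (C*x) + (v x - h/η) * (Real.exp (C*x) * C)
        = (v' x + C * (v x - h/η)) * Real.exp (C*x) := by ring
      _ ≤ 0 := mul_nonpos_of_nonpos_of_nonneg hsum hexp0.le
  have hanti : AntitoneOn E (Icc 0 s₀) := myAntitoneOnIcc hEcont hEder hEle
  have h1 : E s₀ ≤ E 0 := hanti ⟨le_rfl, hs₀0⟩ ⟨hs₀0, le_rfl⟩ hs₀0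
  have hE0 : E 0 < 0 := by
    have hpos : 0 < h/η := by positivity
    simp only [hE, mul_zero, Real.exp_zero, mul_one, hv0]
    linarith
  have hEs : 0 ≤ E s₀ := by
    apply mul_nonneg _ (Real.exp_pos _).le
    have := hs₀S.2
    simpa [sub_nonneg] using this
  linarith


lemma exists_left_lt {f : ℝ → ℝ} {d x₀ : ℝ} (hd : HasDerivAt f d x₀) (hpos : 0 < d)
    {P : ℝ → Prop} (hP : ∀ᶠ s in nhds x₀, P s) :
    ∃ s, s < x₀ ∧ f s < f x₀ ∧ P s := by
  obtain ⟨s, h1, h2, h3⟩ := exists_left_gt hd.neg (by linarith) hP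
  refine ⟨s, h1, by simpa using h2, h3⟩

lemma quad_tendsto {A B C : ℝ} (hA : 0 < A) :
    Tendsto (fun x : ℝ => A*x^2 + B*x + C) atTop atTop := by
  have h1 : Tendsto (fun x : ℝ => A*x + B) atTop atTop :=
    tendsto_atTop_add_const_right _ B (tendsto_id.const_mul_atTop hA)
  have h2 : Tendsto (fun x : ℝ => x*(A*x + B)) atTop atTop :=
    tendsto_id.atTop_mul_atTop₀ h1
  have h3 : Tendsto (fun x : ℝ => x*(A*x + B) + C) atTop atTop :=
    tendsto_atTop_add_const_right _ C h2
  exact Tendsto.congr (fun x => by ring) h3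

set_option maxHeartbeats 1000000 in
/-- Blow-up lemma: the solution can never be strictly above `h/η` with positive slope. -/
lemma blowup (hσ : 0 < σ) (hη : 0 < η) (hαh : 0 < αh) (hh : 0 < h)
    (hivp : IsIVP σ η αh h r a β v v')
    {p : ℝ} (hp : 0 ≤ p) (hvp : h/η < v p) (hv'p : 0 < v' p) : False := by
  have hvc := contOn_v hivp
  have hv'c := hivp.1
  -- Step 1: v' stays positive on [p, ∞)
  have hpos : ∀ y, p ≤ y → 0 < v' y := by
    intro y₂ hy₂
    by_contra hle
    push_neg at hle
    have hy₂p : p < y₂ := lt_of_le_of_ne hy₂ (fun he => by rw [← he] at hle; linarith)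
    set S := Icc p y₂ ∩ v' ⁻¹' (Iic 0) with hS
    have hclosed : IsClosed S := ContinuousOn.preimage_isClosed_of_isClosed
      (hv'c.mono (fun s hs => le_trans hp hs.1)) isClosed_Icc isClosed_Iic
    have hne : S.Nonempty := ⟨y₂, ⟨⟨hy₂, le_rfl⟩, hle⟩⟩
    have hbdd : BddBelow S := ⟨p, fun s hs => hs.1.1⟩
    set T := sInf S with hT
    have hTS : T ∈ S := hclosed.csInf_mem hne hbdd
    have hTp : p < T := lt_of_le_of_ne hTS.1.1 (fun he => by
      have := hTS.2; rw [← he] at this; simp only [mem_preimage, mem_Iic] at this; linarith)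
    have hT0 : 0 < T := lt_of_le_of_lt hp hTp
    have hlt' : ∀ s, p ≤ s → s < T → 0 < v' s := by
      intro s h1 h2
      by_contra hge
      push_neg at hge
      exact absurd (csInf_le hbdd ⟨⟨h1, h2.le.trans hTS.1.2⟩, hge⟩) (not_le.2 h2)
    have hv'T : v' T = 0 := by
      have hTle : v' T ≤ 0 := hTS.2
      rcases lt_or_eq_of_le hTle with hlt0 | he
      · exfalso
        have hcT : ContinuousAt v' T := hv'c.continuousAt (Ici_mem_nhds hT0)
        have hev : ∀ᶠ s in nhds T, v' s < 0 := hcT.eventually (gt_mem_nhds hlt0)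
        have hev2 : ∀ᶠ s in nhdsWithin T (Iio T), v' s < 0 ∧ p < s :=
          eventually_nhdsWithin_of_eventually_nhds (hev.and (lt_mem_nhds hTp))
        obtain ⟨s, ⟨hs1, hs2⟩, hs3⟩ := (hev2.and self_mem_nhdsWithin).exists
        exact absurd (hlt' s hs2.le hs3) (not_lt.2 hs1.le)
      · exact he
    have hmono : MonotoneOn v (Icc p T) := myMonotoneOnIcc
      (hvc.mono (fun s hs => le_trans hp hs.1))
      (fun x hx => hasDerivAt_v hivp (lt_of_le_of_lt hp hx.1))
      (fun x hx => (hlt' x hx.1.le hx.2).le)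
    have hvT : h/η < v T :=
      lt_of_lt_of_le hvp (hmono ⟨le_rfl, hTp.le⟩ ⟨hTp.le, le_rfl⟩ hTp.le)
    have hD := hasDerivAt_v' hσ hη hivp hT0
    have hDpos : 0 < 2/σ^2 * (η * v T - h + (αh/2 * v T + η*T - a) * v' T) := by
      rw [hv'T]
      have h1 : h < η * v T := by
        have := (div_lt_iff₀ hη).1 hvT
        linarith [this]
      have hc : (0:ℝ) < 2/σ^2 := by positivity
      nlinarith
    obtain ⟨s, hs1, hs2, hs3⟩ := exists_left_lt hD hDpos (lt_mem_nhds hTp)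
    rw [hv'T] at hs2
    linarith [hlt' s hs3.le hs1]
  -- Step 2: v is monotone on [p, ∞)
  have hMono : MonotoneOn v (Ici p) := myMonotoneOnIci
    (hvc.mono (Ici_subset_Ici.2 hp))
    (fun x hx => hasDerivAt_v hivp (lt_of_le_of_lt hp hx))
    (fun x hx => (hpos x (le_of_lt hx)).le)
  have hvge : ∀ y, p ≤ y → v p ≤ v y := fun y hy => hMono self_mem_Ici hy hy
  set d := v p - h/η with hd
  clear_value d
  have hdpos : 0 < d := by rw [hd]; exact sub_pos.2 hvp
  set m := β - a^2/αh with hm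
  clear_value m
  have hglb : ∀ u : ℝ, m ≤ β + αh/4*u^2 - a*u := by
    intro u
    have h1 : αh*(αh/4*u^2 - a*u + a^2/αh) = (αh*u/2 - a)^2 := by
      field_simp
      ring
    have h2 := sq_nonneg (αh*u/2 - a)
    rw [← h1] at h2
    have h3 : 0 ≤ αh/4*u^2 - a*u + a^2/αh := by nlinarith
    rw [hm]; linarith
  have hv'lb : ∀ y ∈ Ioi p, 0 ≤ v' y - 2/σ^2*(m + η*d*y) := by
    intro y hy
    have hy0 : (0:ℝ) ≤ y := le_trans hp (le_of_lt hy)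
    have hveq := hEq_of hσ hivp y hy0
    have h1 : m ≤ β + αh/4*(v y)^2 - a*(v y) := hglb _
    have h2 : η*d*y ≤ η*y*(v y - h/η) := by
      have h3 : d ≤ v y - h/η := by have := hvge y (le_of_lt hy); rw [hd]; linarith
      have h4 : 0 ≤ η*y := by positivity
      nlinarith
    have hc : (0:ℝ) < 2/σ^2 := by positivity
    have h5 : m + η*d*y ≤ β + αh/4*(v y)^2 + η*y*(v y - h/η) - a*(v y) := by linarith
    rw [hveq]
    nlinarith [mul_le_mul_of_nonneg_left h5 hc.le]
  have hφmono : MonotoneOn (fun y => v y - 2/σ^2*(m*y + η*d*y^2/2)) (Ici p) := by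
    apply myMonotoneOnIci (f' := fun x => v' x - 2/σ^2*(m + η*d*x))
    · exact (hvc.mono (Ici_subset_Ici.2 hp)).sub
        (Continuous.continuousOn (by fun_prop))
    · intro x hx
      have hx0 : 0 < x := lt_of_le_of_lt hp hx
      have h1 : HasDerivAt (fun y : ℝ => y^2) (2*x) x := by simpa using hasDerivAt_pow 2 x
      have h2 : HasDerivAt (fun y : ℝ => η*d*y^2/2) (η*d*x) x := by
        have := (h1.const_mul (η*d)).div_const 2
        refine this.congr_deriv ?_
        ring
      have h3 : HasDerivAt (fun y : ℝ => m*y) m x := by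
        simpa using (hasDerivAt_id x).const_mul m
      have h4 : HasDerivAt (fun y : ℝ => m*y + η*d*y^2/2) (m + η*d*x) x := h3.add h2
      exact (hasDerivAt_v hivp hx0).sub (h4.const_mul (2/σ^2))
    · exact fun x hx => hv'lb x hx
  set V₀ := 16/αh*(|a| + |β|) + 1 with hV₀
  clear_value V₀
  have hV₀1 : 1 ≤ V₀ := by
    have h0 : 0 ≤ 16/αh*(|a| + |β|) := by positivity
    linarith [hV₀, h0]
  have htend : Tendsto (fun Y => v p + 2/σ^2*(m*(Y-p) + η*d*(Y^2-p^2)/2)) atTop atTop := by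
    have hA : 0 < η*d/σ^2 := by positivity
    exact Tendsto.congr (fun x => by ring)
      (quad_tendsto (A := η*d/σ^2) (B := 2/σ^2*m)
        (C := v p - 2/σ^2*m*p - η*d/σ^2*p^2) hA)
  obtain ⟨q, hq1, hq2⟩ : ∃ q, p ≤ q ∧ V₀ ≤ v p + 2/σ^2*(m*(q-p) + η*d*(q^2-p^2)/2) := by
    obtain ⟨q, hA, hB⟩ := ((htend.eventually_ge_atTop V₀).and (eventually_ge_atTop p)).exists
    exact ⟨q, hB, hA⟩
  have hvq : V₀ ≤ v q := by
    have h1 := hφmono self_mem_Ici (hq1 : q ∈ Ici p) hq1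
    simp only at h1
    nlinarith [h1, hq2, sq_nonneg σ]
  have hvy : ∀ y, q ≤ y → V₀ ≤ v y := fun y hy =>
    le_trans hvq (hMono (hq1 : q ∈ Ici p) (le_trans hq1 hy) hy)
  set μ := 2/σ^2*(αh/16) with hμdef
  have hμ : 0 < μ := by rw [hμdef]; positivity
  clear_value μ
  have hgq : ∀ y, q ≤ y → μ*(v y)^2 ≤ v' y := by
    intro y hy
    have hy0 : (0:ℝ) ≤ y := hp.trans (hq1.trans hy)
    have hV : V₀ ≤ v y := hvy y hy
    have hgeh : h/η < v y := lt_of_lt_of_le hvp (hvge y (hq1.trans hy))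
    have hveq := hEq_of hσ hivp y hy0
    have h2 : 0 ≤ η*y*(v y - h/η) :=
      mul_nonneg (mul_nonneg hη.le hy0) (by linarith)
    have hid : αh/16*V₀ = |a| + |β| + αh/16 := by
      rw [hV₀]
      field_simp
    have hV1 : 1 ≤ v y := le_trans hV₀1 hV
    have hVnn : (0:ℝ) ≤ v y := by linarith
    have F1 : V₀ * v y ≤ v y * v y := mul_le_mul_of_nonneg_right hV hVnn
    have F2 : αh/16 * (V₀ * v y) ≤ αh/16 * (v y * v y) :=
      mul_le_mul_of_nonneg_left F1 (by positivity)
    have F3 : (|a| + |β| + αh/16) * v y ≤ αh/16 * (v y * v y) := by nlinarith [F2, hid]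
    have habsa : a*(v y) ≤ |a| * v y := mul_le_mul_of_nonneg_right (le_abs_self a) hVnn
    have habsb : |β| ≤ |β| * v y := by nlinarith [abs_nonneg β, hV1]
    have h3 : αh/16*(v y)^2 ≤ β + αh/4*(v y)^2 - a*(v y) := by
      nlinarith [F3, habsa, habsb, neg_abs_le β, hαh, hVnn]
    have hc : (0:ℝ) < 2/σ^2 := by positivity
    have h5 : αh/16*(v y)^2 ≤ β + αh/4*(v y)^2 + η*y*(v y - h/η) - a*(v y) := by linarith
    rw [hveq, hμdef]
    nlinarith [mul_le_mul_of_nonneg_left h5 hc.le]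
  -- Step 6 : Riccati comparison gives a contradiction
  have hvpos : ∀ y, q ≤ y → 0 < v y := fun y hy => lt_of_lt_of_le (by linarith) (hvy y hy)
  set Y := q + 2/μ with hY
  clear_value Y
  have hYq : q < Y := by
    rw [hY]
    have h0 : 0 < 2/μ := by positivity
    linarith
  have hψmono : MonotoneOn (fun y => -(v y)⁻¹ - μ*y) (Icc q Y) := by
    apply myMonotoneOnIcc (f' := fun x => -(-(v' x) / (v x)^2) - μ)
    · apply ContinuousOn.sub
      · exact (ContinuousOn.inv₀ (hvc.mono (fun s hs => le_trans (hp.trans hq1) hs.1))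
          (fun x hx => ne_of_gt (hvpos x hx.1))).neg
      · exact (continuous_const.mul continuous_id).continuousOn
    · intro x hx
      have hx0 : 0 < x := lt_of_le_of_lt (hp.trans hq1) hx.1
      exact (((hasDerivAt_v hivp hx0).inv (ne_of_gt (hvpos x hx.1.le))).neg).sub
        (by simpa using (hasDerivAt_id x).const_mul μ)
    · intro x hx
      have hvx := hvpos x hx.1.le
      have hv2 : 0 < (v x)^2 := by positivity
      have h := hgq x hx.1.le
      have : μ ≤ v' x / (v x)^2 := by
        rw [le_div_iff₀ hv2]
        linarith
      have hrw : -(-(v' x) / (v x)^2) = v' x / (v x)^2 := by ring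
      rw [hrw]
      linarith
  have h1 := hψmono (left_mem_Icc.2 hYq.le) (right_mem_Icc.2 hYq.le) hYq.le
  simp only at h1
  have hvq1 : 1 ≤ v q := le_trans hV₀1 hvq
  have hinvq : (v q)⁻¹ ≤ 1 := inv_le_one_of_one_le₀ hvq1
  have hvYpos : 0 < v Y := hvpos Y hYq.le
  have hinvY : 0 < (v Y)⁻¹ := by positivity
  have hμY : μ * Y = μ*q + 2 := by
    rw [hY]
    field_simp
  linarith


/-- Once the derivative is negative, it stays negative. -/
lemma neg_persists (hσ : 0 < σ) (hη : 0 < η) (hαh : 0 < αh) (hh : 0 < h) (hr : 0 < r)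
    (hivp : IsIVP σ η αh h r a β v v')
    {t : ℝ} (ht : 0 ≤ t) (hv't : v' t < 0) : ∀ y, t < y → v' y < 0 := by
  intro y hy
  by_contra hge
  push_neg at hge
  have hv'c := hivp.1
  have hvc := contOn_v hivp
  set S := Icc t y ∩ v' ⁻¹' (Ici 0) with hS
  have hclosed : IsClosed S := ContinuousOn.preimage_isClosed_of_isClosed
    (hv'c.mono (fun s hs => le_trans ht hs.1)) isClosed_Icc isClosed_Ici
  have hne : S.Nonempty := ⟨y, ⟨⟨hy.le, le_rfl⟩, hge⟩⟩
  have hbdd : BddBelow S := ⟨t, fun s hs => hs.1.1⟩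
  set s₀ := sInf S with hs₀def
  have hs₀S : s₀ ∈ S := hclosed.csInf_mem hne hbdd
  have hs₀t : t < s₀ := lt_of_le_of_ne hs₀S.1.1 (fun he => by
    have h2 : (0:ℝ) ≤ v' s₀ := hs₀S.2
    rw [← he] at h2
    linarith)
  have hs₀0 : 0 < s₀ := lt_of_le_of_lt ht hs₀t
  have hlt : ∀ s, t ≤ s → s < s₀ → v' s < 0 := by
    intro s h1 h2
    by_contra hge2
    push_neg at hge2
    exact absurd (csInf_le hbdd ⟨⟨h1, h2.le.trans hs₀S.1.2⟩, hge2⟩) (not_le.2 h2)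
  have hv's₀ : v' s₀ = 0 := by
    have h0 : (0:ℝ) ≤ v' s₀ := hs₀S.2
    rcases lt_or_eq_of_le h0 with hgt | he
    · exfalso
      have hcT : ContinuousAt v' s₀ := hv'c.continuousAt (Ici_mem_nhds hs₀0)
      have hev : ∀ᶠ s in nhds s₀, 0 < v' s := hcT.eventually (lt_mem_nhds hgt)
      have hev2 : ∀ᶠ s in nhdsWithin s₀ (Iio s₀), (0 < v' s) ∧ t < s :=
        eventually_nhdsWithin_of_eventually_nhds (hev.and (lt_mem_nhds hs₀t))
      obtain ⟨s, ⟨h1a, h1b⟩, h1c⟩ := (hev2.and self_mem_nhdsWithin).exists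
      exact absurd (hlt s h1b.le h1c) (not_lt.2 h1a.le)
    · exact he.symm
  have hD := hasDerivAt_v' hσ hη hivp hs₀0
  rcases lt_trichotomy (v s₀) (h/η) with hcase | hcase | hcase
  · have hDneg : 2/σ^2 * (η * v s₀ - h + (αh/2 * v s₀ + η*s₀ - a) * v' s₀) < 0 := by
      rw [hv's₀]
      have h1 : η * v s₀ < h := by
        have := (lt_div_iff₀ hη).1 hcase
        nlinarith
      have hc : (0:ℝ) < 2/σ^2 := by positivity
      nlinarith
    obtain ⟨s, hs1, hs2, hs3⟩ := exists_left_gt hD hDneg (lt_mem_nhds hs₀t)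
    rw [hv's₀] at hs2
    linarith [hlt s hs3.le hs1]
  · have hK : β + αh/4*(h/η)^2 - a*(h/η) = 0 := by
      have hveq := hEq_of hσ hivp s₀ hs₀0.le
      rw [hv's₀, hcase] at hveq
      have h0 : 2/σ^2 * (β + αh/4*(h/η)^2 + η*s₀*(h/η - h/η) - a*(h/η)) = 0 := hveq.symm
      rcases mul_eq_zero.1 h0 with h' | h'
      · exact absurd h' (by positivity)
      · linear_combination h'
    have hb := barrier hσ hη hh hr hivp (le_of_eq hK) s₀ (mem_Ici.2 hs₀0.le)
    rw [hcase] at hb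
    exact lt_irrefl _ hb
  · have hDpos : 0 < 2/σ^2 * (η * v s₀ - h + (αh/2 * v s₀ + η*s₀ - a) * v' s₀) := by
      rw [hv's₀]
      have h1 : h < η * v s₀ := by
        have := (div_lt_iff₀ hη).1 hcase
        nlinarith
      have hc : (0:ℝ) < 2/σ^2 := by positivity
      nlinarith
    have hcv : ContinuousAt v s₀ := hvc.continuousAt (Ici_mem_nhds hs₀0)
    have hev : ∀ᶠ s in nhds s₀, h/η < v s := hcv.eventually (lt_mem_nhds hcase)
    obtain ⟨s, hs1, hs2, hs3⟩ := exists_right_gt hD hDpos hev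
    rw [hv's₀] at hs2
    exact blowup hσ hη hαh hh hivp (le_trans hs₀0.le hs1.le) hs3 hs2


/-- If the derivative is somewhere negative, the solution has the 𝓓-shape. -/
lemma assembly (hσ : 0 < σ) (hη : 0 < η) (hαh : 0 < αh) (hh : 0 < h) (hr : 0 < r)
    (hivp : IsIVP σ η αh h r a β v v')
    (hex : ∃ t, 0 ≤ t ∧ v' t < 0) :
    ∃ xβ, 0 ≤ xβ ∧ MonotoneOn v (Icc 0 xβ) ∧ StrictAntiOn v (Ici xβ) := by
  obtain ⟨t₀, ht₀, hv't₀⟩ := hex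
  have hvc := contOn_v hivp
  set N := {y : ℝ | 0 ≤ y ∧ v' y < 0} with hN
  have hNne : N.Nonempty := ⟨t₀, ht₀, hv't₀⟩
  have hbdd : BddBelow N := ⟨0, fun s hs => hs.1⟩
  set x := sInf N with hx
  have hx0 : 0 ≤ x := le_csInf hNne (fun b hb => hb.1)
  have hneg : ∀ y, x < y → v' y < 0 := by
    intro y hy
    obtain ⟨n, hnN, hny⟩ := exists_lt_of_csInf_lt hNne hy
    exact neg_persists hσ hη hαh hh hr hivp hnN.1 hnN.2 y hny
  have hpos : ∀ y, 0 ≤ y → y < x → 0 ≤ v' y := by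
    intro y h1 h2
    by_contra hneg2
    push_neg at hneg2
    exact absurd (csInf_le hbdd ⟨h1, hneg2⟩) (not_le.2 h2)
  refine ⟨x, hx0, ?_, ?_⟩
  · exact myMonotoneOnIcc (hvc.mono (fun s hs => hs.1))
      (fun s hs => hasDerivAt_v hivp hs.1)
      (fun s hs => hpos s hs.1.le hs.2)
  · apply strictAntiOn_of_deriv_neg (convex_Ici x) (hvc.mono (Ici_subset_Ici.2 hx0))
    intro s hs
    rw [interior_Ici] at hs
    rw [(hasDerivAt_v hivp (lt_of_le_of_lt hx0 hs)).deriv]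
    exact hneg s hs


set_option maxHeartbeats 1600000 in
/-- Case 1: for `0 ≤ β` small the derivative must eventually turn negative. -/
lemma exists_neg_case1 (hσ : 0 < σ) (hη : 0 < η) (hαh : 0 < αh) (hh : 0 < h) (hr : 0 < r)
    (hivp : IsIVP σ η αh h r a β v v')
    (hβ0 : 0 ≤ β) (hβ1 : β ≤ min 1 (h*r*σ^2/(4*(1 + αh/4*r^2 + |a| * r)))) :
    ∃ t, 0 ≤ t ∧ v' t < 0 := by
  by_contra hcon
  push_neg at hcon
  have hvc := contOn_v hivp
  have hv0 : v 0 = -r := hivp.2.2.2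
  have hβle1 : β ≤ 1 := le_trans hβ1 (min_le_left _ _)
  have hG1pos : 0 < 1 + αh/4*r^2 + |a| * r := by positivity
  have hβle2 : β ≤ h*r*σ^2/(4*(1 + αh/4*r^2 + |a| * r)) := le_trans hβ1 (min_le_right _ _)
  have hMono : MonotoneOn v (Ici 0) := myMonotoneOnIci hvc
    (fun s hs => hasDerivAt_v hivp hs) (fun s hs => hcon s hs.le)
  have hvlb : ∀ y, 0 ≤ y → -r ≤ v y := fun y hy => by
    have h1 := hMono self_mem_Ici hy hy
    rw [hv0] at h1
    exact h1
  have hc : (0:ℝ) < 2/σ^2 := by positivity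
  by_cases hup : ∃ Y, 0 ≤ Y ∧ 0 ≤ v Y
  case neg =>
    push_neg at hup
    set G1 := 1 + αh/4*r^2 + |a| * r with hG1def
    have hG1pos' : 0 < G1 := by rw [hG1def]; positivity
    clear_value G1
    set Y := G1/h + 1 with hYdef
    have hY0 : (0:ℝ) ≤ Y := by rw [hYdef]; positivity
    clear_value Y
    have hvY := hup Y hY0
    have hveq := hEq_of hσ hivp Y hY0
    have h1 : -r ≤ v Y := hvlb Y hY0
    have h2 : (v Y)^2 ≤ r^2 := by nlinarith
    have h3 : -(a*(v Y)) ≤ |a| * r := by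
      have h4 : |v Y| ≤ r := abs_le.2 ⟨h1, by linarith⟩
      calc -(a*(v Y)) ≤ |a*(v Y)| := neg_le_abs _
        _ = |a| * |v Y| := abs_mul a (v Y)
        _ ≤ |a| * r := mul_le_mul_of_nonneg_left h4 (abs_nonneg a)
    have h5 : η*Y*(v Y - h/η) ≤ -(h*Y) := by
      have h6 : v Y - h/η ≤ -(h/η) := by linarith
      have h7 : 0 ≤ η*Y := by positivity
      calc η*Y*(v Y - h/η) ≤ η*Y*(-(h/η)) := mul_le_mul_of_nonneg_left h6 h7
        _ = -(h*Y) := by field_simp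
    have hbound : β + αh/4*(v Y)^2 + η*Y*(v Y - h/η) - a*(v Y) ≤ G1 - h*Y := by
      rw [hG1def]
      nlinarith [h2, h3, h5, hβle1, hαh]
    have h8 : G1 - h*Y = -h := by
      rw [hYdef]
      field_simp
      ring
    have hv'Y : v' Y < 0 := by
      rw [hveq]
      apply mul_neg_of_pos_of_neg hc
      linarith [hbound, h8, hh]
    exact absurd (hcon Y hY0) (not_le.2 hv'Y)
  case pos =>
    obtain ⟨Y₁, hY₁0, hvY₁⟩ := hup
    set S := Icc 0 Y₁ ∩ v ⁻¹' (Ici 0) with hS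
    have hclosed : IsClosed S := ContinuousOn.preimage_isClosed_of_isClosed
      (hvc.mono (fun s hs => hs.1)) isClosed_Icc isClosed_Ici
    have hne : S.Nonempty := ⟨Y₁, ⟨⟨hY₁0, le_rfl⟩, hvY₁⟩⟩
    have hbdd : BddBelow S := ⟨0, fun s hs => hs.1.1⟩
    set y₀ := sInf S with hy₀def
    have hy₀S : y₀ ∈ S := hclosed.csInf_mem hne hbdd
    have hy₀0 : 0 ≤ y₀ := hy₀S.1.1
    have hy₀pos : 0 < y₀ := lt_of_le_of_ne hy₀0 (fun he => by
      have h2 : (0:ℝ) ≤ v y₀ := hy₀S.2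
      rw [← he, hv0] at h2
      linarith)
    have hltS : ∀ s, 0 ≤ s → s < y₀ → v s < 0 := by
      intro s h1 h2
      by_contra hge2
      push_neg at hge2
      exact absurd (csInf_le hbdd ⟨⟨h1, h2.le.trans hy₀S.1.2⟩, hge2⟩) (not_le.2 h2)
    have hvy₀ : v y₀ = 0 := by
      have h0 : (0:ℝ) ≤ v y₀ := hy₀S.2
      rcases lt_or_eq_of_le h0 with hgt | he
      · exfalso
        have hcT : ContinuousAt v y₀ := hvc.continuousAt (Ici_mem_nhds hy₀pos)
        have hev : ∀ᶠ s in nhds y₀, 0 < v s := hcT.eventually (lt_mem_nhds hgt)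
        have hev2 : ∀ᶠ s in nhdsWithin y₀ (Iio y₀), (0 < v s) ∧ 0 < s :=
          eventually_nhdsWithin_of_eventually_nhds (hev.and (lt_mem_nhds hy₀pos))
        obtain ⟨s, ⟨h1a, h1b⟩, h1c⟩ := (hev2.and self_mem_nhdsWithin).exists
        exact absurd (hltS s h1b.le h1c) (not_lt.2 h1a.le)
      · exact he.symm
    set G1 := 1 + αh/4*r^2 + |a| * r with hG1def
    have hG1posB : 0 < G1 := by rw [hG1def]; positivity
    clear_value G1
    have hanti : AntitoneOn (fun y => v y - 2/σ^2*G1*y) (Icc 0 y₀) := by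
      apply myAntitoneOnIcc (f' := fun s => v' s - 2/σ^2*G1)
      · exact (hvc.mono (fun s hs => hs.1)).sub
          (Continuous.continuousOn (by fun_prop))
      · intro s hs
        exact (hasDerivAt_v hivp hs.1).sub
          (by simpa using (hasDerivAt_id s).const_mul (2/σ^2*G1))
      · intro s hs
        have h1 : -r ≤ v s := hvlb s hs.1.le
        have h2 : v s < 0 := hltS s hs.1.le hs.2
        have hveq := hEq_of hσ hivp s hs.1.le
        have h3 : (v s)^2 ≤ r^2 := by nlinarith
        have h4 : -(a*(v s)) ≤ |a| * r := by
          have h5 : |v s| ≤ r := abs_le.2 ⟨h1, by linarith⟩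
          calc -(a*(v s)) ≤ |a*(v s)| := neg_le_abs _
            _ = |a| * |v s| := abs_mul a (v s)
            _ ≤ |a| * r := mul_le_mul_of_nonneg_left h5 (abs_nonneg a)
        have h6 : η*s*(v s - h/η) ≤ 0 := by
          apply mul_nonpos_of_nonneg_of_nonpos (mul_nonneg hη.le hs.1.le)
          have : 0 < h/η := by positivity
          linarith
        have h7 : β + αh/4*(v s)^2 + η*s*(v s - h/η) - a*(v s) ≤ G1 := by
          rw [hG1def]
          nlinarith [h3, h4, h6, hβle1]
        rw [hveq]
        nlinarith [h7]
    have hy₀lb : r*σ^2/(2*G1) ≤ y₀ := by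
      have h1 := hanti (left_mem_Icc.2 hy₀0) (right_mem_Icc.2 hy₀0) hy₀0
      simp only [hvy₀, hv0] at h1
      -- h1 : 0 - 2/σ^2*G1*y₀ ≤ -r - 2/σ^2*G1*0
      rw [div_le_iff₀ (by positivity)]
      have hσ2 : (0:ℝ) < σ^2 := by positivity
      have h2 : r ≤ 2/σ^2*G1*y₀ := by nlinarith [h1]
      have h2' : 2/σ^2*G1*y₀*σ^2 = 2*G1*y₀ := by field_simp
      nlinarith [mul_le_mul_of_nonneg_right h2 hσ2.le, h2']
    have hv'y₀ : v' y₀ < 0 := by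
      have hveq := hEq_of hσ hivp y₀ hy₀0
      rw [hvy₀] at hveq
      have h2 : h*y₀ ≥ h*(r*σ^2/(2*G1)) := mul_le_mul_of_nonneg_left hy₀lb hh.le
      have h3 : β < h*(r*σ^2/(2*G1)) := by
        have h4 : h*(r*σ^2/(2*G1)) = h*r*σ^2/(2*G1) := by ring
        have h5 : h*r*σ^2/(4*G1) < h*r*σ^2/(2*G1) := by
          apply div_lt_div_of_pos_left (by positivity) (by positivity)
          linarith
        rw [h4]
        calc β ≤ h*r*σ^2/(4*G1) := hβle2
          _ < h*r*σ^2/(2*G1) := h5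
      have h6 : η*y₀*(0 - h/η) = -(h*y₀) := by field_simp; ring
      rw [hveq]
      have h7 : β + αh/4*0^2 + η*y₀*(0 - h/η) - a*0 = β - h*y₀ := by
        rw [h6]; ring
      rw [h7]
      have h8 : β - h*y₀ < 0 := by linarith
      exact mul_neg_of_pos_of_neg hc h8
    exact absurd (hcon y₀ hy₀0) (not_le.2 hv'y₀)


set_option maxHeartbeats 1600000 in
/-- Case 2: for `β` slightly above `β̲₂` the derivative must turn negative. -/
lemma exists_neg_case2 (hσ : 0 < σ) (hη : 0 < η) (hαh : 0 < αh) (hh : 0 < h) (hr : 0 < r)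
    (hivp : IsIVP σ η αh h r a β v v')
    (hβlow : -a*r - αh/4*r^2 < β)
    (hβhi : β ≤ -a*r - αh/4*r^2 +
      (min (h/(4*(αh/2*(r + h/(2*η)) + η + |a|))) (min ((2/σ^2)*h/4) (h/(2*η))))*σ^2/4) :
    ∃ t, 0 ≤ t ∧ v' t < 0 := by
  by_contra hcon
  push_neg at hcon
  have hvc := contOn_v hivp
  have hv'c := hivp.1
  have hv0 : v 0 = -r := hivp.2.2.2
  have hc : (0:ℝ) < 2/σ^2 := by positivity
  set δ := h/(2*η) with hδdef
  have hδpos : 0 < δ := by rw [hδdef]; positivity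
  have hηδ : η*δ = h/2 := by rw [hδdef]; field_simp
  clear_value δ
  set B₀ := αh/2*(r + δ) + η + |a| with hB₀def
  have hB₀pos : 0 < B₀ := by rw [hB₀def]; positivity
  set ε := h/(4*B₀) with hεdef
  have hεpos : 0 < ε := by rw [hεdef]; positivity
  have hBε : B₀*ε = h/4 := by rw [hεdef]; field_simp
  clear_value ε
  set A := (2/σ^2)*h/4 with hAdef
  have hApos : 0 < A := by rw [hAdef]; positivity
  have hAneg : 2/σ^2*(-(h/4)) = -A := by rw [hAdef]; ring
  clear_value A
  set Est := min ε (min A δ) with hEstdef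
  have hEstpos : 0 < Est := lt_min hεpos (lt_min hApos hδpos)
  have hEstε : Est ≤ ε := min_le_left _ _
  have hEstA : Est ≤ A := (min_le_right _ _).trans (min_le_left _ _)
  have hEstδ : Est ≤ δ := (min_le_right _ _).trans (min_le_right _ _)
  have hβ1 : β - (-a*r - αh/4*r^2) ≤ Est*σ^2/4 := by linarith [hβhi]
  clear_value Est
  have hε₀eq : v' 0 = 2/σ^2*(β - (-a*r - αh/4*r^2)) := by
    have hveq := hEq_of hσ hivp 0 (mem_Ici.2 le_rfl)
    rw [hv0] at hveq
    rw [hveq]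
    ring
  have hε₀pos : 0 < v' 0 := by
    rw [hε₀eq]
    apply mul_pos hc
    linarith
  have hε₀lt : v' 0 < Est := by
    rw [hε₀eq]
    have h2 : 2/σ^2*(Est*σ^2/4) = Est/2 := by field_simp; ring
    calc 2/σ^2*(β - (-a*r - αh/4*r^2)) ≤ 2/σ^2*(Est*σ^2/4) :=
          mul_le_mul_of_nonneg_left hβ1 hc.le
      _ = Est/2 := h2
      _ < Est := by linarith
  have hMono : MonotoneOn v (Ici 0) := myMonotoneOnIci hvc
    (fun s hs => hasDerivAt_v hivp hs) (fun s hs => hcon s hs.le)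
  have hvlb : ∀ y, 0 ≤ y → -r ≤ v y := fun y hy => by
    have h1 := hMono self_mem_Ici hy hy
    rw [hv0] at h1
    exact h1
  -- key derivative estimate
  have hkey : ∀ T, T ∈ Icc (0:ℝ) 1 →
      (∀ s, 0 ≤ s → s < T → v' s < ε ∧ v s < -r + δ) →
      AntitoneOn (fun y => v' y + A*y) (Icc 0 T) := by
    intro T hT hgood
    apply myAntitoneOnIcc
      (f' := fun s => 2/σ^2 * (η * v s - h + (αh/2 * v s + η*s - a) * v' s) + A)
    · exact (hv'c.mono (fun s hs => hs.1)).add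
        (Continuous.continuousOn (by fun_prop))
    · intro s hs
      exact (hasDerivAt_v' hσ hη hivp hs.1).add
        (by simpa using (hasDerivAt_id s).const_mul A)
    · intro s hs
      obtain ⟨hg1, hg2⟩ := hgood s hs.1.le hs.2
      have hs1 : s ≤ 1 := hs.2.le.trans hT.2
      have hv's : 0 ≤ v' s := hcon s hs.1.le
      have hvs1 : -r ≤ v s := hvlb s hs.1.le
      have hP1 : αh/2 * v s + η*s - a ≤ B₀ := by
        rw [hB₀def]
        have k1 : αh/2 * v s ≤ αh/2 * (r + δ) := by nlinarith
        have k2 : η*s ≤ η := by nlinarith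
        linarith [neg_abs_le a, le_abs_self a]
      have hP2 : -B₀ ≤ αh/2 * v s + η*s - a := by
        rw [hB₀def]
        have k1 : -(αh/2 * (r + δ)) ≤ αh/2 * v s := by nlinarith
        have k2 : 0 ≤ η*s := mul_nonneg hη.le hs.1.le
        linarith [neg_abs_le a, le_abs_self a]
      have hPv : (αh/2 * v s + η*s - a) * v' s ≤ h/4 := by
        calc (αh/2 * v s + η*s - a) * v' s ≤ B₀ * v' s :=
              mul_le_mul_of_nonneg_right hP1 hv's
          _ ≤ B₀ * ε := mul_le_mul_of_nonneg_left hg1.le hB₀pos.le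
          _ = h/4 := hBε
      have hηvs : η * v s - h ≤ -(h/2) := by
        have k1 : η * v s ≤ η * (-r + δ) := mul_le_mul_of_nonneg_left hg2.le hη.le
        have k2 : η * (-r + δ) = -(η*r) + η*δ := by ring
        have k3 : 0 ≤ η*r := mul_nonneg hη.le hr.le
        rw [k2, hηδ] at k1
        linarith
      have hin : η * v s - h + (αh/2 * v s + η*s - a) * v' s ≤ -(h/4) := by linarith
      have := mul_le_mul_of_nonneg_left hin hc.le
      rw [hAneg] at this
      linarith
  -- the bad set
  set Bad := (Icc (0:ℝ) 1 ∩ v' ⁻¹' (Ici ε)) ∪ (Icc (0:ℝ) 1 ∩ v ⁻¹' (Ici (-r + δ)))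
    with hBad
  have hBadclosed : IsClosed Bad := IsClosed.union
    (ContinuousOn.preimage_isClosed_of_isClosed (hv'c.mono (fun s hs => hs.1))
      isClosed_Icc isClosed_Ici)
    (ContinuousOn.preimage_isClosed_of_isClosed (hvc.mono (fun s hs => hs.1))
      isClosed_Icc isClosed_Ici)
  have h0Bad : (0:ℝ) ∉ Bad := by
    rw [hBad]
    rintro (⟨-, hm⟩ | ⟨-, hm⟩)
    · have : ε ≤ v' 0 := hm
      linarith [hε₀lt, hEstε]
    · have : -r + δ ≤ v 0 := hm
      rw [hv0] at this
      linarith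
  by_cases hBne : Bad.Nonempty
  case neg =>
    have hgood1 : ∀ s, 0 ≤ s → s < 1 → v' s < ε ∧ v s < -r + δ := by
      intro s h0 h1
      have hsIcc : s ∈ Icc (0:ℝ) 1 := ⟨h0, h1.le⟩
      constructor
      · by_contra hge
        push_neg at hge
        exact hBne ⟨s, Or.inl ⟨hsIcc, hge⟩⟩
      · by_contra hge
        push_neg at hge
        exact hBne ⟨s, Or.inr ⟨hsIcc, hge⟩⟩
    have h1 := hkey 1 ⟨zero_le_one, le_rfl⟩ hgood1
      (left_mem_Icc.2 zero_le_one) (right_mem_Icc.2 zero_le_one) zero_le_one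
    simp only at h1
    have h2 : v' 1 ≤ v' 0 - A := by linarith
    have h3 : 0 ≤ v' 1 := hcon 1 zero_le_one
    linarith [hε₀lt, hEstA]
  case pos =>
    have hbdd : BddBelow Bad := ⟨0, by
      rw [hBad]
      rintro s (⟨hs, -⟩ | ⟨hs, -⟩) <;> exact hs.1⟩
    set T := sInf Bad with hTdef
    have hTBad : T ∈ Bad := hBadclosed.csInf_mem hBne hbdd
    have hTIcc : T ∈ Icc (0:ℝ) 1 := by
      rw [hBad] at hTBad
      rcases hTBad with ⟨hs, -⟩ | ⟨hs, -⟩ <;> exact hs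
    have hT0 : 0 < T := lt_of_le_of_ne hTIcc.1 (fun he => h0Bad (he ▸ hTBad))
    have hgoodT : ∀ s, 0 ≤ s → s < T → v' s < ε ∧ v s < -r + δ := by
      intro s h0 hsT
      have hsIcc : s ∈ Icc (0:ℝ) 1 := ⟨h0, hsT.le.trans hTIcc.2⟩
      have hnb : s ∉ Bad := fun hmem => absurd (csInf_le hbdd hmem) (not_le.2 hsT)
      constructor
      · by_contra hge
        push_neg at hge
        exact hnb (by rw [hBad]; exact Or.inl ⟨hsIcc, hge⟩)
      · by_contra hge
        push_neg at hge
        exact hnb (by rw [hBad]; exact Or.inr ⟨hsIcc, hge⟩)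
    have hψ := hkey T hTIcc hgoodT
    have hψ0T := hψ (left_mem_Icc.2 hTIcc.1) (right_mem_Icc.2 hTIcc.1) hTIcc.1
    simp only at hψ0T
    -- v' T + A*T ≤ v' 0
    have hv'T : 0 ≤ v' T := hcon T hTIcc.1
    have hAT : A*T ≤ v' 0 := by linarith
    have hv'le : ∀ s, s ∈ Icc (0:ℝ) T → v' s ≤ v' 0 := by
      intro s hsm
      have := hψ (left_mem_Icc.2 hTIcc.1) hsm hsm.1
      simp only at this
      have hAs : 0 ≤ A*s := mul_nonneg hApos.le hsm.1
      linarith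
    have hφ : AntitoneOn (fun y => v y - (v' 0)*y) (Icc 0 T) := by
      apply myAntitoneOnIcc (f' := fun s => v' s - v' 0)
      · exact (hvc.mono (fun s hs => hs.1)).sub
          (Continuous.continuousOn (by fun_prop))
      · intro s hs
        exact (hasDerivAt_v hivp hs.1).sub
          (by simpa using (hasDerivAt_id s).const_mul (v' 0))
      · intro s hs
        have := hv'le s ⟨hs.1.le, hs.2.le⟩
        linarith
    have hvT : v T ≤ -r + (v' 0)*T := by
      have h1 := hφ (left_mem_Icc.2 hTIcc.1) (right_mem_Icc.2 hTIcc.1) hTIcc.1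
      simp only [hv0] at h1
      linarith
    rw [hBad] at hTBad
    rcases hTBad with ⟨-, hm⟩ | ⟨-, hm⟩
    · have h1 : ε ≤ v' T := hm
      have h2 := hv'le T (right_mem_Icc.2 hTIcc.1)
      linarith [hε₀lt, hEstε]
    · have h1 : -r + δ ≤ v T := hm
      have h2 : δ ≤ (v' 0)*T := by linarith
      have k1 : A*δ ≤ A*((v' 0)*T) := mul_le_mul_of_nonneg_left h2 hApos.le
      have k2 : (v' 0)*(A*T) ≤ (v' 0)*(v' 0) := mul_le_mul_of_nonneg_left hAT hε₀pos.le
      have k3 : (v' 0)*(v' 0) < A*δ := by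
        have hlt1 : v' 0 < A := lt_of_lt_of_le hε₀lt hEstA
        have hlt2 : v' 0 < δ := lt_of_lt_of_le hε₀lt hEstδ
        exact mul_lt_mul'' hlt1 hlt2 hε₀pos.le hε₀pos.le
      nlinarith [k1, k2, k3]

end Stmt14Aux

/-- Nonemptiness of `𝓓`: in Case 1, `0 ∈ 𝓓` and `[0, β̃₁] ⊆ 𝓓` for some `β̃₁ > 0`;
in Case 2, `(β̲₂, β̃₂] ⊆ 𝓓` for some `β̃₂ > β̲₂`. -/


theorem stmt_14 (σ η αh h r a : ℝ) (hσ : 0 < σ) (hη : 0 < η) (hαh : 0 < αh)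
    (hh : 0 < h) (hr : 0 < r) :
    (-(αh / 4) * r < a →
      MemD σ η αh h r a 0 ∧
      ∃ βt : ℝ, 0 < βt ∧ ∀ β ∈ Set.Icc (0:ℝ) βt, MemD σ η αh h r a β) ∧
    (a ≤ -(αh / 4) * r →
      ∃ βt : ℝ, -a * r - αh / 4 * r ^ 2 < βt ∧
        ∀ β ∈ Set.Ioc (-a * r - αh / 4 * r ^ 2) βt, MemD σ η αh h r a β) := by
  constructor
  · intro _ha
    constructor
    · intro v v' hivp
      refine Stmt14Aux.assembly hσ hη hαh hh hr hivp
        (Stmt14Aux.exists_neg_case1 hσ hη hαh hh hr hivp le_rfl ?_)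
      exact le_min (by norm_num) (by positivity)
    · refine ⟨min 1 (h*r*σ^2/(4*(1 + αh/4*r^2 + |a| * r))),
        lt_min one_pos (by positivity), ?_⟩
      intro β hβ v v' hivp
      exact Stmt14Aux.assembly hσ hη hαh hh hr hivp
        (Stmt14Aux.exists_neg_case1 hσ hη hαh hh hr hivp hβ.1 hβ.2)
  · intro _ha
    refine ⟨-a*r - αh/4*r^2 +
      (min (h/(4*(αh/2*(r + h/(2*η)) + η + |a|))) (min ((2/σ^2)*h/4) (h/(2*η))))*σ^2/4,
      ?_, ?_⟩
    · have hEst : 0 < min (h/(4*(αh/2*(r + h/(2*η)) + η + |a|))) (min ((2/σ^2)*h/4) (h/(2*η))) :=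
        lt_min (by positivity) (lt_min (by positivity) (by positivity))
      have h2 : 0 < (min (h/(4*(αh/2*(r + h/(2*η)) + η + |a|)))
          (min ((2/σ^2)*h/4) (h/(2*η))))*σ^2/4 :=
        div_pos (mul_pos hEst (by positivity)) (by norm_num)
      linarith
    · intro β hβ v v' hivp
      exact Stmt14Aux.assembly hσ hη hαh hh hr hivp
        (Stmt14Aux.exists_neg_case2 hσ hη hαh hh hr hivp hβ.1 hβ.2)
end
end

section
/- In Case i of the parameter assumption (i = 1, 2), the infimum β*_i = inf 𝓘_i is strictly positive. -/
open Set Filter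
open Topology

noncomputable section

namespace Stmt16Aux

/-- The right-hand side vector field of the ODE (after dividing by `σ²/2`). -/
def fode (σ η αh h a β : ℝ) : ℝ → ℝ → ℝ :=
  fun y x => 2/σ^2 * (β + αh/4*x^2 + η*y*(x - h/η) - a*x)

def QQ (σ η αh h a : ℝ) : ℝ := 2/σ^2 * (h + (η+|a|)^2/αh)

def MB (σ η αh h r a : ℝ) (T : ℝ) : ℝ := r + QQ σ η αh h a * (1+T)^3

def CB (σ η αh h r a : ℝ) (T : ℝ) : ℝ :=
  2/σ^2 * (1 + αh/4*(MB σ η αh h r a T + 1)^2 + (η*T+|a|)*(MB σ η αh h r a T + 1) + h*T)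

def KB (σ η αh h r a : ℝ) (T : ℝ) : ℝ :=
  2/σ^2 * (αh/2*(MB σ η αh h r a T + 1) + η*T + |a|)

def Mone (σ η αh h r a : ℝ) : ℝ := MB σ η αh h r a (1/h)

def Cone (σ η αh h r a : ℝ) : ℝ :=
  2/σ^2 * (1 + αh/4*(Mone σ η αh h r a)^2 + |a| * (Mone σ η αh h r a))

/-- The positive lower bound for admissible β with monotone solutions. -/
def csmall (σ η αh h r a : ℝ) : ℝ := min 1 (r*h/(Cone σ η αh h r a + 1))

/-- A solution of the IVP on `[0, T]`. -/
def SolOn (σ η αh h r a β : ℝ) (T : ℝ) (v : ℝ → ℝ) : Prop :=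
  v 0 = -r ∧ ∀ y ∈ Icc (0:ℝ) T, HasDerivWithinAt v (fode σ η αh h a β y (v y)) (Icc (0:ℝ) T) y

section Basic

variable {σ η αh h r a β : ℝ}

lemma fode_eq (hσ : 0 < σ) (hη : 0 < η) (y x : ℝ) :
    fode σ η αh h a β y x = 2/σ^2 * (β + αh/4*x^2 + (η*y - a)*x - h*y) := by
  unfold fode
  field_simp
  ring

lemma hasDerivWithinAt_of_nmem_closure' {g : ℝ → ℝ} {c : ℝ} {s : Set ℝ} {x : ℝ}
    (hx : x ∉ closure s) : HasDerivWithinAt g c s x := by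
  have h1 : ¬(𝓝[s] x).NeBot := fun hn => hx (mem_closure_iff_nhdsWithin_neBot.mpr hn)
  have h2 : 𝓝[s] x = ⊥ := not_neBot.mp h1
  have h3 : 𝓝[s \ {x}] x = ⊥ :=
    le_bot_iff.mp (le_trans (nhdsWithin_mono x diff_subset) h2.le)
  rw [hasDerivWithinAt_iff_tendsto_slope, h3]
  exact tendsto_bot

lemma monoIcc {A B : ℝ} {g g' : ℝ → ℝ}
    (hd : ∀ y ∈ Icc A B, HasDerivWithinAt g (g' y) (Icc A B) y)
    (h0 : ∀ y ∈ Icc A B, 0 ≤ g' y) : MonotoneOn g (Icc A B) :=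
  monotoneOn_of_hasDerivWithinAt_nonneg (convex_Icc A B)
    (fun y hy => (hd y hy).continuousWithinAt)
    (fun y hy => ((hd y (interior_subset hy)).mono interior_subset))
    (fun y hy => h0 y (interior_subset hy))

lemma QQ_pos (hσ : 0 < σ) (hη : 0 < η) (hαh : 0 < αh) (hh : 0 < h) :
    0 < QQ σ η αh h a := by
  have h1 : 0 < 2/σ^2 := by positivity
  have h2 : 0 < h + (η+|a|)^2/αh := by positivity
  exact mul_pos h1 h2

lemma MB_pos (hσ : 0 < σ) (hη : 0 < η) (hαh : 0 < αh) (hh : 0 < h) (hr : 0 < r)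
    {T : ℝ} (hT : 0 ≤ T) : 0 < MB σ η αh h r a T := by
  have := QQ_pos (a := a) hσ hη hαh hh
  have : 0 ≤ QQ σ η αh h a * (1+T)^3 := by positivity
  unfold MB; linarith

lemma MB_mono (hσ : 0 < σ) (hη : 0 < η) (hαh : 0 < αh) (hh : 0 < h)
    {S T : ℝ} (hS : 0 ≤ S) (hST : S ≤ T) :
    MB σ η αh h r a S ≤ MB σ η αh h r a T := by
  have hq := (QQ_pos (a := a) hσ hη hαh hh).le
  have : (1+S)^3 ≤ (1+T)^3 := by
    apply pow_le_pow_left₀ (by linarith) (by linarith)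
  unfold MB
  nlinarith

/-- Lower bound on the vector field. -/
lemma fode_lb (hσ : 0 < σ) (hη : 0 < η) (hαh : 0 < αh) (hh : 0 < h)
    (hβ : 0 ≤ β) {y : ℝ} (hy : 0 ≤ y) (x : ℝ) :
    -(QQ σ η αh h a) * (1+y)^2 ≤ fode σ η αh h a β y x := by
  rw [fode_eq hσ hη]
  have hb : |η*y - a| ≤ (η+|a|)*(1+y) := by
    have h2 : -((η+|a|)*(1+y)) ≤ η*y - a ∧ η*y - a ≤ (η+|a|)*(1+y) := by
      constructor <;>
        nlinarith [le_abs_self a, neg_abs_le a, mul_nonneg hη.le hy, abs_nonneg a]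
    exact abs_le.mpr h2
  have hb2 : (η*y - a)^2 ≤ (η+|a|)^2*(1+y)^2 := by
    have h3 := abs_nonneg (η*y - a)
    nlinarith [hb, sq_abs (η*y - a)]
  have key : 0 ≤ αh/4*x^2 + (η*y - a)*x + (η*y - a)^2/αh := by
    have h2 : αh/4*x^2 + (η*y - a)*x + (η*y - a)^2/αh = (αh*x/2 + (η*y - a))^2/αh := by
      field_simp; ring
    rw [h2]; positivity
  have hy2 : h*y ≤ h*(1+y)^2 := by
    nlinarith [mul_nonneg hh.le (sq_nonneg y), mul_nonneg hh.le hy]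
  have hdiv : (η*y - a)^2/αh ≤ (η+|a|)^2*(1+y)^2/αh :=
    (div_le_div_iff_of_pos_right hαh).mpr hb2
  have h8 : -((h + (η+|a|)^2/αh)*(1+y)^2) = -(h*(1+y)^2) - (η+|a|)^2*(1+y)^2/αh := by
    field_simp; ring
  have hinner : -((h + (η+|a|)^2/αh) * (1+y)^2) ≤ β + αh/4*x^2 + (η*y - a)*x - h*y := by
    have h7 : -((η*y - a)^2/αh) - h*y ≤ β + αh/4*x^2 + (η*y - a)*x - h*y := by linarith [key]
    linarith [h7, hdiv, hy2, h8.le, h8.ge]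
  have hpos : (0:ℝ) ≤ 2/σ^2 := by positivity
  have h5 := mul_le_mul_of_nonneg_left hinner hpos
  have h6 : -(2/σ^2*(h + (η+|a|)^2/αh))*(1+y)^2 = 2/σ^2*(-((h + (η+|a|)^2/αh)*(1+y)^2)) := by
    ring
  unfold QQ
  rw [h6]
  exact h5

/-- Upper bound on the vector field for `x ∈ [-M₁, 0]`. -/
lemma fode_ub_small (hσ : 0 < σ) (hη : 0 < η) (hαh : 0 < αh) (hh : 0 < h)
    (hβ : 0 ≤ β) (hβ1 : β ≤ 1) {y x : ℝ} (hy : 0 ≤ y)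
    (hx1 : -(Mone σ η αh h r a) ≤ x) (hx2 : x ≤ 0) :
    fode σ η αh h a β y x ≤ Cone σ η αh h r a := by
  rw [fode_eq hσ hη]
  have hax : -(a*x) ≤ |a| * Mone σ η αh h r a := by
    have h1 : -(a*x) ≤ |a*x| := neg_le_abs _
    have h2 : |a*x| = |a| * |x| := abs_mul a x
    have h3 : |x| ≤ Mone σ η αh h r a := by rw [abs_of_nonpos hx2]; linarith
    nlinarith [mul_le_mul_of_nonneg_left h3 (abs_nonneg a)]
  have hηyx : η*y*x ≤ 0 := by nlinarith [mul_nonneg hη.le hy]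
  have hx2' : x^2 ≤ (Mone σ η αh h r a)^2 := by nlinarith
  have hpos : (0:ℝ) ≤ 2/σ^2 := by positivity
  have hinner : β + αh/4*x^2 + (η*y - a)*x - h*y ≤
      1 + αh/4*(Mone σ η αh h r a)^2 + |a| * Mone σ η αh h r a := by
    nlinarith [mul_nonneg hh.le hy]
  unfold Cone
  nlinarith [mul_le_mul_of_nonneg_left hinner hpos]

lemma fode_abs_le (hσ : 0 < σ) (hη : 0 < η) (hαh : 0 < αh) (hh : 0 < h)
    (hβ : 0 ≤ β) (hβ1 : β ≤ 1) {T y x : ℝ} (hy : 0 ≤ y) (hyT : y ≤ T)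
    (hx : |x| ≤ MB σ η αh h r a T + 1) :
    |fode σ η αh h a β y x| ≤ CB σ η αh h r a T := by
  set M := MB σ η αh h r a T + 1 with hM
  clear_value M
  have hM0 : 0 ≤ M := le_trans (abs_nonneg x) hx
  have hT0 : 0 ≤ T := le_trans hy hyT
  rw [fode_eq hσ hη]
  have hpos : (0:ℝ) ≤ 2/σ^2 := by positivity
  have hxx := abs_le.mp hx
  have hx2 : x^2 ≤ M^2 := by nlinarith [sq_abs x, sq_nonneg x]
  have hbx : |(η*y - a)*x| ≤ (η*T+|a|)*M := by
    rw [abs_mul]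
    have h1 : |η*y - a| ≤ η*T + |a| := by
      have := le_abs_self a; have := neg_abs_le a
      have := mul_nonneg hη.le hy
      have h6 : η*y ≤ η*T := by nlinarith
      exact abs_le.mpr ⟨by nlinarith, by nlinarith⟩
    exact mul_le_mul h1 hx (abs_nonneg x) (by positivity)
  have hbx' := abs_le.mp hbx
  have hhy : 0 ≤ h*y ∧ h*y ≤ h*T := ⟨by positivity, by nlinarith⟩
  have e1 : 0 ≤ αh/4*x^2 := by positivity
  have e2 : 0 ≤ αh/4*M^2 := by positivity
  have e3 : αh/4*x^2 ≤ αh/4*M^2 := by nlinarith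
  have habs : |β + αh/4*x^2 + (η*y - a)*x - h*y| ≤
      1 + αh/4*M^2 + (η*T+|a|)*M + h*T := by
    refine abs_le.mpr ⟨by linarith [hbx'.1, hhy.2], by linarith [hbx'.2, hhy.1]⟩
  calc |2/σ^2 * (β + αh/4*x^2 + (η*y - a)*x - h*y)|
      = 2/σ^2 * |β + αh/4*x^2 + (η*y - a)*x - h*y| := by
        rw [abs_mul, abs_of_nonneg hpos]
    _ ≤ 2/σ^2 * (1 + αh/4*M^2 + (η*T+|a|)*M + h*T) :=
        mul_le_mul_of_nonneg_left habs hpos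
    _ = CB σ η αh h r a T := by unfold CB; rw [← hM]

lemma fode_lip (hσ : 0 < σ) (hη : 0 < η) (hαh : 0 < αh) (hh : 0 < h)
    {T y : ℝ} (hy : 0 ≤ y) (hyT : y ≤ T) {x x' : ℝ}
    (hx : |x| ≤ MB σ η αh h r a T + 1) (hx' : |x'| ≤ MB σ η αh h r a T + 1) :
    |fode σ η αh h a β y x - fode σ η αh h a β y x'| ≤ KB σ η αh h r a T * |x - x'| := by
  set M := MB σ η αh h r a T + 1 with hM
  clear_value M
  have hM0 : 0 ≤ M := le_trans (abs_nonneg x) hx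
  have hpos : (0:ℝ) ≤ 2/σ^2 := by positivity
  have heq : fode σ η αh h a β y x - fode σ η αh h a β y x' =
      2/σ^2*((αh/4*(x+x') + (η*y - a))*(x-x')) := by
    rw [fode_eq hσ hη, fode_eq hσ hη]; ring
  have hmid : |αh/4*(x+x') + (η*y - a)| ≤ αh/2*M + η*T + |a| := by
    have h1 : |αh/4*(x+x') + (η*y - a)| ≤ |αh/4*(x+x')| + |η*y - a| := abs_add_le _ _
    have h2 : |αh/4*(x+x')| = αh/4*|x+x'| := by
      rw [abs_mul, abs_of_nonneg (by positivity : (0:ℝ) ≤ αh/4)]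
    have h3 : |x+x'| ≤ 2*M := le_trans (abs_add_le x x') (by linarith)
    have h4 : |η*y - a| ≤ η*T + |a| := by
      have := le_abs_self a; have := neg_abs_le a
      have := mul_nonneg hη.le hy
      have h6 : η*y ≤ η*T := by nlinarith
      exact abs_le.mpr ⟨by nlinarith, by nlinarith⟩
    nlinarith [abs_nonneg (x+x')]
  calc |fode σ η αh h a β y x - fode σ η αh h a β y x'|
      = 2/σ^2 * (|αh/4*(x+x') + (η*y - a)| * |x - x'|) := by
        rw [heq, abs_mul, abs_mul, abs_of_nonneg hpos]
    _ ≤ 2/σ^2 * ((αh/2*M + η*T + |a|) * |x - x'|) := by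
        apply mul_le_mul_of_nonneg_left _ hpos
        exact mul_le_mul_of_nonneg_right hmid (abs_nonneg _)
    _ = KB σ η αh h r a T * |x - x'| := by unfold KB; rw [← hM]; ring

end Basic

section Sol

variable {σ η αh h r a β : ℝ}

lemma sol_cont {T : ℝ} {v : ℝ → ℝ} (hs : SolOn σ η αh h r a β T v) :
    ContinuousOn v (Icc 0 T) :=
  fun y hy => (hs.2 y hy).continuousWithinAt

lemma sol_restrict {T S : ℝ} {v : ℝ → ℝ} (hs : SolOn σ η αh h r a β T v)
    (hST : S ≤ T) : SolOn σ η αh h r a β S v :=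
  ⟨hs.1, fun y hy => (hs.2 y ⟨hy.1, hy.2.trans hST⟩).mono (Icc_subset_Icc_right hST)⟩

lemma sol_lb (hσ : 0 < σ) (hη : 0 < η) (hαh : 0 < αh) (hh : 0 < h) (hr : 0 < r)
    (hβ : 0 ≤ β) {T : ℝ} {v : ℝ → ℝ} (hT : 0 ≤ T) (hs : SolOn σ η αh h r a β T v) :
    ∀ y ∈ Icc 0 T, -(MB σ η αh h r a T) ≤ v y := by
  have hQ0 : 0 < QQ σ η αh h a := QQ_pos hσ hη hαh hh
  have hg : ∀ y ∈ Icc (0:ℝ) T, HasDerivWithinAt (fun z => v z + QQ σ η αh h a/3*(1+z)^3)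
      (fode σ η αh h a β y (v y) + QQ σ η αh h a*(1+y)^2) (Icc 0 T) y := by
    intro y hy
    have h1 := hs.2 y hy
    have h3 : HasDerivAt (fun z : ℝ => (1+z)^3) ((3:ℕ)*(1+y)^2*1) y := by
      exact ((hasDerivAt_id y).const_add 1).pow 3
    have h4 := (h3.const_mul (QQ σ η αh h a/3)).hasDerivWithinAt (s := Icc 0 T)
    have h5 := h1.add h4
    refine h5.congr_deriv ?_
    push_cast
    ring
  have hmono := monoIcc hg (fun y hy => by
    have := fode_lb (a := a) (β := β) hσ hη hαh hh hβ hy.1 (v y)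
    nlinarith [sq_nonneg (1+y)])
  intro y hy
  have h5 := hmono (left_mem_Icc.mpr hT) hy hy.1
  simp only [hs.1] at h5
  have h6 : (1+y)^3 ≤ (1+T)^3 := pow_le_pow_left₀ (by linarith [hy.1]) (by linarith [hy.2]) 3
  have h7 : QQ σ η αh h a/3*(1+y)^3 ≤ QQ σ η αh h a/3*(1+T)^3 :=
    mul_le_mul_of_nonneg_left h6 (by positivity)
  have h8 : (0:ℝ) ≤ (1+T)^3 := by positivity
  unfold MB
  have h9 : 0 ≤ QQ σ η αh h a * (1+T)^3 := by positivity
  linarith [h5, h7, h8, hQ0.le, h9]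

lemma csmall_pos (hσ : 0 < σ) (hη : 0 < η) (hαh : 0 < αh) (hh : 0 < h) (hr : 0 < r) :
    0 < csmall σ η αh h r a := by
  have hM0 : 0 < Mone σ η αh h r a := MB_pos hσ hη hαh hh hr (by positivity)
  have hC0 : 0 < Cone σ η αh h r a := by
    unfold Cone
    have : 0 < 1 + αh/4*(Mone σ η αh h r a)^2 + |a| * (Mone σ η αh h r a) := by
      have := abs_nonneg a
      nlinarith
    positivity
  unfold csmall
  have : 0 < r*h/(Cone σ η αh h r a + 1) := by positivity
  exact lt_min one_pos this

lemma csmall_le_one : csmall σ η αh h r a ≤ 1 := min_le_left _ _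

lemma Cone_pos (hσ : 0 < σ) (hη : 0 < η) (hαh : 0 < αh) (hh : 0 < h) (hr : 0 < r) :
    0 < Cone σ η αh h r a := by
  have hM0 : 0 < Mone σ η αh h r a := MB_pos hσ hη hαh hh hr (by positivity)
  unfold Cone
  have : 0 < 1 + αh/4*(Mone σ η αh h r a)^2 + |a| * (Mone σ η αh h r a) := by
    have := abs_nonneg a
    nlinarith
  positivity

lemma sol_ub (hσ : 0 < σ) (hη : 0 < η) (hαh : 0 < αh) (hh : 0 < h) (hr : 0 < r)
    (hβ0 : 0 ≤ β) (hβc : β < csmall σ η αh h r a)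
    {T : ℝ} {v : ℝ → ℝ} (hT : 0 ≤ T) (hs : SolOn σ η αh h r a β T v) :
    ∀ y ∈ Icc 0 T, v y ≤ 0 := by
  have hβ1 : β ≤ 1 := le_of_lt (lt_of_lt_of_le hβc csmall_le_one)
  by_contra hcon
  push_neg at hcon
  obtain ⟨y₀, hy₀, hvy₀⟩ := hcon
  set S : Set ℝ := Icc 0 T ∩ v ⁻¹' (Ici 0) with hSdef
  have hSne : S.Nonempty := ⟨y₀, hy₀, le_of_lt hvy₀⟩
  have hSbdd : BddBelow S := ⟨0, fun z hz => hz.1.1⟩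
  have hScl : IsClosed S :=
    (sol_cont hs).preimage_isClosed_of_isClosed isClosed_Icc isClosed_Ici
  set t := sInf S with htdef
  have htS : t ∈ S := hScl.csInf_mem hSne hSbdd
  have ht0 : 0 ≤ t := htS.1.1
  have htT : t ≤ T := htS.1.2
  have hvt : 0 ≤ v t := htS.2
  have htpos : 0 < t := by
    rcases eq_or_lt_of_le ht0 with hq | hq
    · exfalso
      have h2 : v 0 = -r := hs.1
      rw [← hq] at hvt
      rw [h2] at hvt
      linarith
    · exact hq
  have hlt : ∀ s ∈ Ico (0:ℝ) t, v s < 0 := by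
    intro s hsm
    by_contra hge
    push_neg at hge
    have hmem : s ∈ S := ⟨⟨hsm.1, le_trans (le_of_lt hsm.2) htT⟩, hge⟩
    have := csInf_le hSbdd hmem
    rw [← htdef] at this
    linarith [hsm.2]
  have hneb : (𝓝[Ico (0:ℝ) t] t).NeBot := by
    rw [← mem_closure_iff_nhdsWithin_neBot, closure_Ico (ne_of_lt htpos)]
    exact ⟨ht0, le_refl t⟩
  have hvt0 : v t = 0 := by
    refine le_antisymm ?_ hvt
    have hcv : Tendsto v (𝓝[Ico 0 t] t) (𝓝 (v t)) :=
      ((sol_cont hs) t htS.1).mono_left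
        (nhdsWithin_mono t (fun s hsm => ⟨hsm.1, le_trans (le_of_lt hsm.2) htT⟩))
    exact le_of_tendsto hcv (eventually_nhdsWithin_of_forall
      (fun s hsm => le_of_lt (hlt s hsm)))
  -- the one-sided derivative at the first crossing is nonnegative
  have hd := hs.2 t htS.1
  have hslope := hasDerivWithinAt_iff_tendsto_slope.mp hd
  have hmono' : Tendsto (slope v t) (𝓝[Ico 0 t] t) (𝓝 (fode σ η αh h a β t (v t))) :=
    hslope.mono_left (nhdsWithin_mono t
      (fun s hsm => ⟨⟨hsm.1, le_trans (le_of_lt hsm.2) htT⟩, ne_of_lt hsm.2⟩))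
  have hdnn : 0 ≤ fode σ η αh h a β t (v t) := by
    refine ge_of_tendsto hmono' (eventually_nhdsWithin_of_forall (fun s hsm => ?_))
    have h1 : v s - v t < 0 := by
      rw [hvt0]; simpa using hlt s hsm
    have h2 : s - t < 0 := by linarith [hsm.2]
    rw [slope_def_field]
    exact le_of_lt (div_pos_of_neg_of_neg h1 h2)
  have hβht : h*t ≤ β := by
    rw [hvt0, fode_eq hσ hη] at hdnn
    have h2σ : 0 < 2/σ^2 := by positivity
    nlinarith [hdnn]
  have ht1h : t ≤ 1/h := by
    rw [le_div_iff₀ hh]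
    nlinarith
  -- derivative bounded by Cone on [0, t]
  have hsr : SolOn σ η αh h r a β t v := sol_restrict hs htT
  have hlb := sol_lb hσ hη hαh hh hr hβ0 ht0 hsr
  have hMBle : MB σ η αh h r a t ≤ Mone σ η αh h r a :=
    MB_mono hσ hη hαh hh ht0 ht1h
  have hub1 : ∀ y ∈ Icc (0:ℝ) t, v y ≤ 0 := by
    intro y hy
    rcases eq_or_lt_of_le hy.2 with hq | hq
    · rw [hq, hvt0]
    · exact le_of_lt (hlt y ⟨hy.1, hq⟩)
  have hg : ∀ y ∈ Icc (0:ℝ) t, HasDerivWithinAt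
      (fun z => Cone σ η αh h r a * z - v z)
      (Cone σ η αh h r a - fode σ η αh h a β y (v y)) (Icc 0 t) y := by
    intro y hy
    have h1 := hsr.2 y hy
    have h2 : HasDerivWithinAt (fun z : ℝ => Cone σ η αh h r a * z)
        (Cone σ η αh h r a) (Icc 0 t) y := by
      simpa using ((hasDerivAt_id y).const_mul (Cone σ η αh h r a)).hasDerivWithinAt
        (s := Icc 0 t)
    exact h2.sub h1
  have hmono2 := monoIcc hg (fun y hy => by
    have h3 : fode σ η αh h a β y (v y) ≤ Cone σ η αh h r a :=
      fode_ub_small hσ hη hαh hh hβ0 hβ1 hy.1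
        (by linarith [hlb y hy, hMBle]) (hub1 y hy)
    linarith)
  have h5 := hmono2 (left_mem_Icc.mpr ht0) (right_mem_Icc.mpr ht0) ht0
  simp only [hs.1, hvt0, mul_zero] at h5
  -- r ≤ Cone * t, t ≤ β/h, β*(Cone+1) < r*h : contradiction
  have hC0 : 0 < Cone σ η αh h r a := Cone_pos hσ hη hαh hh hr
  have hcs : csmall σ η αh h r a ≤ r*h/(Cone σ η αh h r a + 1) := min_le_right _ _
  have hβrh : β * (Cone σ η αh h r a + 1) < r*h := by
    have := lt_of_lt_of_le hβc hcs
    rw [lt_div_iff₀ (by linarith)] at this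
    linarith
  nlinarith [h5, hβht, mul_le_mul_of_nonneg_left hβht hC0.le]

end Sol

section Step

variable {σ η αh h r a β : ℝ}

lemma CB_pos (hσ : 0 < σ) (hη : 0 < η) (hαh : 0 < αh) (hh : 0 < h) (hr : 0 < r)
    {T : ℝ} (hT : 0 ≤ T) : 0 < CB σ η αh h r a T := by
  have hM := MB_pos (a := a) hσ hη hαh hh hr hT
  have h1 : 0 ≤ (η*T+|a|)*(MB σ η αh h r a T + 1) := by
    apply mul_nonneg
    · have := abs_nonneg a
      nlinarith [mul_nonneg hη.le hT]
    · linarith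
  have h2 : 0 ≤ h*T := mul_nonneg hh.le hT
  have h3 : 0 ≤ αh/4*(MB σ η αh h r a T + 1)^2 := by positivity
  unfold CB
  have h4 : 0 < 2/σ^2 := by positivity
  nlinarith

lemma sol_step (hσ : 0 < σ) (hη : 0 < η) (hαh : 0 < αh) (hh : 0 < h) (hr : 0 < r)
    (hβ0 : 0 ≤ β) (hβc : β < csmall σ η αh h r a)
    {T L : ℝ} {v : ℝ → ℝ} (hL0 : 0 ≤ L) (hLT : L < T) (hs : SolOn σ η αh h r a β L v) :
    ∃ w, SolOn σ η αh h r a β (min (L + 1/(CB σ η αh h r a T + 1)) T) w := by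
  have hT0 : 0 ≤ T := hL0.trans hLT.le
  have hCB := CB_pos (a := a) hσ hη hαh hh hr hT0
  set δ := 1/(CB σ η αh h r a T + 1) with hδdef
  have hδ : 0 < δ := by positivity
  set L' := min (L + δ) T with hL'def
  have hLL' : L ≤ L' := le_min (by linarith) hLT.le
  have hL'T : L' ≤ T := min_le_right _ _
  have hL'0 : 0 ≤ L' := hL0.trans hLL'
  have hβ1 : β ≤ 1 := hβc.le.trans csmall_le_one
  have hLmem : L ∈ Icc (0:ℝ) L := right_mem_Icc.mpr hL0
  have hlb := sol_lb hσ hη hαh hh hr hβ0 hL0 hs L hLmem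
  have hub := sol_ub hσ hη hαh hh hr hβ0 hβc hL0 hs L hLmem
  have hMBL : MB σ η αh h r a L ≤ MB σ η αh h r a T := MB_mono hσ hη hαh hh hL0 hLT.le
  have hMT := MB_pos (a := a) hσ hη hαh hh hr hT0
  have hvL : |v L| ≤ MB σ η αh h r a T := abs_le.mpr ⟨by linarith, by linarith⟩
  have hball : ∀ x : ℝ, x ∈ Metric.closedBall (v L) 1 → |x| ≤ MB σ η αh h r a T + 1 := by
    intro x hx
    rw [Metric.mem_closedBall, Real.dist_eq] at hx
    have := abs_sub_abs_le_abs_sub x (v L)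
    linarith
  have hpl : IsPicardLindelof (fode σ η αh h a β) (tmin := L) (tmax := L') ⟨L, le_refl L, hLL'⟩
      (v L) 1 0 (CB σ η αh h r a T).toNNReal (KB σ η αh h r a T).toNNReal := by
    refine ⟨?_, ?_, ?_, ?_⟩
    · intro t ht
      rw [lipschitzOnWith_iff_dist_le_mul]
      intro x hx x' hx'
      rw [Real.dist_eq, Real.dist_eq]
      have hlip := fode_lip (β := β) hσ hη hαh hh (hL0.trans ht.1) (ht.2.trans hL'T)
        (hball x hx) (hball x' hx')
      have hcoe : KB σ η αh h r a T ≤ ((KB σ η αh h r a T).toNNReal : ℝ) := by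
        rw [Real.coe_toNNReal']
        exact le_max_left _ _
      calc |fode σ η αh h a β t x - fode σ η αh h a β t x'|
          ≤ KB σ η αh h r a T * |x - x'| := hlip
        _ ≤ ((KB σ η αh h r a T).toNNReal : ℝ) * |x - x'| :=
            mul_le_mul_of_nonneg_right hcoe (abs_nonneg _)
    · intro x _
      apply Continuous.continuousOn
      unfold fode
      fun_prop
    · intro t ht x hx
      rw [Real.norm_eq_abs]
      exact (fode_abs_le hσ hη hαh hh hβ0 hβ1 (hL0.trans ht.1) (ht.2.trans hL'T)
        (hball x hx)).trans (Real.le_coe_toNNReal _)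
    · rw [Real.coe_toNNReal _ hCB.le]
      simp only [NNReal.coe_one, NNReal.coe_zero, sub_zero]
      show CB σ η αh h r a T * max (L' - L) (L - L) ≤ 1
      rw [max_eq_left (by linarith : L - L ≤ L' - L)]
      have h1 : L' - L ≤ δ := by
        have := min_le_left (L + δ) T
        rw [← hL'def] at this
        linarith
      have h2 : CB σ η αh h r a T * (L' - L) ≤ CB σ η αh h r a T * δ :=
        mul_le_mul_of_nonneg_left h1 hCB.le
      have h3 : CB σ η αh h r a T * δ ≤ 1 := by
        rw [hδdef, mul_one_div, div_le_one (by linarith)]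
        linarith
      linarith
  obtain ⟨f, hf0, hfd⟩ := hpl.exists_eq_forall_mem_Icc_hasDerivWithinAt₀
  set w := fun z => if z ≤ L then v z else f z with hwdef
  have hwv : ∀ z, z ≤ L → w z = v z := fun z hz => if_pos hz
  have hwf : ∀ z ∈ Icc L L', w z = f z := by
    intro z hz
    by_cases hc : z ≤ L
    · have hzL : z = L := le_antisymm hc hz.1
      subst hzL
      rw [hwv z le_rfl]
      exact hf0.symm
    · rw [hwdef]
      simp only [if_neg hc]
  refine ⟨w, ?_, ?_⟩
  · rw [hwv 0 hL0]; exact hs.1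
  · intro y hy
    have h1 : HasDerivWithinAt w (fode σ η αh h a β y (w y)) (Icc 0 L) y := by
      by_cases hyL : y ≤ L
      · have hder := hs.2 y ⟨hy.1, hyL⟩
        have := hder.congr (fun z hz => hwv z hz.2) (hwv y hyL)
        rwa [hwv y hyL]
      · exact hasDerivWithinAt_of_nmem_closure' (by
          rw [isClosed_Icc.closure_eq]
          exact fun hc => hyL hc.2)
    have h2 : HasDerivWithinAt w (fode σ η αh h a β y (w y)) (Icc L L') y := by
      by_cases hyL : L ≤ y
      · have hymem : y ∈ Icc L L' := ⟨hyL, hy.2⟩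
        have hder := hfd y hymem
        have := hder.congr (fun z hz => hwf z hz) (hwf y hymem)
        rwa [hwf y hymem]
      · exact hasDerivWithinAt_of_nmem_closure' (by
          rw [isClosed_Icc.closure_eq]
          exact fun hc => hyL hc.1)
    have h3 := h1.union h2
    rwa [Icc_union_Icc_eq_Icc hL0 hLL'] at h3

end Step

section Glue

variable {σ η αh h r a β : ℝ}

lemma sol_zero (hr : 0 < r) : SolOn σ η αh h r a β 0 (fun _ => -r) := by
  refine ⟨rfl, ?_⟩
  intro y hy
  have hy0 : y = 0 := le_antisymm hy.2 hy.1
  subst hy0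
  rw [hasDerivWithinAt_iff_tendsto_slope]
  have he : Icc (0:ℝ) 0 \ {0} = ∅ := by
    rw [Icc_self]
    exact diff_self
  rw [he, nhdsWithin_empty]
  exact tendsto_bot

lemma sol_exists (hσ : 0 < σ) (hη : 0 < η) (hαh : 0 < αh) (hh : 0 < h) (hr : 0 < r)
    (hβ0 : 0 ≤ β) (hβc : β < csmall σ η αh h r a) {T : ℝ} (hT : 0 ≤ T) :
    ∃ v, SolOn σ η αh h r a β T v := by
  set δ := 1/(CB σ η αh h r a T + 1) with hδdef
  have hCB := CB_pos (a := a) hσ hη hαh hh hr hT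
  have hδ : 0 < δ := by positivity
  have key : ∀ k : ℕ, ∃ v, SolOn σ η αh h r a β (min (k*δ) T) v := by
    intro k
    induction k with
    | zero =>
      refine ⟨fun _ => -r, ?_⟩
      rw [show ((0:ℕ):ℝ)*δ = 0 by norm_num, min_eq_left hT]
      exact sol_zero hr
    | succ k ih =>
      obtain ⟨v, hv⟩ := ih
      by_cases hc : T ≤ (k:ℝ)*δ
      · have he : min ((k:ℝ)*δ) T = T := min_eq_right hc
        have he2 : min (((k:ℕ)+1:ℝ)*δ) T = T := min_eq_right (by nlinarith)
        refine ⟨v, ?_⟩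
        rw [show (((k+1:ℕ)):ℝ)*δ = ((k:ℕ)+1:ℝ)*δ by push_cast; ring, he2]
        rwa [he] at hv
      · push_neg at hc
        have he : min ((k:ℝ)*δ) T = (k:ℝ)*δ := min_eq_left hc.le
        rw [he] at hv
        have hk0 : 0 ≤ (k:ℝ)*δ := by positivity
        obtain ⟨w, hw⟩ := sol_step hσ hη hαh hh hr hβ0 hβc hk0 hc hv
        refine ⟨w, ?_⟩
        have he3 : (k:ℝ)*δ + 1/(CB σ η αh h r a T + 1) = ((k+1:ℕ):ℝ)*δ := by
          rw [← hδdef]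
          push_cast
          ring
        rwa [he3] at hw
  obtain ⟨v, hv⟩ := key (Nat.ceil (T/δ))
  have hfin : min ((Nat.ceil (T/δ) : ℝ)*δ) T = T := by
    apply min_eq_right
    have h1 := Nat.le_ceil (T/δ)
    rw [div_le_iff₀ hδ] at h1
    nlinarith [h1]
  rw [hfin] at hv
  exact ⟨v, hv⟩

lemma sol_unique (hσ : 0 < σ) (hη : 0 < η) (hαh : 0 < αh) (hh : 0 < h) (hr : 0 < r)
    (hβ0 : 0 ≤ β) (hβc : β < csmall σ η αh h r a) {T1 T2 : ℝ} {v1 v2 : ℝ → ℝ}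
    (hT1 : 0 ≤ T1) (hT12 : T1 ≤ T2)
    (h1 : SolOn σ η αh h r a β T1 v1) (h2 : SolOn σ η αh h r a β T2 v2) :
    EqOn v1 v2 (Icc 0 T1) := by
  have hT2 : 0 ≤ T2 := hT1.trans hT12
  set M := MB σ η αh h r a T2 with hM
  have hMpos := MB_pos (a := a) hσ hη hαh hh hr hT2
  set F : ℝ → ℝ → ℝ := fun t x => fode σ η αh h a β (max 0 (min t T1)) x with hF
  have hlip : ∀ t, LipschitzOnWith (KB σ η αh h r a T2).toNNReal (F t)
      (Metric.closedBall 0 M) := by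
    intro t
    rw [lipschitzOnWith_iff_dist_le_mul]
    intro x hx y hy
    rw [Real.dist_eq, Real.dist_eq]
    have hclamp1 : 0 ≤ max 0 (min t T1) := le_max_left _ _
    have hclamp2 : max 0 (min t T1) ≤ T2 :=
      max_le hT2 ((min_le_right t T1).trans hT12)
    rw [Metric.mem_closedBall, Real.dist_eq, sub_zero] at hx hy
    have hxb : |x| ≤ M + 1 := by linarith
    have hyb : |y| ≤ M + 1 := by linarith
    have hl := fode_lip (β := β) hσ hη hαh hh hclamp1 hclamp2 hxb hyb
    have hcoe : KB σ η αh h r a T2 ≤ ((KB σ η αh h r a T2).toNNReal : ℝ) := by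
      rw [Real.coe_toNNReal']
      exact le_max_left _ _
    calc |F t x - F t y| ≤ KB σ η αh h r a T2 * |x - y| := hl
      _ ≤ ((KB σ η αh h r a T2).toNNReal : ℝ) * |x - y| :=
          mul_le_mul_of_nonneg_right hcoe (abs_nonneg _)
  have hmemd : ∀ (T' : ℝ) (v : ℝ → ℝ), SolOn σ η αh h r a β T' v → T1 ≤ T' →
      ∀ t ∈ Ico (0:ℝ) T1, HasDerivWithinAt v (F t (v t)) (Ici t) t := by
    intro T' v hv hTT' t ht
    have hd := hv.2 t ⟨ht.1, ht.2.le.trans hTT'⟩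
    have hmem : Icc (0:ℝ) T' ∈ 𝓝[Ici t] t := by
      rw [mem_nhdsWithin]
      exact ⟨Iio T1, isOpen_Iio, ht.2,
        fun z hz => ⟨ht.1.trans hz.2, (le_of_lt hz.1).trans hTT'⟩⟩
    have hd2 := hd.mono_of_mem_nhdsWithin hmem
    have hclamp : max 0 (min t T1) = t := by
      rw [min_eq_left ht.2.le, max_eq_right ht.1]
    rw [hF]
    simp only [hclamp]
    exact hd2
  have hmems : ∀ (T' : ℝ) (v : ℝ → ℝ), SolOn σ η αh h r a β T' v → T1 ≤ T' → 0 ≤ T' →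
      T' ≤ T2 → ∀ t ∈ Ico (0:ℝ) T1, v t ∈ Metric.closedBall (0:ℝ) M := by
    intro T' v hv hTT' hT'0 hT'2 t ht
    have htm : t ∈ Icc 0 T' := ⟨ht.1, ht.2.le.trans hTT'⟩
    have hl := sol_lb hσ hη hαh hh hr hβ0 hT'0 hv t htm
    have hu := sol_ub hσ hη hαh hh hr hβ0 hβc hT'0 hv t htm
    have hMM : MB σ η αh h r a T' ≤ M := MB_mono hσ hη hαh hh hT'0 hT'2
    rw [Metric.mem_closedBall, Real.dist_eq, sub_zero]
    exact abs_le.mpr ⟨by linarith, by linarith⟩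
  exact ODE_solution_unique_of_mem_Icc_right (fun t _ => hlip t)
    (sol_cont h1) (hmemd T1 v1 h1 le_rfl) (hmems T1 v1 h1 le_rfl hT1 hT12)
    (sol_cont h2 |>.mono (Icc_subset_Icc_right hT12)) (hmemd T2 v2 h2 hT12)
    (hmems T2 v2 h2 hT12 hT2 le_rfl) (h1.1.trans h2.1.symm)

end Glue

section Global

variable {σ η αh h r a β : ℝ}

lemma exists_isIVP (hσ : 0 < σ) (hη : 0 < η) (hαh : 0 < αh) (hh : 0 < h) (hr : 0 < r)
    (hβ0 : 0 ≤ β) (hβc : β < csmall σ η αh h r a) :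
    ∃ v v' : ℝ → ℝ, IsIVP σ η αh h r a β v v' ∧
      (∀ y ∈ Ici (0:ℝ), v' y = fode σ η αh h a β y (v y)) := by
  have hex : ∀ n : ℕ, ∃ v, SolOn σ η αh h r a β n v := fun n =>
    sol_exists hσ hη hαh hh hr hβ0 hβc (Nat.cast_nonneg n)
  choose vs hvs using hex
  set V : ℝ → ℝ := fun y => vs (Nat.ceil y + 1) y with hV
  have hagree : ∀ (n : ℕ) (z : ℝ), 0 ≤ z → z ≤ (n:ℝ) → V z = vs n z := by
    intro n z hz0 hzn
    show vs (Nat.ceil z + 1) z = vs n z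
    have hzc : z ≤ ((Nat.ceil z + 1 : ℕ):ℝ) := by
      push_cast
      linarith [Nat.le_ceil z]
    rcases le_total (((Nat.ceil z + 1 : ℕ)):ℝ) ((n:ℕ):ℝ) with hc | hc
    · exact sol_unique hσ hη hαh hh hr hβ0 hβc (by positivity) hc
        (hvs _) (hvs n) ⟨hz0, hzc⟩
    · exact (sol_unique hσ hη hαh hh hr hβ0 hβc (Nat.cast_nonneg n) hc
        (hvs n) (hvs _) ⟨hz0, hzn⟩).symm
  have hV0 : V 0 = -r := (hvs _).1
  have hVd : ∀ y ∈ Ici (0:ℝ), HasDerivWithinAt V (fode σ η αh h a β y (V y)) (Ici 0) y := by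
    intro y hy
    set n : ℕ := Nat.ceil y + 2 with hn
    have hyn1 : y + 1 ≤ ((n:ℕ):ℝ) := by
      rw [hn]
      push_cast
      linarith [Nat.le_ceil y]
    have hyn : y ≤ (n:ℝ) := by linarith
    have hd := (hvs n).2 y ⟨hy, hyn⟩
    have hmem : Icc (0:ℝ) (n:ℝ) ∈ 𝓝[Ici 0] y :=
      mem_nhdsWithin.mpr ⟨Iio (y+1), isOpen_Iio, mem_Iio.mpr (by linarith),
        fun z hz => ⟨hz.2, (le_of_lt hz.1).trans hyn1⟩⟩
    have hd2 := hd.mono_of_mem_nhdsWithin hmem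
    have hev : V =ᶠ[𝓝[Ici 0] y] vs n := by
      apply Filter.eventuallyEq_of_mem
        (mem_nhdsWithin.mpr ⟨Iio (y+1), isOpen_Iio, mem_Iio.mpr (by linarith), subset_refl _⟩)
      intro z hz
      exact hagree n z hz.2 ((le_of_lt hz.1).trans hyn1)
    have h3 := hd2.congr_of_eventuallyEq hev (hagree n y hy hyn)
    rwa [← hagree n y hy hyn] at h3
  have hVc : ContinuousOn V (Ici 0) := fun y hy => (hVd y hy).continuousWithinAt
  refine ⟨V, fun y => fode σ η αh h a β y (V y), ⟨?_, hVd, ?_, hV0⟩, fun y _ => rfl⟩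
  · show ContinuousOn (fun y => 2/σ^2 * (β + αh/4*(V y)^2 + η*y*(V y - h/η) - a*V y)) (Ici 0)
    apply ContinuousOn.mul continuousOn_const
    apply ContinuousOn.sub
    · apply ContinuousOn.add
      · exact continuousOn_const.add (continuousOn_const.mul (hVc.pow 2))
      · exact (continuousOn_const.mul continuousOn_id).mul (hVc.sub continuousOn_const)
    · exact continuousOn_const.mul hVc
  · intro y _
    show σ^2/2 * (fode σ η αh h a β y (V y)) = _
    unfold fode
    have hσ' : σ ≠ 0 := ne_of_gt hσ
    field_simp

end Global

section Final

variable {σ η αh h r a β : ℝ}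

lemma isIVP_fode (hσ : 0 < σ) {v v' : ℝ → ℝ} (hivp : IsIVP σ η αh h r a β v v') :
    ∀ y ∈ Ici (0:ℝ), v' y = fode σ η αh h a β y (v y) := by
  intro y hy
  have h1 := hivp.2.2.1 y hy
  have h2 : v' y = 2/σ^2 * (σ^2/2 * v' y) := by
    have hσ' : σ ≠ 0 := ne_of_gt hσ
    field_simp
  rw [h2, h1]
  unfold fode
  ring

lemma isIVP_sol (hσ : 0 < σ) {v v' : ℝ → ℝ} (hivp : IsIVP σ η αh h r a β v v')
    {T : ℝ} : SolOn σ η αh h r a β T v := by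
  refine ⟨hivp.2.2.2, fun y hy => ?_⟩
  have hd := hivp.2.1 y hy.1
  rw [← isIVP_fode hσ hivp y hy.1]
  exact hd.mono (fun z hz => hz.1)

lemma nonmono (hσ : 0 < σ) (hη : 0 < η) (hαh : 0 < αh) (hh : 0 < h) (hr : 0 < r)
    (hβ0 : 0 ≤ β) (hβc : β < csmall σ η αh h r a) {v v' : ℝ → ℝ}
    (hivp : IsIVP σ η αh h r a β v v') : ¬ MonotoneOn v (Ici 0) := by
  intro hmono
  have hub : ∀ y : ℝ, 0 ≤ y → v y ≤ 0 := fun y hy =>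
    sol_ub hσ hη hαh hh hr hβ0 hβc hy (isIVP_sol hσ hivp) y (right_mem_Icc.mpr hy)
  have hlbm : ∀ y : ℝ, 0 ≤ y → -r ≤ v y := by
    intro y hy
    rw [← hivp.2.2.2]
    exact hmono (mem_Ici.mpr le_rfl) (mem_Ici.mpr hy) hy
  set y1 := max (a/η) ((β + αh/4*r^2)/h) + 1 with hy1def
  clear_value y1
  have hy1a : a/η ≤ y1 - 1 := by
    rw [hy1def]
    linarith [le_max_left (a/η) ((β + αh/4*r^2)/h)]
  have hy1b : (β + αh/4*r^2)/h ≤ y1 - 1 := by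
    rw [hy1def]
    linarith [le_max_right (a/η) ((β + αh/4*r^2)/h)]
  have hy1pos : 0 ≤ y1 := by
    have : (0:ℝ) ≤ (β + αh/4*r^2)/h := by positivity
    linarith
  set D := 2/σ^2*(h*y1 - β - αh/4*r^2) with hDdef
  clear_value D
  have hD : 0 < D := by
    rw [hDdef]
    have h1 : (β + αh/4*r^2) ≤ h*(y1-1) := by
      rw [← div_le_iff₀' hh] at *
      linarith [hy1b]
    have h2 : 0 < 2/σ^2 := by positivity
    have h3 : 0 < h*y1 - β - αh/4*r^2 := by nlinarith
    exact mul_pos h2 h3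
  have hkey : ∀ y ∈ Icc y1 (y1+1), fode σ η αh h a β y (v y) ≤ -D := by
    intro y hy
    have hy0 : 0 ≤ y := le_trans hy1pos hy.1
    have hx1 := hlbm y hy0
    have hx2 := hub y hy0
    have hxsq : (v y)^2 ≤ r^2 := by nlinarith
    have hba : 0 ≤ η*y - a := by
      have h4 : a ≤ η*(y1-1) := by
        rw [← div_le_iff₀' hη] at *
        linarith [hy1a]
      have h5 : η*(y1-1) ≤ η*y := by nlinarith [hy.1]
      linarith
    have hbx : (η*y - a)*(v y) ≤ 0 := mul_nonpos_of_nonneg_of_nonpos hba hx2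
    have hhy : h*y1 ≤ h*y := by nlinarith [hy.1]
    rw [fode_eq hσ hη]
    rw [hDdef]
    have h2 : 0 ≤ 2/σ^2 := by positivity
    have hinner : β + αh/4*(v y)^2 + (η*y - a)*(v y) - h*y ≤
        -(h*y1 - β - αh/4*r^2) + (β + αh/4*r^2 - β - αh/4*r^2) := by nlinarith
    nlinarith [mul_le_mul_of_nonneg_left hinner h2]
  have hdg : ∀ y ∈ Icc y1 (y1+1), HasDerivWithinAt (fun z => -(v z) - D*z)
      (-(fode σ η αh h a β y (v y)) - D) (Icc y1 (y1+1)) y := by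
    intro y hy
    have hy0 : 0 ≤ y := le_trans hy1pos hy.1
    have hdv : HasDerivWithinAt v (fode σ η αh h a β y (v y)) (Icc y1 (y1+1)) y := by
      have := hivp.2.1 y (mem_Ici.mpr hy0)
      rw [isIVP_fode hσ hivp y (mem_Ici.mpr hy0)] at this
      exact this.mono (fun z hz => le_trans hy1pos hz.1)
    have hlin : HasDerivWithinAt (fun z : ℝ => D*z) D (Icc y1 (y1+1)) y := by
      simpa using ((hasDerivAt_id y).const_mul D).hasDerivWithinAt (s := Icc y1 (y1+1))
    exact hdv.neg.sub hlin
  have hmono2 := monoIcc hdg (fun y hy => by linarith [hkey y hy])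
  have h6 := hmono2 (left_mem_Icc.mpr (by linarith)) (right_mem_Icc.mpr (by linarith))
    (by linarith)
  have hmv := hmono (mem_Ici.mpr hy1pos) (mem_Ici.mpr (by linarith : (0:ℝ) ≤ y1+1))
    (by linarith : y1 ≤ y1+1)
  have h6' : -(v y1) - D*y1 ≤ -(v (y1+1)) - D*(y1+1) := h6
  linarith [h6', hmv, hD]

set_option maxHeartbeats 1000000 in
lemma blowup (hσ : 0 < σ) (hη : 0 < η) (hαh : 0 < αh) (hh : 0 < h) (hr : 0 < r)
    {v v' : ℝ → ℝ}
    (hβ : h + 2*(η+|a|)^2/αh + 2*(Real.pi^2+1)*σ^4/αh ≤ β)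
    (hivp : IsIVP σ η αh h r a β v v') : False := by
  set K0 := h + 2*(η+|a|)^2/αh with hK0
  clear_value K0
  set c1 := αh/(4*σ^2) with hc1
  clear_value c1
  set c2 := 2/σ^2*(β - K0) with hc2
  clear_value c2
  have hπ : (0:ℝ) < Real.pi := Real.pi_pos
  have hc1p : 0 < c1 := by rw [hc1]; positivity
  have hslack : 0 < 2*(Real.pi^2+1)*σ^4/αh := by positivity
  have hβK : 2*(Real.pi^2+1)*σ^4/αh ≤ β - K0 := by rw [hK0]; linarith
  have hc2p : 0 < c2 := by
    rw [hc2]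
    apply mul_pos (by positivity)
    linarith
  have hc12 : Real.pi^2 < c1*c2 := by
    have h2 : c1*c2 = αh/(2*σ^4)*(β - K0) := by rw [hc1, hc2]; field_simp; ring
    have h3 : αh/(2*σ^4) * (2*(Real.pi^2+1)*σ^4/αh) = Real.pi^2+1 := by
      field_simp
    rw [h2]
    linarith [mul_le_mul_of_nonneg_left hβK (show (0:ℝ) ≤ αh/(2*σ^4) by positivity), h3]
  set k := Real.sqrt c1 / Real.sqrt c2 with hk
  clear_value k
  set μ := Real.sqrt c1 * Real.sqrt c2 with hμ
  clear_value μ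
  have hs1 : 0 < Real.sqrt c1 := Real.sqrt_pos.mpr hc1p
  have hs2 : 0 < Real.sqrt c2 := Real.sqrt_pos.mpr hc2p
  have hkp : 0 < k := by rw [hk]; positivity
  have hμp : 0 < μ := by rw [hμ]; positivity
  have hμsq : μ^2 = c1*c2 := by
    rw [hμ, mul_pow, Real.sq_sqrt hc1p.le, Real.sq_sqrt hc2p.le]
  have hμπ : Real.pi < μ := by
    nlinarith [hμsq, hc12, hμp.le, hπ.le, sq_nonneg (μ - Real.pi)]
  have hkc2 : k * c2 = μ := by
    rw [hk, hμ, div_mul_eq_mul_div, eq_comm, eq_div_iff (ne_of_gt hs2)]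
    rw [mul_assoc, Real.mul_self_sqrt hc2p.le]
  have hkc1 : μ * k = c1 := by
    rw [hk, hμ, mul_div_assoc']
    rw [eq_comm, eq_div_iff (ne_of_gt hs2)]
    rw [show Real.sqrt c1 * Real.sqrt c2 * Real.sqrt c1 = (Real.sqrt c1 * Real.sqrt c1) * Real.sqrt c2 by ring]
    rw [Real.mul_self_sqrt hc1p.le]
  have hfb : ∀ y ∈ Icc (0:ℝ) 1, ∀ x : ℝ, c1*x^2 + c2 ≤ fode σ η αh h a β y x := by
    intro y hy x
    have hb : |η*y - a| ≤ η + |a| := by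
      have h4 : η*y ≤ η := by nlinarith [hy.1, hy.2]
      have h5 : 0 ≤ η*y := mul_nonneg hη.le hy.1
      have := le_abs_self a; have := neg_abs_le a
      exact abs_le.mpr ⟨by linarith, by linarith⟩
    have hb2 : (η*y - a)^2 ≤ (η+|a|)^2 := by
      nlinarith [abs_nonneg (η*y - a), sq_abs (η*y - a)]
    have key : 0 ≤ αh/8*x^2 + (η*y - a)*x + 2*(η*y - a)^2/αh := by
      have h2 : αh/8*x^2 + (η*y - a)*x + 2*(η*y - a)^2/αh
          = (αh*x + 4*(η*y - a))^2/(8*αh) := by field_simp; ring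
      rw [h2]; positivity
    have hdiv : 2*(η*y - a)^2/αh ≤ 2*(η+|a|)^2/αh :=
      (div_le_div_iff_of_pos_right hαh).mpr (by nlinarith)
    have hhy : h*y ≤ h := by nlinarith [hy.1, hy.2]
    have hinner : αh/8*x^2 + (β - K0) ≤ β + αh/4*x^2 + (η*y - a)*x - h*y := by
      rw [hK0]
      nlinarith [key, hdiv, hhy, sq_nonneg x]
    have hpos2 : (0:ℝ) ≤ 2/σ^2 := by positivity
    have heq : c1*x^2 + c2 = 2/σ^2 * (αh/8*x^2 + (β - K0)) := by
      rw [hc1, hc2]; field_simp; ring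
    rw [heq, fode_eq hσ hη]
    exact mul_le_mul_of_nonneg_left hinner hpos2
  -- arctan comparison on [0,1]
  have hdg : ∀ y ∈ Icc (0:ℝ) 1, HasDerivWithinAt
      (fun z => Real.arctan (k * v z) - μ*z)
      (1/(1+(k*v y)^2) * (k * v' y) - μ) (Icc 0 1) y := by
    intro y hy
    have hdv : HasDerivWithinAt v (v' y) (Icc 0 1) y :=
      (hivp.2.1 y hy.1).mono (fun z hz => hz.1)
    have harct : HasDerivWithinAt (fun z => Real.arctan (k * v z))
        (1/(1+(k*v y)^2) * (k * v' y)) (Icc 0 1) y :=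
      HasDerivAt.comp_hasDerivWithinAt (h₂ := Real.arctan) y (Real.hasDerivAt_arctan (k * v y)) (hdv.const_mul k)
    have hlin : HasDerivWithinAt (fun z : ℝ => μ*z) μ (Icc 0 1) y := by
      simpa using ((hasDerivAt_id y).const_mul μ).hasDerivWithinAt (s := Icc (0:ℝ) 1)
    exact harct.sub hlin
  have hmono := monoIcc hdg (fun y hy => by
    have hval := isIVP_fode hσ hivp y hy.1
    have hge := hfb y hy (v y)
    rw [← hval] at hge
    have h6 : μ*(1+(k*v y)^2) ≤ k * v' y := by
      have h7 : k*(c1*(v y)^2 + c2) = μ*(1+(k*v y)^2) := by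
        have e1 : k*c1 = μ*k^2 := by
          rw [← hkc1]; ring
        linear_combination (v y)^2 * e1 + hkc2
      rw [← h7]
      exact mul_le_mul_of_nonneg_left hge hkp.le
    have h7 : 0 < 1+(k*v y)^2 := by positivity
    have h8 : μ ≤ 1/(1+(k*v y)^2) * (k * v' y) := by
      rw [one_div, inv_mul_eq_div, le_div_iff₀ h7]
      linarith
    linarith)
  have h9 := hmono (left_mem_Icc.mpr zero_le_one) (right_mem_Icc.mpr zero_le_one)
    zero_le_one
  have h9' : Real.arctan (k * v 0) - μ*0 ≤ Real.arctan (k * v 1) - μ*1 := h9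
  have h10 := Real.arctan_lt_pi_div_two (k * v 1)
  have h11 := Real.neg_pi_div_two_lt_arctan (k * v 0)
  linarith [h9', h10, h11, hμπ]

end Final

end Stmt16Aux

/-- In Case i (i = 1, 2), `β*_i = inf 𝓘_i` is strictly positive. -/
theorem stmt_16 (σ η αh h r a : ℝ) (hσ : 0 < σ) (hη : 0 < η) (hαh : 0 < αh)
    (hh : 0 < h) (hr : 0 < r) :
    (-(αh / 4) * r < a →
      0 < sInf {β : ℝ | 0 ≤ β ∧ MemI σ η αh h r a β}) ∧
    (a ≤ -(αh / 4) * r →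
      0 < sInf {β : ℝ | -a * r - αh / 4 * r ^ 2 < β ∧ MemI σ η αh h r a β}) := by

  have hcpos := Stmt16Aux.csmall_pos (a := a) hσ hη hαh hh hr
  have hBblow : ∀ v v' : ℝ → ℝ,
      IsIVP σ η αh h r a (h + 2*(η+|a|)^2/αh + 2*(Real.pi^2+1)*σ^4/αh + |a| * r + 1) v v' →
      False := by
    intro v v' hivp
    refine Stmt16Aux.blowup hσ hη hαh hh hr ?_ hivp
    have := mul_nonneg (abs_nonneg a) hr.le
    linarith
  have hBmemI : MemI σ η αh h r a
      (h + 2*(η+|a|)^2/αh + 2*(Real.pi^2+1)*σ^4/αh + |a| * r + 1) :=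
    fun v v' hivp => absurd (hBblow v v' hivp) not_false
  have hB0 : 0 ≤ h + 2*(η+|a|)^2/αh + 2*(Real.pi^2+1)*σ^4/αh + |a| * r + 1 := by positivity
  have hBar : -a*r - αh/4*r^2 <
      h + 2*(η+|a|)^2/αh + 2*(Real.pi^2+1)*σ^4/αh + |a| * r + 1 := by
    have h1 : -a*r ≤ |a| * r := mul_le_mul_of_nonneg_right (neg_le_abs a) hr.le
    have h2 : 0 ≤ αh/4*r^2 := by positivity
    have h3 : (0:ℝ) < h + 2*(η+|a|)^2/αh + 2*(Real.pi^2+1)*σ^4/αh := by positivity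
    linarith
  have hlow : ∀ b : ℝ, 0 ≤ b → MemI σ η αh h r a b → Stmt16Aux.csmall σ η αh h r a ≤ b := by
    intro b hb0 hbI
    by_contra hcon
    push_neg at hcon
    obtain ⟨V, V', hIVP, -⟩ := Stmt16Aux.exists_isIVP hσ hη hαh hh hr hb0 hcon
    exact Stmt16Aux.nonmono hσ hη hαh hh hr hb0 hcon hIVP (hbI V V' hIVP)
  constructor
  · intro _
    refine lt_of_lt_of_le hcpos (le_csInf ⟨_, hB0, hBmemI⟩ ?_)
    exact fun b hb => hlow b hb.1 hb.2
  · intro hcase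
    have hbar0 : 0 ≤ -a*r - αh/4*r^2 := by nlinarith
    refine lt_of_lt_of_le hcpos (le_csInf ⟨_, hBar, hBmemI⟩ ?_)
    exact fun b hb => hlow b (le_trans hbar0 hb.1.le) hb.2
end
end
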